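/- arXiv:2101.04150 — 13 statements merged into one kernel-verified Lean document; each statement's English description precedes it below -/
import Mathlib

section
/- Let R = (r_1,...,r_m) and S = (s_1,...,s_n) be nonnegative integral vectors. Then R and S are the row sum and column sum vectors, respectively, of some sign-restricted matrix of size m × n if and only if S is a (0,1)-vector and the sum of the r_i equals the sum of the s_j. Moreover, in that case the matrix can be taken to be a (0,1)-matrix. -/
open Finset

/-- A sign-restricted matrix: entries in {0,1,-1}, every partial column sum
(from row 1 down) equals 0 or 1, every partial row sum (from column 1) is nonnegative. -/
def IsSRM {m n : ℕ} (A : Matrix (Fin m) (Fin n) ℤ) : Prop :=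
  (∀ i j, A i j = 0 ∨ A i j = 1 ∨ A i j = -1) ∧
  (∀ i j, (∑ k ∈ Finset.Iic i, A k j) = 0 ∨ (∑ k ∈ Finset.Iic i, A k j) = 1) ∧
  (∀ i j, 0 ≤ ∑ l ∈ Finset.Iic j, A i l)

private lemma sum_Iic_fin {m : ℕ} (i : Fin m) (g : ℕ → ℤ) :
    ∑ k ∈ Iic i, g k.1 = ∑ k ∈ range (i.1+1), g k := by
  rw [show range (i.1+1) = Iic i.1 by ext x; simp [Nat.lt_succ_iff],
    ← Fin.map_valEmbedding_Iic, Finset.sum_map]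
  rfl

/-- R and S are the row and column sum vectors of an m×n SRM iff
S is a (0,1)-vector and the sums agree; moreover the SRM can be taken to be a (0,1)-matrix. -/
theorem stmt0 (m n : ℕ) (R : Fin m → ℤ) (S : Fin n → ℤ)
    (hR : ∀ i, 0 ≤ R i) (hS : ∀ j, 0 ≤ S j) :
    ((∃ A : Matrix (Fin m) (Fin n) ℤ, IsSRM A ∧ (∀ i, ∑ j, A i j = R i) ∧
        (∀ j, ∑ i, A i j = S j)) ↔
      ((∀ j, S j = 0 ∨ S j = 1) ∧ ∑ i, R i = ∑ j, S j)) ∧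
    (((∀ j, S j = 0 ∨ S j = 1) ∧ ∑ i, R i = ∑ j, S j) →
      ∃ A : Matrix (Fin m) (Fin n) ℤ, IsSRM A ∧ (∀ i j, A i j = 0 ∨ A i j = 1) ∧
        (∀ i, ∑ j, A i j = R i) ∧ (∀ j, ∑ i, A i j = S j)) := by
  have key : ((∀ j, S j = 0 ∨ S j = 1) ∧ ∑ i, R i = ∑ j, S j) →
      ∃ A : Matrix (Fin m) (Fin n) ℤ, IsSRM A ∧ (∀ i j, A i j = 0 ∨ A i j = 1) ∧
        (∀ i, ∑ j, A i j = R i) ∧ (∀ j, ∑ i, A i j = S j) := by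
    rintro ⟨hS01, hsum⟩
    set R' : ℕ → ℤ := fun k => if h : k < m then R ⟨k, h⟩ else 0 with hR'def
    set S' : ℕ → ℤ := fun k => if h : k < n then S ⟨k, h⟩ else 0 with hS'def
    have hR'0 : ∀ k, 0 ≤ R' k := by
      intro k; simp only [hR'def]; split <;> simp [hR]
    have hS'01 : ∀ k, S' k = 0 ∨ S' k = 1 := by
      intro k; simp only [hS'def]; split
      · exact hS01 _
      · exact Or.inl rfl
    set t : ℕ → ℤ := fun k => ∑ i ∈ range k, R' i with htdef
    set c : ℕ → ℤ := fun k => ∑ i ∈ range k, S' i with hcdef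
    have ht0 : t 0 = 0 := by simp [htdef]
    have hc0 : c 0 = 0 := by simp [hcdef]
    have htstep : ∀ k, t (k+1) = t k + R' k := fun k => Finset.sum_range_succ _ _
    have hcstep : ∀ k, c (k+1) = c k + S' k := fun k => Finset.sum_range_succ _ _
    have ht_mono : ∀ {a b : ℕ}, a ≤ b → t a ≤ t b := by
      intro a b hab
      exact Finset.sum_le_sum_of_subset_of_nonneg (Finset.range_subset_range.2 hab)
        (fun k _ _ => hR'0 k)
    have hc_mono : ∀ {a b : ℕ}, a ≤ b → c a ≤ c b := by
      intro a b hab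
      exact Finset.sum_le_sum_of_subset_of_nonneg (Finset.range_subset_range.2 hab)
        (fun k _ _ => hS'01 k |>.elim (fun h => h ▸ le_refl _) (fun h => h ▸ zero_le_one))
    have htm : t m = ∑ i, R i := by
      rw [show t m = ∑ i ∈ range m, R' i from rfl, ← Fin.sum_univ_eq_sum_range]
      exact Finset.sum_congr rfl fun i _ => by simp [hR'def, i.isLt]
    have hcn : c n = ∑ j, S j := by
      rw [show c n = ∑ j ∈ range n, S' j from rfl, ← Fin.sum_univ_eq_sum_range]
      exact Finset.sum_congr rfl fun j _ => by simp [hS'def, j.isLt]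
    -- the matrix: overlap of the intervals [t i, t (i+1)) and [c j, c (j+1))
    set A : Matrix (Fin m) (Fin n) ℤ :=
      fun i j => max 0 (min (t (i.1+1)) (c (j.1+1)) - max (t i.1) (c j.1)) with hAdef
    -- pointwise facts
    have hcs : ∀ j : Fin n, c j.1 ≤ c (j.1+1) ∧ c (j.1+1) ≤ c j.1 + 1 := by
      intro j
      have := hcstep j.1
      rcases hS'01 j.1 with h | h <;> omega
    have hts : ∀ i : Fin m, t i.1 ≤ t (i.1+1) := by
      intro i; have := htstep i.1; have := hR'0 i.1; omega
    have hrowform : ∀ (i : Fin m) (j : Fin n),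
        A i j = min (max (c (j.1+1)) (t i.1)) (t (i.1+1))
              - min (max (c j.1) (t i.1)) (t (i.1+1)) := by
      intro i j
      have h1 := hcs j; have h2 := hts i
      simp only [hAdef, min_def, max_def]; split_ifs <;> omega
    have hcolform : ∀ (i : Fin m) (j : Fin n),
        A i j = min (max (t (i.1+1)) (c j.1)) (c (j.1+1))
              - min (max (t i.1) (c j.1)) (c (j.1+1)) := by
      intro i j
      have h1 := hcs j; have h2 := hts i
      simp only [hAdef, min_def, max_def]; split_ifs <;> omega
    have h01 : ∀ i j, A i j = 0 ∨ A i j = 1 := by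
      intro i j
      have h1 := hcs j; have h2 := hts i
      simp only [hAdef, min_def, max_def]; split_ifs <;> omega
    -- row sums
    have hrow : ∀ i, ∑ j, A i j = R i := by
      intro i
      have : ∑ j, A i j = ∑ j ∈ range n,
          (min (max (c (j+1)) (t i.1)) (t (i.1+1)) - min (max (c j) (t i.1)) (t (i.1+1))) := by
        rw [← Fin.sum_univ_eq_sum_range]
        exact Finset.sum_congr rfl fun j _ => hrowform i j
      rw [this, Finset.sum_range_sub (fun k => min (max (c k) (t i.1)) (t (i.1+1)))]
      have h1 : t (i.1+1) ≤ t m := ht_mono i.isLt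
      have h2 : 0 ≤ t i.1 := ht0 ▸ ht_mono (Nat.zero_le _)
      have h3 := htstep i.1
      have h4 : R' i.1 = R i := by simp [hR'def, i.isLt]
      have h5 : t m = c n := by rw [htm, hcn, hsum]
      have h6 : 0 ≤ c n := hc0 ▸ hc_mono (Nat.zero_le _)
      have h7 := hR i
      rw [hc0]
      simp only [min_def, max_def]; split_ifs <;> omega
    -- column sums
    have hcol : ∀ j, ∑ i, A i j = S j := by
      intro j
      have : ∑ i, A i j = ∑ i ∈ range m,
          (min (max (t (i+1)) (c j.1)) (c (j.1+1)) - min (max (t i) (c j.1)) (c (j.1+1))) := by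
        rw [← Fin.sum_univ_eq_sum_range]
        exact Finset.sum_congr rfl fun i _ => hcolform i j
      rw [this, Finset.sum_range_sub (fun k => min (max (t k) (c j.1)) (c (j.1+1)))]
      have h1 : c (j.1+1) ≤ c n := hc_mono j.isLt
      have h2 : 0 ≤ c j.1 := hc0 ▸ hc_mono (Nat.zero_le _)
      have h3 := hcstep j.1
      have h4 : S' j.1 = S j := by simp [hS'def, j.isLt]
      have h5 : t m = c n := by rw [htm, hcn, hsum]
      have h7 := hS j
      rw [ht0]
      simp only [min_def, max_def]; split_ifs <;> omega
    refine ⟨A, ⟨fun i j => (h01 i j).imp id Or.inl, ?_, ?_⟩, h01, hrow, hcol⟩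
    · -- partial column sums in {0,1}
      intro i j
      have : ∑ k ∈ Iic i, A k j = ∑ k ∈ range (i.1+1),
          (min (max (t (k+1)) (c j.1)) (c (j.1+1)) - min (max (t k) (c j.1)) (c (j.1+1))) := by
        rw [← sum_Iic_fin i (fun k => min (max (t (k+1)) (c j.1)) (c (j.1+1))
            - min (max (t k) (c j.1)) (c (j.1+1)))]
        exact Finset.sum_congr rfl fun k _ => hcolform k j
      rw [this, Finset.sum_range_sub (fun k => min (max (t k) (c j.1)) (c (j.1+1)))]
      have h1 := hcs j
      have h2 : 0 ≤ c j.1 := hc0 ▸ hc_mono (Nat.zero_le _)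
      rw [ht0]
      simp only [min_def, max_def]; split_ifs <;> omega
    · -- partial row sums nonneg
      intro i j
      have : ∑ l ∈ Iic j, A i l = ∑ l ∈ range (j.1+1),
          (min (max (c (l+1)) (t i.1)) (t (i.1+1)) - min (max (c l) (t i.1)) (t (i.1+1))) := by
        rw [← sum_Iic_fin j (fun l => min (max (c (l+1)) (t i.1)) (t (i.1+1))
            - min (max (c l) (t i.1)) (t (i.1+1)))]
        exact Finset.sum_congr rfl fun l _ => hrowform i l
      rw [this, Finset.sum_range_sub (fun k => min (max (c k) (t i.1)) (t (i.1+1)))]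
      have h2 : 0 ≤ t i.1 := ht0 ▸ ht_mono (Nat.zero_le _)
      have h3 := hts i
      rw [hc0]
      simp only [min_def, max_def]; split_ifs <;> omega
  constructor
  · constructor
    · rintro ⟨A, ⟨_, hpc, _⟩, hrow, hcol⟩
      constructor
      · intro j
        rcases Nat.eq_zero_or_pos m with hm | hm
        · left; rw [← hcol j]; subst hm; simp
        · have hlast : (Iic (⟨m - 1, by omega⟩ : Fin m)) = Finset.univ := by
            ext k; simp [Fin.le_def]; omega
          have := hpc ⟨m - 1, by omega⟩ j
          rw [hlast] at this
          rw [← hcol j]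
          exact this
      · calc ∑ i, R i = ∑ i, ∑ j, A i j := by
              exact (Finset.sum_congr rfl fun i _ => (hrow i).symm)
          _ = ∑ j, ∑ i, A i j := Finset.sum_comm
          _ = ∑ j, S j := Finset.sum_congr rfl fun j _ => hcol j
    · intro h
      obtain ⟨A, hA, _, hrow, hcol⟩ := key h
      exact ⟨A, hA, hrow, hcol⟩
  · exact key
end

section
/- For an m × n sign-restricted matrix, the difference between the number of entries equal to 1 and the number of entries equal to -1 is at most n, and this bound is attained (e.g., by the matrix whose first row is all ones and all other entries are 0). -/
open Finset

lemma card_sub_card_eq_sum {m n : ℕ} (A : Matrix (Fin m) (Fin n) ℤ)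
    (h : ∀ i j, A i j = 0 ∨ A i j = 1 ∨ A i j = -1) :
    ((Finset.univ.filter (fun p : Fin m × Fin n => A p.1 p.2 = 1)).card : ℤ) -
      ((Finset.univ.filter (fun p : Fin m × Fin n => A p.1 p.2 = -1)).card : ℤ) =
      ∑ p : Fin m × Fin n, A p.1 p.2 := by
  have key : ∀ p : Fin m × Fin n, A p.1 p.2 =
      (if A p.1 p.2 = 1 then (1:ℤ) else 0) - (if A p.1 p.2 = -1 then (1:ℤ) else 0) := by
    intro p
    rcases h p.1 p.2 with h0 | h0 | h0 <;> rw [h0] <;> norm_num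
  rw [Finset.sum_congr rfl fun p _ => key p, Finset.sum_sub_distrib,
    Finset.sum_boole, Finset.sum_boole]

/-- (#1's) − (#(−1)'s) of an m×n SRM is at most n, and the bound is attained
(for m ≥ 1). -/
theorem stmt3 (m n : ℕ) (hm : 0 < m) :
    (∀ A : Matrix (Fin m) (Fin n) ℤ, IsSRM A →
      ((Finset.univ.filter (fun p : Fin m × Fin n => A p.1 p.2 = 1)).card : ℤ) -
        ((Finset.univ.filter (fun p : Fin m × Fin n => A p.1 p.2 = -1)).card : ℤ) ≤ n) ∧
    (∃ A : Matrix (Fin m) (Fin n) ℤ, IsSRM A ∧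
      ((Finset.univ.filter (fun p : Fin m × Fin n => A p.1 p.2 = 1)).card : ℤ) -
        ((Finset.univ.filter (fun p : Fin m × Fin n => A p.1 p.2 = -1)).card : ℤ) = n) := by
  obtain ⟨m', rfl⟩ := Nat.exists_eq_succ_of_ne_zero hm.ne'
  have hIic : Finset.Iic (Fin.last m') = (Finset.univ : Finset (Fin (m' + 1))) := by
    ext x; simp [Fin.le_last]
  constructor
  · intro A hA
    rw [card_sub_card_eq_sum A hA.1]
    rw [Fintype.sum_prod_type_right]
    calc (∑ j : Fin n, ∑ i : Fin (m' + 1), A i j)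
        ≤ ∑ j : Fin n, 1 := by
          apply Finset.sum_le_sum
          intro j _
          have h2 : (∑ i : Fin (m' + 1), A i j) = 0 ∨ (∑ i : Fin (m' + 1), A i j) = 1 := by
            have := hA.2.1 (Fin.last m') j
            rwa [hIic] at this
          rcases h2 with h | h <;> omega
      _ = n := by simp
  · refine ⟨(fun i j => if i = 0 then 1 else 0 : Matrix (Fin (m' + 1)) (Fin n) ℤ), ⟨?_, ?_, ?_⟩, ?_⟩
    · intro i j; by_cases h : i = 0 <;> simp [h]
    · intro i j
      right
      rw [Finset.sum_ite_eq' (Finset.Iic i) (0 : Fin (m' + 1)) (fun _ => (1:ℤ))]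
      simp [Fin.zero_le]
    · intro i j
      apply Finset.sum_nonneg
      intro l _
      by_cases h : i = 0 <;> simp [h]
    · rw [card_sub_card_eq_sum (fun i j => if i = 0 then (1:ℤ) else 0)
        (fun i j => by by_cases h : i = 0 <;> simp [h])]
      rw [Fintype.sum_prod_type]
      simp only []
      rw [show (∑ x : Fin m'.succ, ∑ y : Fin n, if x = 0 then (1:ℤ) else 0) =
          ∑ x : Fin m'.succ, (if x = 0 then ((n:ℤ)) else 0) from
        Finset.sum_congr rfl fun x _ => by by_cases h : x = 0 <;> simp [h]]
      rw [Finset.sum_ite_eq' Finset.univ (0 : Fin (m' + 1)) (fun _ => (n:ℤ))]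
      simp
end

section
/- The sum of all entries of an m × n sign-restricted matrix is at most n, and this maximum is attained. -/
open Finset

lemma Iic_top_eq_univ (m : ℕ) (hm : 0 < m) :
    Finset.Iic (⟨m - 1, by omega⟩ : Fin m) = Finset.univ := by
  ext k
  simp [Fin.le_def]
  omega

/-- the sum of all entries of an m×n SRM is at most n, and the maximum is
attained (for m ≥ 1). -/
theorem stmt4 (m n : ℕ) (hm : 0 < m) :
    (∀ A : Matrix (Fin m) (Fin n) ℤ, IsSRM A → (∑ i, ∑ j, A i j) ≤ n) ∧
    (∃ A : Matrix (Fin m) (Fin n) ℤ, IsSRM A ∧ (∑ i, ∑ j, A i j) = n) := by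
  constructor
  · intro A hA
    refine Finset.sum_comm.trans_le ?_
    calc ∑ j, ∑ i, A i j ≤ ∑ j : Fin n, (1 : ℤ) := by
          apply Finset.sum_le_sum
          intro j _
          have := hA.2.1 ⟨m - 1, by omega⟩ j
          rw [Iic_top_eq_univ m hm] at this
          rcases this with h | h <;> omega
      _ = n := by simp
  · refine ⟨fun i j => if i = ⟨0, hm⟩ then 1 else 0, ⟨?_, ?_, ?_⟩, ?_⟩
    · intro i j
      by_cases h : i = ⟨0, hm⟩ <;> simp [h]
    · intro i j
      right
      rw [Finset.sum_ite_eq' (Finset.Iic i) (⟨0, hm⟩ : Fin m) (fun _ => (1:ℤ))]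
      simp [Fin.le_def]
    · intro i j
      by_cases h : i = ⟨0, hm⟩ <;> simp [h] <;> positivity
    · rw [Finset.sum_comm]
      have : ∀ j : Fin n, (∑ i : Fin m, if i = ⟨0, hm⟩ then (1:ℤ) else 0) = 1 := by
        intro j; simp
      simp [this]
end

section
/- The maximum number of nonzero entries in an n × n sign-restricted matrix equals (3n² − n)/4 if n ≡ 0 or 3 (mod 4), and (3n² − n + 2)/4 if n ≡ 1 or 2 (mod 4). -/
open Finset

def sfun (n j : ℕ) : ℕ := if j ≤ n / 2 then n / 2 - j else (j - n / 2) % 2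
def efun (n j : ℕ) : ℕ := min (n - 1) (n / 2 + j)
def Bmat (n i j : ℕ) : ℤ :=
  if sfun n j ≤ i ∧ i ≤ efun n j then (if (i + j) % 2 = (n / 2) % 2 then 1 else -1) else 0
def Amat (n : ℕ) : Matrix (Fin n) (Fin n) ℤ := fun i j => Bmat n i.val j.val

lemma sum_Iic_val {n : ℕ} (g : ℕ → ℤ) (i : Fin n) :
    ∑ k ∈ Finset.Iic i, g k.val = ∑ m ∈ Finset.range (i.val + 1), g m := by
  have hi := i.isLt
  have h1 : Finset.Iic i = Finset.univ.filter (fun k : Fin n => k.val ≤ i.val) := by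
    ext k
    simp only [Finset.mem_Iic, Finset.mem_filter, Finset.mem_univ, true_and, Fin.le_def]
  rw [h1, Finset.sum_filter, Fin.sum_univ_eq_sum_range (fun m => if m ≤ i.val then g m else 0) n]
  have h2 : Finset.range (i.val + 1) = (Finset.range n).filter (fun m => m ≤ i.val) := by
    ext m; simp; omega
  rw [h2, Finset.sum_filter]

lemma alt_sum (b e t : ℕ) :
    ∑ m ∈ Finset.range t, (if b ≤ m ∧ m ≤ e then (if (m - b) % 2 = 0 then (1:ℤ) else -1) else 0)
    = if t ≤ b then 0 else if t ≤ e + 1 then (((t - b) % 2 : ℕ) : ℤ) else (((e + 1 - b) % 2 : ℕ) : ℤ) := by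
  induction t with
  | zero => simp
  | succ t ih =>
    rw [Finset.sum_range_succ, ih]
    split_ifs <;> push_cast <;> omega

lemma Bmat_eq_alt (n m j : ℕ) :
    Bmat n m j = if sfun n j ≤ m ∧ m ≤ efun n j then
      (if (m - sfun n j) % 2 = 0 then (1:ℤ) else -1) else 0 := by
  unfold Bmat sfun efun
  split_ifs <;> omega

lemma Amat_col (n : ℕ) (i j : Fin n) :
    (∑ k ∈ Finset.Iic i, Amat n k j) = 0 ∨ (∑ k ∈ Finset.Iic i, Amat n k j) = 1 := by
  have h : (∑ k ∈ Finset.Iic i, Amat n k j) = ∑ m ∈ Finset.range (i.val + 1), Bmat n m j.val :=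
    sum_Iic_val (fun m => Bmat n m j.val) i
  rw [h, Finset.sum_congr rfl (fun m _ => Bmat_eq_alt n m j.val), alt_sum]
  split_ifs <;> omega

lemma Bmat_row_alt (n i m : ℕ) (hi1 : 1 ≤ i) (hin : i < n) (hmn : m < n) :
    Bmat n i m = if max (n / 2 - i) (i - n / 2) ≤ m ∧ m ≤ n - 1 then
      (if (m - max (n / 2 - i) (i - n / 2)) % 2 = 0 then (1:ℤ) else -1) else 0 := by
  unfold Bmat sfun efun
  split_ifs <;> omega

lemma Bmat_row0 (n m : ℕ) : 0 ≤ Bmat n 0 m := by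
  unfold Bmat sfun efun
  split_ifs <;> omega

lemma Amat_row (n : ℕ) (i j : Fin n) : 0 ≤ ∑ l ∈ Finset.Iic j, Amat n i l := by
  have h : (∑ l ∈ Finset.Iic j, Amat n i l) = ∑ m ∈ Finset.range (j.val + 1), Bmat n i.val m :=
    sum_Iic_val (fun m => Bmat n i.val m) j
  rw [h]
  rcases Nat.eq_zero_or_pos i.val with h0 | h1
  · apply Finset.sum_nonneg
    intro m _
    rw [show i.val = 0 from h0]
    exact Bmat_row0 n m
  · have hj := j.isLt
    have hcongr : ∀ m ∈ Finset.range (j.val + 1), Bmat n i.val m =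
        if max (n / 2 - i.val) (i.val - n / 2) ≤ m ∧ m ≤ n - 1 then
          (if (m - max (n / 2 - i.val) (i.val - n / 2)) % 2 = 0 then (1:ℤ) else -1) else 0 := by
      intro m hm
      rw [Finset.mem_range] at hm
      exact Bmat_row_alt n i.val m h1 i.isLt (by omega)
    rw [Finset.sum_congr rfl hcongr, alt_sum]
    split_ifs <;> omega

lemma Amat_entries (n : ℕ) (i j : Fin n) :
    Amat n i j = 0 ∨ Amat n i j = 1 ∨ Amat n i j = -1 := by
  unfold Amat Bmat
  split_ifs <;> simp

lemma Amat_isSRM (n : ℕ) :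
    (∀ i j, Amat n i j = 0 ∨ Amat n i j = 1 ∨ Amat n i j = -1) ∧
    (∀ i j, (∑ k ∈ Finset.Iic i, Amat n k j) = 0 ∨ (∑ k ∈ Finset.Iic i, Amat n k j) = 1) ∧
    (∀ i j, 0 ≤ ∑ l ∈ Finset.Iic j, Amat n i l) :=
  ⟨Amat_entries n, Amat_col n, Amat_row n⟩

lemma Amat_card (n : ℕ) :
    (Finset.univ.filter (fun p : Fin n × Fin n => Amat n p.1 p.2 ≠ 0)).card
      = ∑ j ∈ Finset.range n, (efun n j + 1 - sfun n j) := by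
  rw [Finset.card_filter, Fintype.sum_prod_type, Finset.sum_comm]
  have hcol : ∀ j : Fin n, (∑ i : Fin n, if Amat n i j ≠ 0 then (1:ℕ) else 0)
      = efun n j.val + 1 - sfun n j.val := by
    intro j
    have hj := j.isLt
    have hconv : (∑ i : Fin n, if Amat n i j ≠ 0 then (1:ℕ) else 0)
        = ∑ m ∈ Finset.range n, (if Bmat n m j.val ≠ 0 then (1:ℕ) else 0) :=
      Fin.sum_univ_eq_sum_range (fun m => if Bmat n m j.val ≠ 0 then (1:ℕ) else 0) n
    rw [hconv, ← Finset.card_filter]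
    have hicc : (Finset.range n).filter (fun m => Bmat n m j.val ≠ 0)
        = Finset.Icc (sfun n j.val) (efun n j.val) := by
      ext m
      simp only [Finset.mem_filter, Finset.mem_range, Finset.mem_Icc]
      constructor
      · rintro ⟨hm, hne⟩
        by_contra hc
        exact hne (by unfold Bmat; rw [if_neg (by omega)])
      · intro hc
        have he : efun n j.val ≤ n - 1 := min_le_left _ _
        refine ⟨by omega, ?_⟩
        unfold Bmat
        rw [if_pos hc]
        split_ifs <;> simp
    rw [hicc, Nat.card_Icc]
  rw [Finset.sum_congr rfl (fun j _ => hcol j)]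
  exact Fin.sum_univ_eq_sum_range (fun j => efun n j + 1 - sfun n j) n



def tgt (n : ℕ) : ℕ :=
  if n % 4 = 0 ∨ n % 4 = 3 then (3 * n ^ 2 - n) / 4 else (3 * n ^ 2 - n + 2) / 4

lemma sum_odds (m : ℕ) : ∑ j ∈ Finset.range m, (2 * j + 1) = m ^ 2 := by
  induction m with
  | zero => simp
  | succ m ih => rw [Finset.sum_range_succ, ih]; ring

lemma sum_mod2 (m : ℕ) : ∑ j ∈ Finset.range m, j % 2 = m / 2 := by
  induction m with
  | zero => simp
  | succ m ih => rw [Finset.sum_range_succ, ih]; omega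

lemma tgt0 (q : ℕ) : tgt (4 * q) = 12 * q ^ 2 - q := by
  unfold tgt
  rw [if_pos (Or.inl (by omega))]
  have h2 : 3 * (4 * q) ^ 2 = 48 * q ^ 2 := by ring
  rw [h2]
  generalize q ^ 2 = Q
  omega

lemma tgt1 (q : ℕ) : tgt (4 * q + 1) = 12 * q ^ 2 + 5 * q + 1 := by
  unfold tgt
  rw [if_neg (by omega)]
  have h2 : 3 * (4 * q + 1) ^ 2 = 48 * q ^ 2 + 24 * q + 3 := by ring
  rw [h2]
  generalize q ^ 2 = Q
  omega

lemma tgt2 (q : ℕ) : tgt (4 * q + 2) = 12 * q ^ 2 + 11 * q + 3 := by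
  unfold tgt
  rw [if_neg (by omega)]
  have h2 : 3 * (4 * q + 2) ^ 2 = 48 * q ^ 2 + 48 * q + 12 := by ring
  rw [h2]
  generalize q ^ 2 = Q
  omega

lemma tgt3 (q : ℕ) : tgt (4 * q + 3) = 12 * q ^ 2 + 17 * q + 6 := by
  unfold tgt
  rw [if_pos (Or.inr (by omega))]
  have h2 : 3 * (4 * q + 3) ^ 2 = 48 * q ^ 2 + 72 * q + 27 := by ring
  rw [h2]
  generalize q ^ 2 = Q
  omega

lemma count_eval (n : ℕ) :
    ∑ j ∈ Finset.range n, (efun n j + 1 - sfun n j) = tgt n := by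
  rcases Nat.eq_zero_or_pos n with rfl | hn
  · simp [tgt]
  set R := n / 2 with hR
  have hRn : R + 1 ≤ n := by omega
  rw [Finset.range_eq_Ico, ← Finset.sum_Ico_consecutive _ (Nat.zero_le (R+1)) hRn]
  have hpart1 : ∑ j ∈ Finset.Ico 0 (R+1), (efun n j + 1 - sfun n j)
      = ∑ j ∈ Finset.range (R+1), (if R + j ≤ n - 1 then 2*j+1 else n) := by
    rw [← Finset.range_eq_Ico]
    refine Finset.sum_congr rfl fun j hj => ?_
    rw [Finset.mem_range] at hj
    unfold efun sfun
    split_ifs <;> omega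
  have hpart2 : ∑ j ∈ Finset.Ico (R+1) n, (efun n j + 1 - sfun n j)
      = ∑ k ∈ Finset.range (n - (R+1)), ((n-1) + k % 2) := by
    rw [Finset.sum_Ico_eq_sum_range]
    refine Finset.sum_congr rfl fun k hk => ?_
    rw [Finset.mem_range] at hk
    unfold efun sfun
    split_ifs <;> omega
  rw [hpart1, hpart2, Finset.sum_add_distrib, Finset.sum_const, Finset.card_range, sum_mod2,
    smul_eq_mul]
  have hsum_even : n = 2 * R → ∑ j ∈ Finset.range (R+1), (if R + j ≤ n - 1 then 2*j+1 else n)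
      = R ^ 2 + n := by
    intro he
    rw [Finset.sum_range_succ,
      Finset.sum_congr rfl (fun j hj => if_pos (by rw [Finset.mem_range] at hj; omega)),
      sum_odds, if_neg (by omega)]
  have hsum_odd : n = 2 * R + 1 → ∑ j ∈ Finset.range (R+1), (if R + j ≤ n - 1 then 2*j+1 else n)
      = (R + 1) ^ 2 := by
    intro he
    rw [Finset.sum_congr rfl (fun j hj => if_pos (by rw [Finset.mem_range] at hj; omega)),
      sum_odds]
  rcases (show n % 4 = 0 ∨ n % 4 = 1 ∨ n % 4 = 2 ∨ n % 4 = 3 by omega) with h4 | h4 | h4 | h4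
  · obtain ⟨p, hn4⟩ : ∃ p, n = 4 * (p + 1) := ⟨n / 4 - 1, by omega⟩
    have hR2 : R = 2 * p + 2 := by omega
    rw [hsum_even (by omega)]
    have e1 : n - (R + 1) = 2 * p + 1 := by omega
    have e2 : n - 1 = 4 * p + 3 := by omega
    rw [e1, e2]
    have e3 : (2 * p + 1) * (4 * p + 3) = 8 * p ^ 2 + 10 * p + 3 := by ring
    have e4 : (2 * p + 1) / 2 = p := by omega
    have e5 : R ^ 2 = 4 * p ^ 2 + 8 * p + 4 := by rw [hR2]; ring
    rw [e3, e4, e5, hn4, tgt0 (p + 1)]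
    have e6 : 12 * (p + 1) ^ 2 = 12 * p ^ 2 + 24 * p + 12 := by ring
    rw [e6]
    clear e3 e5 hpart1 hpart2 hsum_even hsum_odd
    generalize p ^ 2 = P
    omega
  · obtain ⟨p, hn4⟩ : ∃ p, n = 4 * p + 1 := ⟨n / 4, by omega⟩
    have hR2 : R = 2 * p := by omega
    rw [hsum_odd (by omega)]
    have e1 : n - (R + 1) = 2 * p := by omega
    have e2 : n - 1 = 4 * p := by omega
    rw [e1, e2]
    have e3 : (2 * p) * (4 * p) = 8 * p ^ 2 := by ring
    have e4 : (2 * p) / 2 = p := by omega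
    have e5 : (R + 1) ^ 2 = 4 * p ^ 2 + 4 * p + 1 := by rw [hR2]; ring
    rw [e3, e4, e5, hn4, tgt1 p]
    clear e3 e5 hpart1 hpart2 hsum_even hsum_odd
    generalize p ^ 2 = P
    omega
  · obtain ⟨p, hn4⟩ : ∃ p, n = 4 * p + 2 := ⟨n / 4, by omega⟩
    have hR2 : R = 2 * p + 1 := by omega
    rw [hsum_even (by omega)]
    have e1 : n - (R + 1) = 2 * p := by omega
    have e2 : n - 1 = 4 * p + 1 := by omega
    rw [e1, e2]
    have e3 : (2 * p) * (4 * p + 1) = 8 * p ^ 2 + 2 * p := by ring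
    have e4 : (2 * p) / 2 = p := by omega
    have e5 : R ^ 2 = 4 * p ^ 2 + 4 * p + 1 := by rw [hR2]; ring
    rw [e3, e4, e5, hn4, tgt2 p]
    clear e3 e5 hpart1 hpart2 hsum_even hsum_odd
    generalize p ^ 2 = P
    omega
  · obtain ⟨p, hn4⟩ : ∃ p, n = 4 * p + 3 := ⟨n / 4, by omega⟩
    have hR2 : R = 2 * p + 1 := by omega
    rw [hsum_odd (by omega)]
    have e1 : n - (R + 1) = 2 * p + 1 := by omega
    have e2 : n - 1 = 4 * p + 2 := by omega
    rw [e1, e2]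
    have e3 : (2 * p + 1) * (4 * p + 2) = 8 * p ^ 2 + 8 * p + 2 := by ring
    have e4 : (2 * p + 1) / 2 = p := by omega
    have e5 : (R + 1) ^ 2 = 4 * p ^ 2 + 8 * p + 4 := by rw [hR2]; ring
    rw [e3, e4, e5, hn4, tgt3 p]
    clear e3 e5 hpart1 hpart2 hsum_even hsum_odd
    generalize p ^ 2 = P
    omega


variable {n : ℕ} (A : Matrix (Fin n) (Fin n) ℤ)

section UB
variable (h01 : ∀ i j, A i j = 0 ∨ A i j = 1 ∨ A i j = -1)
  (hcol : ∀ i j, (∑ k ∈ Finset.Iic i, A k j) = 0 ∨ (∑ k ∈ Finset.Iic i, A k j) = 1)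
  (hrow : ∀ i j, 0 ≤ ∑ l ∈ Finset.Iic j, A i l)

include hcol in
lemma colsum_mem (j : Fin n) : (∑ i, A i j) = 0 ∨ (∑ i, A i j) = 1 := by
  have hn : 0 < n := j.pos
  have huniv : Finset.Iic (⟨n - 1, by omega⟩ : Fin n) = Finset.univ := by
    ext k
    simp only [Finset.mem_Iic, Finset.mem_univ, iff_true, Fin.le_def]
    exact Nat.le_sub_one_of_lt k.isLt
  have := hcol ⟨n - 1, by omega⟩ j
  rwa [huniv] at this

include hrow in
lemma rowpre_nonneg (i j : Fin n) : 0 ≤ ∑ l ∈ Finset.Iio j, A i l := by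
  rcases Nat.eq_zero_or_pos j.val with h0 | h1
  · have : Finset.Iio j = ∅ := by
      ext k; simp only [Finset.mem_Iio, Finset.notMem_empty, iff_false, Fin.lt_def]; omega
    simp [this]
  · have : Finset.Iio j = Finset.Iic (⟨j.val - 1, by omega⟩ : Fin n) := by
      ext k; simp only [Finset.mem_Iio, Finset.mem_Iic, Fin.lt_def, Fin.le_def]; omega
    rw [this]; exact hrow i _

include hrow in
lemma rowpre_ge_one (i j : Fin n) (hm : A i j = -1) : 1 ≤ ∑ l ∈ Finset.Iio j, A i l := by
  have h := hrow i j
  rw [← Finset.Iio_insert, Finset.sum_insert (by simp), hm] at h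
  omega

include h01 in
lemma card_split (j : Fin n) :
    (Finset.univ.filter (fun i : Fin n => A i j ≠ 0)).card
      = (Finset.univ.filter (fun i : Fin n => A i j = 1)).card
        + (Finset.univ.filter (fun i : Fin n => A i j = -1)).card := by
  have hcongr : Finset.univ.filter (fun i : Fin n => A i j ≠ 0)
      = Finset.univ.filter (fun i : Fin n => A i j = 1 ∨ A i j = -1) := by
    apply Finset.filter_congr
    intro i _
    rcases h01 i j with h | h | h <;> simp [h]
  rw [hcongr, Finset.filter_or, Finset.card_union_of_disjoint]
  rw [Finset.disjoint_left]
  intro i hi hi'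
  simp only [Finset.mem_filter] at hi hi'
  omega

include h01 in
lemma colsum_eq (j : Fin n) :
    (∑ i, A i j) = ((Finset.univ.filter (fun i : Fin n => A i j = 1)).card : ℤ)
      - ((Finset.univ.filter (fun i : Fin n => A i j = -1)).card : ℤ) := by
  have hcongr : ∀ i ∈ Finset.univ, A i j
      = (if A i j = 1 then (1:ℤ) else 0) - (if A i j = -1 then (1:ℤ) else 0) := by
    intro i _
    rcases h01 i j with h | h | h <;> norm_num [h]
  rw [Finset.sum_congr rfl hcongr, Finset.sum_sub_distrib, Finset.sum_boole, Finset.sum_boole]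

include hcol hrow in
lemma minus_card_le (j : Fin n) :
    ((Finset.univ.filter (fun i : Fin n => A i j = -1)).card : ℤ) ≤ (j.val : ℤ) := by
  calc ((Finset.univ.filter (fun i : Fin n => A i j = -1)).card : ℤ)
      = ∑ _i ∈ Finset.univ.filter (fun i : Fin n => A i j = -1), (1:ℤ) := by simp
    _ ≤ ∑ i ∈ Finset.univ.filter (fun i : Fin n => A i j = -1), ∑ l ∈ Finset.Iio j, A i l := by
        apply Finset.sum_le_sum
        intro i hi
        simp only [Finset.mem_filter] at hi
        exact rowpre_ge_one A hrow i j hi.2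
    _ ≤ ∑ i ∈ Finset.univ, ∑ l ∈ Finset.Iio j, A i l := by
        apply Finset.sum_le_sum_of_subset_of_nonneg (Finset.subset_univ _)
        intro i _ _
        exact rowpre_nonneg A hrow i j
    _ = ∑ l ∈ Finset.Iio j, ∑ i, A i l := Finset.sum_comm
    _ ≤ ∑ _l ∈ Finset.Iio j, (1:ℤ) := by
        apply Finset.sum_le_sum
        intro l _
        rcases colsum_mem A hcol l with h | h <;> omega
    _ = (j.val : ℤ) := by rw [Finset.sum_const, Fin.card_Iio]; simp

include h01 hcol hrow in
lemma col_card_le (j : Fin n) :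
    (Finset.univ.filter (fun i : Fin n => A i j ≠ 0)).card ≤ 2 * j.val + 1 := by
  have h1 := card_split A h01 j
  have h2 := colsum_eq A h01 j
  have h3 := colsum_mem A hcol j
  have h4 := minus_card_le A hcol hrow j
  omega

lemma col_card_le_n (j : Fin n) :
    (Finset.univ.filter (fun i : Fin n => A i j ≠ 0)).card ≤ n := by
  calc _ ≤ Finset.univ.card := Finset.card_filter_le _ _
    _ = n := by simp

lemma card_odd_filter (n : ℕ) : ((Finset.range n).filter (fun m => m % 2 = 1)).card = n / 2 := by
  induction n with
  | zero => simp
  | succ n ih =>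
    rw [Finset.range_add_one, Finset.filter_insert]
    split_ifs with h
    · rw [Finset.card_insert_of_notMem (by simp)]; omega
    · omega

lemma card_odd_fin (n : ℕ) : (Finset.univ.filter (fun i : Fin n => i.val % 2 = 1)).card = n / 2 := by
  rw [Finset.card_filter]
  have h := Fin.sum_univ_eq_sum_range (fun m => if m % 2 = 1 then (1:ℕ) else 0) n
  rw [h, ← Finset.card_filter, card_odd_filter]



include h01 hcol in
lemma col_alt (j : Fin n) (hfull : ∀ i, A i j ≠ 0) :
    ∀ m (hm : m < n), (∑ k ∈ Finset.Iic (⟨m, hm⟩ : Fin n), A k j)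
      = if m % 2 = 0 then 1 else 0 := by
  intro m
  induction m with
  | zero =>
    intro hm
    have h0 : Finset.Iic (⟨0, hm⟩ : Fin n) = {⟨0, hm⟩} := by
      ext k
      simp only [Finset.mem_Iic, Finset.mem_singleton, Fin.le_def, Fin.ext_iff]
      omega
    rcases hcol ⟨0, hm⟩ j with h | h
    · rw [h0, Finset.sum_singleton] at h
      exact absurd h (hfull _)
    · rw [h]; simp
  | succ m ih =>
    intro hm
    have hm' : m < n := by omega
    have hins : Finset.Iic (⟨m + 1, hm⟩ : Fin n)
        = insert ⟨m + 1, hm⟩ (Finset.Iic (⟨m, hm'⟩ : Fin n)) := by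
      ext k
      simp only [Finset.mem_Iic, Finset.mem_insert, Fin.le_def, Fin.ext_iff]
      omega
    have hnotmem : (⟨m + 1, hm⟩ : Fin n) ∉ Finset.Iic (⟨m, hm'⟩ : Fin n) := by
      simp [Fin.le_def]
    have hsum := hcol ⟨m + 1, hm⟩ j
    rw [hins, Finset.sum_insert hnotmem] at hsum ⊢
    rw [ih hm'] at hsum ⊢
    rcases h01 ⟨m + 1, hm⟩ j with h | h | h
    · exact absurd h (hfull _)
    · rw [h] at hsum ⊢; split_ifs at hsum ⊢ <;> omega
    · rw [h] at hsum ⊢; split_ifs at hsum ⊢ <;> omega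

include h01 hcol in
lemma col_minus (j : Fin n) (hfull : ∀ i, A i j ≠ 0) :
    ∀ (i : Fin n), i.val % 2 = 1 → A i j = -1 := by
  intro i hodd
  obtain ⟨m, hm⟩ : ∃ m, i.val = m + 1 := ⟨i.val - 1, by omega⟩
  have hm1 : m + 1 < n := hm ▸ i.isLt
  have hm' : m < n := by omega
  have h1 := col_alt A h01 hcol j hfull (m + 1) hm1
  have h2 := col_alt A h01 hcol j hfull m hm'
  have hins : Finset.Iic (⟨m + 1, hm1⟩ : Fin n)
      = insert ⟨m + 1, hm1⟩ (Finset.Iic (⟨m, hm'⟩ : Fin n)) := by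
    ext k
    simp only [Finset.mem_Iic, Finset.mem_insert, Fin.le_def, Fin.ext_iff]
    omega
  have hnotmem : (⟨m + 1, hm1⟩ : Fin n) ∉ Finset.Iic (⟨m, hm'⟩ : Fin n) := by
    simp [Fin.le_def]
  rw [hins, Finset.sum_insert hnotmem, h2] at h1
  have hi : i = ⟨m + 1, hm1⟩ := by rw [Fin.ext_iff]; exact hm
  rw [hi]
  split_ifs at h1 <;> omega

include h01 hcol hrow in
lemma pair_bound (j : ℕ) (hj : j + 1 < n) :
    (Finset.univ.filter (fun i : Fin n => A i ⟨j, by omega⟩ ≠ 0)).card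
      + (Finset.univ.filter (fun i : Fin n => A i ⟨j + 1, hj⟩ ≠ 0)).card ≤ 2 * n - 1 := by
  set j0 : Fin n := ⟨j, by omega⟩
  set j1 : Fin n := ⟨j + 1, hj⟩
  by_contra hcon
  push_neg at hcon
  have hle0 := col_card_le_n A j0
  have hle1 := col_card_le_n A j1
  have hfull0 : ∀ i, A i j0 ≠ 0 := by
    have hcard : (Finset.univ.filter (fun i : Fin n => A i j0 ≠ 0)).card = Fintype.card (Fin n) := by
      rw [Fintype.card_fin]; omega
    rw [Finset.card_eq_iff_eq_univ, Finset.eq_univ_iff_forall] at hcard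
    intro i
    exact (Finset.mem_filter.mp (hcard i)).2
  have hfull1 : ∀ i, A i j1 ≠ 0 := by
    have hcard : (Finset.univ.filter (fun i : Fin n => A i j1 ≠ 0)).card = Fintype.card (Fin n) := by
      rw [Fintype.card_fin]; omega
    rw [Finset.card_eq_iff_eq_univ, Finset.eq_univ_iff_forall] at hcard
    intro i
    exact (Finset.mem_filter.mp (hcard i)).2
  -- for odd rows, row prefix before column j0 is ≥ 2
  have hIio : Finset.Iio j1 = insert j0 (Finset.Iio j0) := by
    ext k
    simp only [Finset.mem_Iio, Finset.mem_insert, Fin.lt_def, Fin.ext_iff, Fin.val_mk]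
    have e0 : j0.val = j := rfl
    have e1 : j1.val = j + 1 := rfl
    omega
  have hj0notmem : j0 ∉ Finset.Iio j0 := by simp
  have hpre2 : ∀ i : Fin n, i.val % 2 = 1 → 2 ≤ ∑ l ∈ Finset.Iio j0, A i l := by
    intro i hodd
    have h1 := rowpre_ge_one A hrow i j1 (col_minus A h01 hcol j1 hfull1 i hodd)
    rw [hIio, Finset.sum_insert hj0notmem, col_minus A h01 hcol j0 hfull0 i hodd] at h1
    omega
  have hbound : (∑ i, ∑ l ∈ Finset.Iio j0, A i l) ≤ (j : ℤ) := by
    calc (∑ i, ∑ l ∈ Finset.Iio j0, A i l) = ∑ l ∈ Finset.Iio j0, ∑ i, A i l := Finset.sum_comm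
      _ ≤ ∑ _l ∈ Finset.Iio j0, (1:ℤ) := by
          apply Finset.sum_le_sum
          intro l _
          rcases colsum_mem A hcol l with h | h <;> omega
      _ = (j : ℤ) := by rw [Finset.sum_const, Fin.card_Iio]; simp; rfl
  have hlower : (2 * (n / 2) : ℤ) ≤ ∑ i, ∑ l ∈ Finset.Iio j0, A i l := by
    calc (2 * (n / 2) : ℤ)
        = ∑ _i ∈ Finset.univ.filter (fun i : Fin n => i.val % 2 = 1), (2:ℤ) := by
          rw [Finset.sum_const, card_odd_fin, nsmul_eq_mul]
          push_cast
          ring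
      _ ≤ ∑ i ∈ Finset.univ.filter (fun i : Fin n => i.val % 2 = 1),
            ∑ l ∈ Finset.Iio j0, A i l := by
          apply Finset.sum_le_sum
          intro i hi
          simp only [Finset.mem_filter] at hi
          exact hpre2 i hi.2
      _ ≤ ∑ i, ∑ l ∈ Finset.Iio j0, A i l := by
          apply Finset.sum_le_sum_of_subset_of_nonneg (Finset.subset_univ _)
          intro i _ _
          exact rowpre_nonneg A hrow i j0
  have : (2 * (n / 2) : ℤ) ≤ (j : ℤ) := le_trans hlower hbound
  have hn2 : (n : ℤ) - 1 ≤ 2 * (n / 2 : ℕ) := by omega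
  omega
end UB

lemma endgame (n h a : ℕ) (hh : h = n / 2) (ha : a = n - 2 * ((n - h) / 2)) :
    h ^ 2 + (a - h) * n + ((n - a) / 2) * (2 * n - 1) ≤ tgt n := by
  rcases (show n % 4 = 0 ∨ n % 4 = 1 ∨ n % 4 = 2 ∨ n % 4 = 3 by omega) with h4 | h4 | h4 | h4
  · obtain ⟨q, rfl⟩ : ∃ q, n = 4 * q := ⟨n / 4, by omega⟩
    have e1 : h = 2 * q := by omega
    subst e1
    have e2 : a = 2 * q := by omega
    subst e2
    have e3 : (4 * q - 2 * q) / 2 = q := by omega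
    rw [e3, tgt0 q, Nat.sub_self, zero_mul, add_zero]
    have e4 : (2 * q) ^ 2 = 4 * (q * q) := by ring
    have e5 : q * (2 * (4 * q) - 1) = 8 * (q * q) - q := by
      cases q with
      | zero => simp
      | succ p =>
        have eA : 2 * (4 * (p + 1)) - 1 = 8 * p + 7 := by omega
        rw [eA]
        exact (Nat.sub_eq_of_eq_add (by ring)).symm
    have e6 : 12 * q ^ 2 = 12 * (q * q) := by ring
    rw [e4, e5, e6]
    have hq : q ≤ q * q := by
      cases q with
      | zero => simp
      | succ p => exact Nat.le_mul_of_pos_left _ (Nat.succ_pos p)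
    clear e4 e5 e6
    generalize q * q = Q at hq ⊢
    omega
  · obtain ⟨q, rfl⟩ : ∃ q, n = 4 * q + 1 := ⟨n / 4, by omega⟩
    have e1 : h = 2 * q := by omega
    subst e1
    have e2 : a = 2 * q + 1 := by omega
    subst e2
    have e3 : (4 * q + 1 - (2 * q + 1)) / 2 = q := by omega
    have e3b : 2 * q + 1 - 2 * q = 1 := by omega
    rw [e3, e3b, tgt1 q, one_mul]
    have e4 : (2 * q) ^ 2 = 4 * (q * q) := by ring
    have e5 : q * (2 * (4 * q + 1) - 1) = 8 * (q * q) + q := by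
      have eA : 2 * (4 * q + 1) - 1 = 8 * q + 1 := by omega
      rw [eA]; ring
    have e6 : 12 * q ^ 2 = 12 * (q * q) := by ring
    rw [e4, e5, e6]
    clear e4 e5 e6
    generalize q * q = Q
    omega
  · obtain ⟨q, rfl⟩ : ∃ q, n = 4 * q + 2 := ⟨n / 4, by omega⟩
    have e1 : h = 2 * q + 1 := by omega
    subst e1
    have e2 : a = 2 * q + 2 := by omega
    subst e2
    have e3 : (4 * q + 2 - (2 * q + 2)) / 2 = q := by omega
    have e3b : 2 * q + 2 - (2 * q + 1) = 1 := by omega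
    rw [e3, e3b, tgt2 q, one_mul]
    have e4 : (2 * q + 1) ^ 2 = 4 * (q * q) + 4 * q + 1 := by ring
    have e5 : q * (2 * (4 * q + 2) - 1) = 8 * (q * q) + 3 * q := by
      have eA : 2 * (4 * q + 2) - 1 = 8 * q + 3 := by omega
      rw [eA]; ring
    have e6 : 12 * q ^ 2 = 12 * (q * q) := by ring
    rw [e4, e5, e6]
    clear e4 e5 e6
    generalize q * q = Q
    omega
  · obtain ⟨q, rfl⟩ : ∃ q, n = 4 * q + 3 := ⟨n / 4, by omega⟩
    have e1 : h = 2 * q + 1 := by omega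
    subst e1
    have e2 : a = 2 * q + 1 := by omega
    subst e2
    have e3 : (4 * q + 3 - (2 * q + 1)) / 2 = q + 1 := by omega
    rw [e3, tgt3 q, Nat.sub_self, zero_mul, add_zero]
    have e4 : (2 * q + 1) ^ 2 = 4 * (q * q) + 4 * q + 1 := by ring
    have e5 : (q + 1) * (2 * (4 * q + 3) - 1) = 8 * (q * q) + 13 * q + 5 := by
      have eA : 2 * (4 * q + 3) - 1 = 8 * q + 5 := by omega
      rw [eA]; ring
    have e6 : 12 * q ^ 2 = 12 * (q * q) := by ring
    rw [e4, e5, e6]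
    clear e4 e5 e6
    generalize q * q = Q
    omega

lemma ub_arith (n : ℕ) (c : ℕ → ℕ)
    (h1 : ∀ j, j < n → c j ≤ n)
    (h2 : ∀ j, j < n → c j ≤ 2 * j + 1)
    (h3 : ∀ j, j + 1 < n → c j + c (j + 1) ≤ 2 * n - 1) :
    ∑ j ∈ Finset.range n, c j ≤ tgt n := by
  rcases Nat.eq_zero_or_pos n with rfl | hn
  · simp [tgt]
  set h := n / 2 with hh
  set a := n - 2 * ((n - h) / 2) with ha
  have hav : a = h ∨ a = h + 1 := by omega
  have han : a ≤ n := by omega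
  have haeven : (n - a) % 2 = 0 := by omega
  rw [Finset.range_eq_Ico, ← Finset.sum_Ico_consecutive _ (Nat.zero_le a) han]
  have hlow : ∑ j ∈ Finset.Ico 0 a, c j ≤ h ^ 2 + (a - h) * n := by
    rw [← Finset.range_eq_Ico]
    have hstep : ∑ j ∈ Finset.range a, c j
        ≤ ∑ j ∈ Finset.range a, (if j < h then 2 * j + 1 else n) := by
      apply Finset.sum_le_sum
      intro j hj
      rw [Finset.mem_range] at hj
      split_ifs with hjh
      · exact h2 j (by omega)
      · exact h1 j (by omega)
    refine le_trans hstep ?_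
    rcases hav with hv | hv
    · rw [hv, Finset.sum_congr rfl (fun j hj => if_pos (by rw [Finset.mem_range] at hj; omega)),
        sum_odds, Nat.sub_self, zero_mul, add_zero]
    · rw [hv, Finset.sum_range_succ,
        Finset.sum_congr rfl (fun j hj => if_pos (by rw [Finset.mem_range] at hj; omega)),
        sum_odds, if_neg (by omega), Nat.add_sub_cancel_left, one_mul]
  have hpair : ∀ m, a + 2 * m ≤ n →
      ∑ j ∈ Finset.Ico a (a + 2 * m), c j ≤ m * (2 * n - 1) := by
    intro m
    induction m with
    | zero => simp
    | succ m ih =>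
      intro hle
      have hle' : a + 2 * m ≤ n := by omega
      have e1 : a + 2 * (m + 1) = (a + 2 * m + 1) + 1 := by ring
      rw [e1, Finset.sum_Ico_succ_top (by omega), Finset.sum_Ico_succ_top (by omega)]
      have := h3 (a + 2 * m) (by omega)
      have := ih hle'
      have e2 : (m + 1) * (2 * n - 1) = m * (2 * n - 1) + (2 * n - 1) := by ring
      omega
  have hm := hpair ((n - a) / 2) (by omega)
  have hIco : Finset.Ico a n = Finset.Ico a (a + 2 * ((n - a) / 2)) := by
    congr 1
    omega
  rw [hIco]
  refine le_trans (Nat.add_le_add hlow hm) ?_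
  exact endgame n h a hh ha

/-- the maximum number of nonzero entries in an n×n SRM. -/
theorem stmt5 (n : ℕ) :
    IsGreatest {k : ℕ | ∃ A : Matrix (Fin n) (Fin n) ℤ, IsSRM A ∧
        (Finset.univ.filter (fun p : Fin n × Fin n => A p.1 p.2 ≠ 0)).card = k}
      (if n % 4 = 0 ∨ n % 4 = 3 then (3 * n ^ 2 - n) / 4 else (3 * n ^ 2 - n + 2) / 4) := by
  show IsGreatest _ (tgt n)
  constructor
  · exact ⟨Amat n, Amat_isSRM n, by rw [Amat_card, count_eval]⟩
  · rintro k ⟨A, ⟨h01, hcol, hrow⟩, rfl⟩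
    have hcard : (Finset.univ.filter (fun p : Fin n × Fin n => A p.1 p.2 ≠ 0)).card
        = ∑ j ∈ Finset.range n,
          (fun j => if hj : j < n then
            (Finset.univ.filter (fun i : Fin n => A i ⟨j, hj⟩ ≠ 0)).card else 0) j := by
      rw [Finset.card_filter, Fintype.sum_prod_type, Finset.sum_comm]
      rw [← Fin.sum_univ_eq_sum_range]
      refine Finset.sum_congr rfl fun j _ => ?_
      rw [dif_pos j.isLt, Finset.card_filter]
    rw [hcard]
    apply ub_arith
    · intro j hj
      rw [dif_pos hj]
      exact col_card_le_n A ⟨j, hj⟩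
    · intro j hj
      rw [dif_pos hj]
      exact col_card_le A h01 hcol hrow ⟨j, hj⟩
    · intro j hj
      rw [dif_pos (show j < n by omega), dif_pos hj]
      exact pair_bound A h01 hcol hrow j hj
end

section
/- Column j of an m × n sign-restricted matrix contains at most min(2j − 1, m) nonzero entries (for j ≤ ⌈(m+1)/2⌉ the bound 2j−1 holds). -/
open Finset

/-- column j (1-indexed: j.val+1) of an m×n SRM has at most
min(2(j+1)−1, m) nonzero entries. -/
theorem stmt6 (m n : ℕ) (A : Matrix (Fin m) (Fin n) ℤ) (hA : IsSRM A) (j : Fin n) :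
    (Finset.univ.filter (fun i : Fin m => A i j ≠ 0)).card ≤
      min (2 * ((j : ℕ) + 1) - 1) m := by
  have hm : (Finset.univ.filter (fun i : Fin m => A i j ≠ 0)).card ≤ m := by
    calc (Finset.univ.filter (fun i : Fin m => A i j ≠ 0)).card
        ≤ (Finset.univ : Finset (Fin m)).card := Finset.card_filter_le _ _
      _ = m := by simp
  refine le_min ?_ hm
  rcases Nat.eq_zero_or_pos m with h0 | hm0
  · subst h0
    simp
  obtain ⟨m', rfl⟩ : ∃ m', m = m' + 1 := ⟨m - 1, (Nat.succ_pred_eq_of_pos hm0).symm⟩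
  obtain ⟨hent, hcol, hrow⟩ := hA
  set P := Finset.univ.filter (fun i : Fin (m' + 1) => A i j = 1) with hPdef
  set Q := Finset.univ.filter (fun i : Fin (m' + 1) => A i j = -1) with hQdef
  -- univ = Iic (Fin.last m')
  have hIic : (Finset.Iic (Fin.last m')) = (Finset.univ : Finset (Fin (m' + 1))) := by
    ext k; simp [Fin.le_last]
  -- row sums over Iio j are nonnegative
  have hrowIio : ∀ i : Fin (m' + 1), 0 ≤ ∑ l ∈ Finset.Iio j, A i l := by
    intro i
    rcases Nat.eq_zero_or_pos j.val with hj | hj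
    · have : (Finset.Iio j) = (∅ : Finset (Fin n)) := by
        ext k; simp [Fin.lt_def, hj]
      simp [this]
    · have hj' : j.val - 1 < n := lt_of_le_of_lt (Nat.pred_le _) j.isLt
      have : (Finset.Iio j) = Finset.Iic (⟨j.val - 1, hj'⟩ : Fin n) := by
        ext k; simp only [Finset.mem_Iio, Finset.mem_Iic, Fin.lt_def, Fin.le_def]
        omega
      rw [this]
      exact hrow i _
  -- split Iic j sum
  have hIicIio : ∀ i : Fin (m' + 1),
      (∑ l ∈ Finset.Iic j, A i l) = (∑ l ∈ Finset.Iio j, A i l) + A i j := by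
    intro i
    rw [← Finset.Iio_insert, Finset.sum_insert (by simp)]
    ring
  -- each row in Q contributes at least 1 to the Iio-j sum
  have hrowQ : ∀ i ∈ Q, (1 : ℤ) ≤ ∑ l ∈ Finset.Iio j, A i l := by
    intro i hi
    have hi' : A i j = -1 := by simpa [hQdef] using hi
    have h1 := hrow i j
    rw [hIicIio i, hi'] at h1
    linarith
  -- full column sums are at most 1
  have hcolsum : ∀ l : Fin n, (∑ i, A i l) ≤ 1 := by
    intro l
    have := hcol (Fin.last m') l
    rw [hIic] at this
    rcases this with h | h <;> omega
  -- bound on card Q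
  have hQle : (Q.card : ℤ) ≤ (j : ℕ) := by
    have h1 : (Q.card : ℤ) ≤ ∑ i ∈ Q, ∑ l ∈ Finset.Iio j, A i l := by
      calc (Q.card : ℤ) = ∑ _i ∈ Q, (1 : ℤ) := by simp
        _ ≤ _ := Finset.sum_le_sum hrowQ
    have h2 : (∑ i ∈ Q, ∑ l ∈ Finset.Iio j, A i l)
        ≤ ∑ i : Fin (m' + 1), ∑ l ∈ Finset.Iio j, A i l :=
      Finset.sum_le_sum_of_subset_of_nonneg (Finset.subset_univ _)
        (fun i _ _ => hrowIio i)
    have h3 : (∑ i : Fin (m' + 1), ∑ l ∈ Finset.Iio j, A i l) ≤ (j : ℕ) := by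
      refine Finset.sum_comm.trans_le ?_
      calc (∑ l ∈ Finset.Iio j, ∑ i, A i l) ≤ ∑ l ∈ Finset.Iio j, (1 : ℤ) :=
            Finset.sum_le_sum (fun l _ => hcolsum l)
        _ = (Finset.Iio j).card := by simp
        _ = (j : ℕ) := by rw [Fin.card_Iio]  -- Iio j card = j.val
    linarith
  -- column sum in terms of P and Q
  have hcs : (∑ i, A i j) = (P.card : ℤ) - Q.card := by
    have : ∀ i : Fin (m' + 1), A i j =
        (if A i j = 1 then (1 : ℤ) else 0) - (if A i j = -1 then (1 : ℤ) else 0) := by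
      intro i
      rcases hent i j with h | h | h <;> simp [h]
    calc (∑ i, A i j)
        = ∑ i, ((if A i j = 1 then (1 : ℤ) else 0) - (if A i j = -1 then (1 : ℤ) else 0)) :=
          Finset.sum_congr rfl (fun i _ => this i)
      _ = (∑ i, if A i j = 1 then (1 : ℤ) else 0)
          - (∑ i, if A i j = -1 then (1 : ℤ) else 0) := Finset.sum_sub_distrib _ _
      _ = (P.card : ℤ) - Q.card := by
          rw [Finset.sum_boole, Finset.sum_boole]
  -- P - Q <= 1
  have hPle : (P.card : ℤ) ≤ (Q.card : ℤ) + 1 := by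
    have := hcolsum j
    rw [hcs] at this
    linarith
  -- decompose the nonzero set
  have hsplit : (Finset.univ.filter (fun i : Fin (m' + 1) => A i j ≠ 0)) = P ∪ Q := by
    ext i
    simp only [hPdef, hQdef, Finset.mem_filter, Finset.mem_union, Finset.mem_univ, true_and]
    rcases hent i j with h | h | h <;> simp [h]
  have hdisj : Disjoint P Q := by
    rw [Finset.disjoint_left]
    intro i hiP hiQ
    simp only [hPdef, hQdef, Finset.mem_filter] at hiP hiQ
    omega
  have hcard : (Finset.univ.filter (fun i : Fin (m' + 1) => A i j ≠ 0)).card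
      = P.card + Q.card := by
    rw [hsplit, Finset.card_union_of_disjoint hdisj]
  omega
end

section
/- Let A be a sign-restricted matrix containing at least one entry equal to −1. Choose (i,j) with a_{ij} = −1 and i + j minimal among positions of −1's. Then there exist k < i with a_{kj} = 1 and l < j with a_{il} = 1 such that a_{kl} = 0, and the matrix A' obtained from A by adding the 2 × 2 matrix [[1,−1],[−1,1]] to the submatrix of A with rows k,i and columns l,j is again a sign-restricted matrix with the same row and column sum vectors as A and with exactly one fewer −1 entry. -/
open Finset

private lemma sum_split {m : ℕ} (f : Fin m → ℤ) {k p : Fin m} (h : k ≤ p) :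
    ∑ t ∈ Finset.Iic p, f t = (∑ t ∈ Finset.Iic k, f t) + ∑ t ∈ Finset.Ioc k p, f t := by
  have hu : Finset.Iic k ∪ Finset.Ioc k p = Finset.Iic p := by
    ext t
    simp only [Finset.mem_union, Finset.mem_Iic, Finset.mem_Ioc, Fin.le_def, Fin.lt_def]
    omega
  rw [← hu, Finset.sum_union]
  simp only [Finset.disjoint_left, Finset.mem_Iic, Finset.mem_Ioc, Fin.le_def, Fin.lt_def]
  omega

private lemma sum_Iic_eq {m : ℕ} (f : Fin m → ℤ) (p : Fin m) :
    ∑ t ∈ Finset.Iic p, f t = (∑ t ∈ Finset.Iio p, f t) + f p := by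
  rw [← Finset.Iio_insert, Finset.sum_insert (by simp)]; ring

set_option maxHeartbeats 2000000 in
/-- given a top-left −1 in an SRM, there is an interchange removing it
and keeping the SRM property and the row/column sums. -/
theorem stmt7 (m n : ℕ) (A : Matrix (Fin m) (Fin n) ℤ) (hA : IsSRM A)
    (i : Fin m) (j : Fin n) (hij : A i j = -1)
    (hmin : ∀ (p : Fin m) (q : Fin n), A p q = -1 → (i : ℕ) + (j : ℕ) ≤ (p : ℕ) + (q : ℕ)) :
    ∃ (k : Fin m) (l : Fin n), k < i ∧ l < j ∧ A k j = 1 ∧ A i l = 1 ∧ A k l = 0 ∧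
      (let A' : Matrix (Fin m) (Fin n) ℤ := fun p q =>
        A p q + (if (p = k ∧ q = l) ∨ (p = i ∧ q = j) then 1 else 0)
              - (if (p = k ∧ q = j) ∨ (p = i ∧ q = l) then 1 else 0)
       IsSRM A' ∧
       (∀ p, ∑ q, A' p q = ∑ q, A p q) ∧
       (∀ q, ∑ p, A' p q = ∑ p, A p q) ∧
       (Finset.univ.filter (fun pq : Fin m × Fin n => A' pq.1 pq.2 = -1)).card + 1 =
         (Finset.univ.filter (fun pq : Fin m × Fin n => A pq.1 pq.2 = -1)).card) := by
  obtain ⟨hent, hcol, hrow⟩ := hA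
  -- entries north-west of (i,j) are 0 or 1
  have hmin' : ∀ (p : Fin m) (q : Fin n), (p : ℕ) + (q : ℕ) < (i : ℕ) + (j : ℕ) →
      0 ≤ A p q ∧ A p q ≤ 1 := by
    intro p q h
    rcases hent p q with h0 | h1 | hneg
    · constructor <;> simp [h0]
    · constructor <;> simp [h1]
    · exact absurd (hmin p q hneg) (by omega)
  -- existence of k : k < i, A k j = 1
  have hIioj_pos : (0 : ℤ) < ∑ t ∈ Finset.Iio i, A t j := by
    have h2 := sum_Iic_eq (fun t => A t j) i
    simp only [hij] at h2
    rcases hcol i j with h1 | h1 <;> (rw [h1] at h2; linarith)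
  have hkex : ∃ k : Fin m, k < i ∧ A k j = 1 := by
    by_contra hc
    push_neg at hc
    have : ∑ t ∈ Finset.Iio i, A t j ≤ 0 := by
      apply Finset.sum_nonpos
      intro t ht
      rw [Finset.mem_Iio] at ht
      rcases hent t j with h0 | h1 | hneg
      · simp [h0]
      · exact absurd h1 (hc t ht)
      · have h5 := hmin t j hneg
        have h6 : (t : ℕ) < i := ht
        omega
    linarith
  obtain ⟨k, hki, hAkj⟩ := hkex
  -- existence of l : choose maximal l < j with A i l = 1
  have hIiol_pos : (0 : ℤ) < ∑ t ∈ Finset.Iio j, A i t := by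
    have h2 := sum_Iic_eq (fun t => A i t) j
    simp only [hij] at h2
    have h1 := hrow i j
    linarith
  have hsne : ((Finset.Iio j).filter (fun t => A i t = 1)).Nonempty := by
    by_contra hc
    rw [Finset.not_nonempty_iff_eq_empty, Finset.filter_eq_empty_iff] at hc
    have : ∑ t ∈ Finset.Iio j, A i t ≤ 0 := by
      apply Finset.sum_nonpos
      intro t ht
      have htj : t < j := Finset.mem_Iio.mp ht
      rcases hent i t with h0 | h1 | hneg
      · simp [h0]
      · exact absurd h1 (hc ht)
      · have h5 := hmin i t hneg
        have h6 : (t : ℕ) < j := htj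
        omega
    linarith
  obtain ⟨l, hlj, hAil, hlmax⟩ :
      ∃ l : Fin n, l < j ∧ A i l = 1 ∧ ∀ t : Fin n, l < t → t < j → A i t = 0 := by
    refine ⟨((Finset.Iio j).filter (fun t => A i t = 1)).max' hsne, ?_, ?_, ?_⟩
    · have h := Finset.max'_mem ((Finset.Iio j).filter (fun t => A i t = 1)) hsne
      rw [Finset.mem_filter, Finset.mem_Iio] at h
      exact h.1
    · have h := Finset.max'_mem ((Finset.Iio j).filter (fun t => A i t = 1)) hsne
      rw [Finset.mem_filter, Finset.mem_Iio] at h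
      exact h.2
    · intro t hlt htj
      rcases hent i t with h0 | h1 | hneg
      · exact h0
      · have h7 : t ≤ ((Finset.Iio j).filter (fun t => A i t = 1)).max' hsne :=
          Finset.le_max' _ t (by
            rw [Finset.mem_filter, Finset.mem_Iio]; exact ⟨htj, h1⟩)
        exact absurd hlt (not_lt.mpr h7)
      · have h5 := hmin i t hneg
        have h6 : (t : ℕ) < j := htj
        omega
  -- nonneg entries
  have hcolL_nn : ∀ t : Fin m, t < i → 0 ≤ A t l := by
    intro t ht
    exact (hmin' t l (by have h1 : (t:ℕ) < i := ht; have h2 : (l:ℕ) < j := hlj; omega)).1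
  have hcolJ_nn : ∀ t : Fin m, t < i → 0 ≤ A t j := by
    intro t ht
    exact (hmin' t j (by have h1 : (t:ℕ) < i := ht; omega)).1
  have hrowI_nn : ∀ t : Fin n, t < j → 0 ≤ A i t := by
    intro t ht
    exact (hmin' i t (by have h1 : (t:ℕ) < j := ht; omega)).1
  -- column l : partial sums strictly above row i are zero
  have hIiol_zero : ∑ t ∈ Finset.Iio i, A t l = 0 := by
    have h2 := sum_Iic_eq (fun t => A t l) i
    simp only [hAil] at h2
    have hn : 0 ≤ ∑ t ∈ Finset.Iio i, A t l :=
      Finset.sum_nonneg (fun t ht => hcolL_nn t (Finset.mem_Iio.mp ht))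
    rcases hcol i l with h1 | h1 <;> (rw [h1] at h2; linarith)
  have hSl : ∀ p : Fin m, p < i → ∑ t ∈ Finset.Iic p, A t l = 0 := by
    intro p hp
    have hsub : Finset.Iic p ⊆ Finset.Iio i := by
      intro t ht
      rw [Finset.mem_Iic] at ht
      rw [Finset.mem_Iio]
      exact lt_of_le_of_lt ht hp
    have hle : ∑ t ∈ Finset.Iic p, A t l ≤ ∑ t ∈ Finset.Iio i, A t l :=
      Finset.sum_le_sum_of_subset_of_nonneg hsub
        (fun t ht _ => hcolL_nn t (Finset.mem_Iio.mp ht))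
    rcases hcol p l with h1 | h1
    · exact h1
    · rw [h1, hIiol_zero] at hle; linarith
  -- A k l = 0
  have hAkl : A k l = 0 := by
    have h1 : A k l ≤ ∑ t ∈ Finset.Iio i, A t l :=
      Finset.single_le_sum (fun t ht => hcolL_nn t (Finset.mem_Iio.mp ht))
        (Finset.mem_Iio.mpr hki)
    have h2 := hcolL_nn k hki
    rw [hIiol_zero] at h1
    linarith
  -- column j : partial sums between rows k and i-1 equal 1
  have hSj : ∀ p : Fin m, k ≤ p → p < i → ∑ t ∈ Finset.Iic p, A t j = 1 := by
    intro p hkp hpi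
    have hsplit := sum_split (fun t => A t j) hkp
    have hk1 : 1 ≤ ∑ t ∈ Finset.Iic k, A t j := by
      have h2 := sum_Iic_eq (fun t => A t j) k
      simp only [hAkj] at h2
      have hn : 0 ≤ ∑ t ∈ Finset.Iio k, A t j :=
        Finset.sum_nonneg (fun t ht =>
          hcolJ_nn t (lt_trans (Finset.mem_Iio.mp ht) hki))
      linarith
    have hoc : 0 ≤ ∑ t ∈ Finset.Ioc k p, A t j :=
      Finset.sum_nonneg (fun t ht =>
        hcolJ_nn t (lt_of_le_of_lt (Finset.mem_Ioc.mp ht).2 hpi))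
    rcases hcol p j with h1 | h1
    · rw [h1] at hsplit; linarith
    · exact h1
  -- row i : partial sums between columns l and j-1 are ≥ 1
  have hRi : ∀ q : Fin n, l ≤ q → q < j → 1 ≤ ∑ t ∈ Finset.Iic q, A i t := by
    intro q hlq hqj
    have hsplit := sum_split (fun t => A i t) hlq
    have hl1 : 1 ≤ ∑ t ∈ Finset.Iic l, A i t := by
      have h2 := sum_Iic_eq (fun t => A i t) l
      simp only [hAil] at h2
      have hn : 0 ≤ ∑ t ∈ Finset.Iio l, A i t :=
        Finset.sum_nonneg (fun t ht =>
          hrowI_nn t (lt_trans (Finset.mem_Iio.mp ht) hlj))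
      linarith
    have hoc : ∑ t ∈ Finset.Ioc l q, A i t = 0 :=
      Finset.sum_eq_zero (fun t ht =>
        hlmax t (Finset.mem_Ioc.mp ht).1 (lt_of_le_of_lt (Finset.mem_Ioc.mp ht).2 hqj))
    rw [hsplit, hoc]
    linarith
  have hkne : k ≠ i := ne_of_lt hki
  have hlne : l ≠ j := ne_of_lt hlj
  have hik : i ≠ k := hkne.symm
  have hjl : j ≠ l := hlne.symm
  refine ⟨k, l, hki, hlj, hAkj, hAil, hAkl, ?_⟩
  set B : Matrix (Fin m) (Fin n) ℤ := fun p q =>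
    A p q + (if (p = k ∧ q = l) ∨ (p = i ∧ q = j) then 1 else 0)
          - (if (p = k ∧ q = j) ∨ (p = i ∧ q = l) then 1 else 0) with hB
  -- pointwise values
  have hBval : ∀ p q, B p q =
      A p q + (if (p = k ∧ q = l) ∨ (p = i ∧ q = j) then 1 else 0)
            - (if (p = k ∧ q = j) ∨ (p = i ∧ q = l) then 1 else 0) := fun p q => rfl
  have hBkl : B k l = 1 := by
    rw [hBval]; simp [hkne, hlne, hAkl]
  have hBkj : B k j = 0 := by
    rw [hBval]; simp [hkne, hlne, hjl, hAkj]
  have hBil : B i l = 0 := by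
    rw [hBval]; simp [hik, hlne, hjl, hAil]
  have hBij : B i j = 0 := by
    rw [hBval]; simp [hik, hjl, hij]
  have hBoff : ∀ p q, ¬(p = k ∧ q = l) → ¬(p = i ∧ q = j) → ¬(p = k ∧ q = j) →
      ¬(p = i ∧ q = l) → B p q = A p q := by
    intro p q h1 h2 h3 h4
    rw [hBval,
      if_neg (show ¬((p = k ∧ q = l) ∨ (p = i ∧ q = j)) from by tauto),
      if_neg (show ¬((p = k ∧ q = j) ∨ (p = i ∧ q = l)) from by tauto)]
    ring
  -- column partial sums of B
  have heL : ∀ t : Fin m,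
      B t l = A t l + (if t = k then 1 else 0) - (if t = i then 1 else 0) := by
    intro t
    rw [hBval]
    simp only [eq_self_iff_true, and_true, hlne, and_false, or_false, false_or]
  have heJ : ∀ t : Fin m,
      B t j = A t j + (if t = i then 1 else 0) - (if t = k then 1 else 0) := by
    intro t
    rw [hBval]
    simp only [eq_self_iff_true, and_true, hjl, and_false, or_false, false_or]
  have heK : ∀ t : Fin n,
      B k t = A k t + (if t = l then 1 else 0) - (if t = j then 1 else 0) := by
    intro t
    rw [hBval]
    simp only [eq_self_iff_true, true_and, hkne, false_and, or_false, false_or]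
  have heI : ∀ t : Fin n,
      B i t = A i t + (if t = j then 1 else 0) - (if t = l then 1 else 0) := by
    intro t
    rw [hBval]
    simp only [eq_self_iff_true, true_and, hik, false_and, or_false, false_or]
  have hBcol_l : ∀ p : Fin m, ∑ t ∈ Finset.Iic p, B t l =
      (∑ t ∈ Finset.Iic p, A t l) + (if k ≤ p then 1 else 0) - (if i ≤ p then 1 else 0) := by
    intro p
    simp only [heL]
    rw [Finset.sum_sub_distrib, Finset.sum_add_distrib, Finset.sum_ite_eq',
      Finset.sum_ite_eq']
    simp only [Finset.mem_Iic]
  have hBcol_j : ∀ p : Fin m, ∑ t ∈ Finset.Iic p, B t j =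
      (∑ t ∈ Finset.Iic p, A t j) + (if i ≤ p then 1 else 0) - (if k ≤ p then 1 else 0) := by
    intro p
    simp only [heJ]
    rw [Finset.sum_sub_distrib, Finset.sum_add_distrib, Finset.sum_ite_eq',
      Finset.sum_ite_eq']
    simp only [Finset.mem_Iic]
  have hBrow_k : ∀ q : Fin n, ∑ t ∈ Finset.Iic q, B k t =
      (∑ t ∈ Finset.Iic q, A k t) + (if l ≤ q then 1 else 0) - (if j ≤ q then 1 else 0) := by
    intro q
    simp only [heK]
    rw [Finset.sum_sub_distrib, Finset.sum_add_distrib, Finset.sum_ite_eq',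
      Finset.sum_ite_eq']
    simp only [Finset.mem_Iic]
  have hBrow_i : ∀ q : Fin n, ∑ t ∈ Finset.Iic q, B i t =
      (∑ t ∈ Finset.Iic q, A i t) + (if j ≤ q then 1 else 0) - (if l ≤ q then 1 else 0) := by
    intro q
    simp only [heI]
    rw [Finset.sum_sub_distrib, Finset.sum_add_distrib, Finset.sum_ite_eq',
      Finset.sum_ite_eq']
    simp only [Finset.mem_Iic]
  have hBcol_other : ∀ (c : Fin n) (p : Fin m), c ≠ l → c ≠ j →
      ∑ t ∈ Finset.Iic p, B t c = ∑ t ∈ Finset.Iic p, A t c := by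
    intro c p hcl hcj
    apply Finset.sum_congr rfl
    intro t _
    exact hBoff t c (by tauto) (by tauto) (by tauto) (by tauto)
  have hBrow_other : ∀ (r : Fin m) (q : Fin n), r ≠ k → r ≠ i →
      ∑ t ∈ Finset.Iic q, B r t = ∑ t ∈ Finset.Iic q, A r t := by
    intro r q hrk hri
    apply Finset.sum_congr rfl
    intro t _
    exact hBoff r t (by tauto) (by tauto) (by tauto) (by tauto)
  -- IsSRM B
  have hSRM : IsSRM B := by
    refine ⟨?_, ?_, ?_⟩
    · -- entries
      intro p q
      by_cases hpk : p = k
      · by_cases hql : q = l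
        · subst hpk; subst hql; rw [hBkl]; norm_num
        · by_cases hqj : q = j
          · subst hpk; subst hqj; rw [hBkj]; norm_num
          · rw [hBoff p q (by tauto) (by tauto) (by tauto) (by tauto)]; exact hent p q
      · by_cases hpi : p = i
        · by_cases hql : q = l
          · subst hpi; subst hql; rw [hBil]; norm_num
          · by_cases hqj : q = j
            · subst hpi; subst hqj; rw [hBij]; norm_num
            · rw [hBoff p q (by tauto) (by tauto) (by tauto) (by tauto)]; exact hent p q
        · rw [hBoff p q (by tauto) (by tauto) (by tauto) (by tauto)]; exact hent p q
    · -- column partial sums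
      intro p c
      by_cases hcl : c = l
      · rw [hcl, hBcol_l p]
        by_cases hip : i ≤ p
        · rw [if_pos hip, if_pos (le_of_lt (lt_of_lt_of_le hki hip))]
          have h1 := hcol p l
          omega
        · rw [if_neg hip]
          by_cases hkp : k ≤ p
          · rw [if_pos hkp, hSl p (not_le.mp hip)]
            right; ring
          · rw [if_neg hkp]
            have h1 := hcol p l
            omega
      · by_cases hcj : c = j
        · rw [hcj, hBcol_j p]
          by_cases hip : i ≤ p
          · rw [if_pos hip, if_pos (le_of_lt (lt_of_lt_of_le hki hip))]
            have h1 := hcol p j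
            omega
          · rw [if_neg hip]
            by_cases hkp : k ≤ p
            · rw [if_pos hkp, hSj p hkp (not_le.mp hip)]
              left; ring
            · rw [if_neg hkp]
              have h1 := hcol p j
              omega
        · rw [hBcol_other c p hcl hcj]
          exact hcol p c
    · -- row partial sums
      intro r q
      by_cases hrk : r = k
      · rw [hrk, hBrow_k q]
        by_cases hjq : j ≤ q
        · rw [if_pos hjq, if_pos (le_of_lt (lt_of_lt_of_le hlj hjq))]
          have h1 := hrow k q
          linarith
        · rw [if_neg hjq]
          by_cases hlq : l ≤ q
          · rw [if_pos hlq]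
            have h1 := hrow k q
            linarith
          · rw [if_neg hlq]
            have h1 := hrow k q
            linarith
      · by_cases hri : r = i
        · rw [hri, hBrow_i q]
          by_cases hjq : j ≤ q
          · rw [if_pos hjq, if_pos (le_of_lt (lt_of_lt_of_le hlj hjq))]
            have h1 := hrow i q
            linarith
          · rw [if_neg hjq]
            by_cases hlq : l ≤ q
            · rw [if_pos hlq]
              have h1 := hRi q hlq (not_le.mp hjq)
              linarith
            · rw [if_neg hlq]
              have h1 := hrow i q
              linarith
        · rw [hBrow_other r q hrk hri]
          exact hrow r q
  -- row sums preserved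
  have hrowsum : ∀ p, ∑ q, B p q = ∑ q, A p q := by
    intro p
    by_cases hpk : p = k
    · rw [hpk]
      simp only [heK]
      rw [Finset.sum_sub_distrib, Finset.sum_add_distrib, Finset.sum_ite_eq',
        Finset.sum_ite_eq']
      simp
    · by_cases hpi : p = i
      · rw [hpi]
        simp only [heI]
        rw [Finset.sum_sub_distrib, Finset.sum_add_distrib, Finset.sum_ite_eq',
          Finset.sum_ite_eq']
        simp
      · apply Finset.sum_congr rfl
        intro t _
        exact hBoff p t (by tauto) (by tauto) (by tauto) (by tauto)
  -- column sums preserved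
  have hcolsum : ∀ q, ∑ p, B p q = ∑ p, A p q := by
    intro q
    by_cases hql : q = l
    · rw [hql]
      simp only [heL]
      rw [Finset.sum_sub_distrib, Finset.sum_add_distrib, Finset.sum_ite_eq',
        Finset.sum_ite_eq']
      simp
    · by_cases hqj : q = j
      · rw [hqj]
        simp only [heJ]
        rw [Finset.sum_sub_distrib, Finset.sum_add_distrib, Finset.sum_ite_eq',
          Finset.sum_ite_eq']
        simp
      · apply Finset.sum_congr rfl
        intro t _
        exact hBoff t q (by tauto) (by tauto) (by tauto) (by tauto)
  -- cardinality
  have hcard : (Finset.univ.filter (fun pq : Fin m × Fin n => B pq.1 pq.2 = -1)).card + 1 =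
      (Finset.univ.filter (fun pq : Fin m × Fin n => A pq.1 pq.2 = -1)).card := by
    have hfe : Finset.univ.filter (fun pq : Fin m × Fin n => B pq.1 pq.2 = -1)
        = (Finset.univ.filter (fun pq : Fin m × Fin n => A pq.1 pq.2 = -1)).erase (i, j) := by
      ext ⟨p, q⟩
      simp only [Finset.mem_filter, Finset.mem_erase, Finset.mem_univ, true_and]
      constructor
      · intro h
        by_cases h1 : p = k ∧ q = l
        · rw [h1.1, h1.2, hBkl] at h; exact absurd h (by norm_num)
        · by_cases h2 : p = i ∧ q = j
          · rw [h2.1, h2.2, hBij] at h; exact absurd h (by norm_num)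
          · by_cases h3 : p = k ∧ q = j
            · rw [h3.1, h3.2, hBkj] at h; exact absurd h (by norm_num)
            · by_cases h4 : p = i ∧ q = l
              · rw [h4.1, h4.2, hBil] at h; exact absurd h (by norm_num)
              · rw [hBoff p q h1 h2 h3 h4] at h
                exact ⟨fun hp => h2 ⟨(Prod.ext_iff.mp hp).1, (Prod.ext_iff.mp hp).2⟩, h⟩
      · rintro ⟨hne, hA1⟩
        by_cases h1 : p = k ∧ q = l
        · rw [h1.1, h1.2, hAkl] at hA1; exact absurd hA1 (by norm_num)
        · by_cases h2 : p = i ∧ q = j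
          · exact absurd (Prod.ext_iff.mpr ⟨h2.1, h2.2⟩) hne
          · by_cases h3 : p = k ∧ q = j
            · rw [h3.1, h3.2, hAkj] at hA1; exact absurd hA1 (by norm_num)
            · by_cases h4 : p = i ∧ q = l
              · rw [h4.1, h4.2, hAil] at hA1; exact absurd hA1 (by norm_num)
              · rw [hBoff p q h1 h2 h3 h4]; exact hA1
    rw [hfe]
    have hmem : (i, j) ∈ Finset.univ.filter (fun pq : Fin m × Fin n => A pq.1 pq.2 = -1) := by
      simp [hij]
    rw [Finset.card_erase_of_mem hmem]
    have hle : 1 ≤ (Finset.univ.filter (fun pq : Fin m × Fin n => A pq.1 pq.2 = -1)).card :=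
      Finset.card_pos.mpr ⟨(i, j), hmem⟩
    omega
  exact ⟨hSRM, hrowsum, hcolsum, hcard⟩
end

section
/- For any m × n sign-restricted matrix A there exists a finite sequence of sign-restricted matrices A = A^(1), A^(2), ..., A^(k), each obtained from the previous by an interchange, such that A^(k) is a (0,1)-matrix with the same row sum vector and column sum vector as A. -/
open Finset

/-- An interchange: add or subtract E = [[1,-1],[-1,1]] in a 2×2 submatrix. -/
def Interchange {m n : ℕ} (A B : Matrix (Fin m) (Fin n) ℤ) : Prop :=
  ∃ (i i' : Fin m) (j j' : Fin n) (ε : ℤ), i ≠ i' ∧ j ≠ j' ∧ (ε = 1 ∨ ε = -1) ∧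
    B = fun p q => A p q + ε *
      ((if p = i ∧ q = j then 1 else 0) - (if p = i ∧ q = j' then 1 else 0)
        - (if p = i' ∧ q = j then 1 else 0) + (if p = i' ∧ q = j' then 1 else 0))

def negCount {m n : ℕ} (A : Matrix (Fin m) (Fin n) ℤ) : ℕ :=
  ((Finset.univ : Finset (Fin m × Fin n)).filter (fun pq => A pq.1 pq.2 = -1)).card

lemma sum_Iic_split {m : ℕ} (f : Fin m → ℤ) {k i : Fin m} (h : k ≤ i) :
    ∑ x ∈ Iic i, f x = ∑ x ∈ Iic k, f x + ∑ x ∈ Ioc k i, f x := by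
  rw [← Finset.sum_union (by simp [Finset.disjoint_left]; intro a h1 h2; exact absurd h1 (not_le.2 h2))]
  congr 1
  ext x
  simp only [Finset.mem_union, Finset.mem_Iic, Finset.mem_Ioc, Fin.le_def, Fin.lt_def] at *
  omega

lemma sum_Iio_split {m : ℕ} (f : Fin m → ℤ) {k i : Fin m} (h : k < i) :
    ∑ x ∈ Iio i, f x = ∑ x ∈ Iic k, f x + ∑ x ∈ Ioo k i, f x := by
  rw [← Finset.sum_union (by simp [Finset.disjoint_left]; intro a h1 h2; exact absurd h1 (not_le.2 h2))]
  congr 1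
  ext x
  simp only [Finset.mem_union, Finset.mem_Iic, Finset.mem_Iio, Finset.mem_Ioo, Fin.le_def, Fin.lt_def] at *
  omega

lemma sum_Iic_eq_s8 {m : ℕ} (f : Fin m → ℤ) (i : Fin m) :
    ∑ x ∈ Iic i, f x = ∑ x ∈ Iio i, f x + f i := by
  rw [← Finset.Iio_insert, Finset.sum_insert (by simp)]; ring


lemma reduce {m n : ℕ} (A : Matrix (Fin m) (Fin n) ℤ) (hA : IsSRM A)
    (hneg : ∃ p q, A p q = -1) :
    ∃ B, Interchange A B ∧ IsSRM B ∧ negCount B < negCount A := by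
  classical
  obtain ⟨hE, hC, hR⟩ := hA
  obtain ⟨p0, q0, hpq0⟩ := hneg
  -- minimal row containing a -1
  obtain ⟨i0, ⟨j0, hj0⟩, hi0min⟩ :
      ∃ i0 : Fin m, (∃ q, A i0 q = -1) ∧ ∀ p, (∃ q, A p q = -1) → i0 ≤ p := by
    let s : Finset (Fin m) := Finset.univ.filter fun p => ∃ q, A p q = -1
    have hne : s.Nonempty :=
      ⟨p0, by simp only [s, Finset.mem_filter, Finset.mem_univ, true_and]; exact ⟨q0, hpq0⟩⟩
    refine ⟨s.min' hne, ?_, ?_⟩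
    · have := s.min'_mem hne
      simpa only [s, Finset.mem_filter, Finset.mem_univ, true_and] using this
    · intro p hp
      exact s.min'_le p (by simp only [s, Finset.mem_filter, Finset.mem_univ, true_and]; exact hp)
  have htop : ∀ p, p < i0 → ∀ q, A p q ≠ -1 := by
    intro p hp q hq
    exact absurd (hi0min p ⟨q, hq⟩) (not_le.2 hp)
  have hnn : ∀ p, p < i0 → ∀ q, 0 ≤ A p q := by
    intro p hp q
    rcases hE p q with h | h | h
    · omega
    · omega
    · exact absurd h (htop p hp q)
  -- column j0: partial sum strictly above i0 is at least 1
  have hT : (1:ℤ) ≤ ∑ k ∈ Iio i0, A k j0 := by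
    have h1 := hC i0 j0
    have h2 : ∑ x ∈ Iic i0, A x j0 = ∑ x ∈ Iio i0, A x j0 + A i0 j0 := sum_Iic_eq_s8 _ _
    omega
  have hex1 : ∃ p, p < i0 ∧ A p j0 = 1 := by
    by_contra hcon
    push_neg at hcon
    have : ∑ k ∈ Iio i0, A k j0 ≤ 0 := by
      apply Finset.sum_nonpos
      intro k hk
      have hk' : k < i0 := Finset.mem_Iio.1 hk
      rcases hE k j0 with h | h | h
      · omega
      · exact absurd h (hcon k hk')
      · omega
    omega
  obtain ⟨i1, ⟨hi1lt, hi1val⟩, hi1max⟩ :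
      ∃ i1 : Fin m, (i1 < i0 ∧ A i1 j0 = 1) ∧ ∀ p, p < i0 → A p j0 = 1 → p ≤ i1 := by
    let s : Finset (Fin m) := Finset.univ.filter fun p => p < i0 ∧ A p j0 = 1
    have hne : s.Nonempty := by
      obtain ⟨p, hp, hp1⟩ := hex1
      exact ⟨p, by simp only [s, Finset.mem_filter, Finset.mem_univ, true_and]; exact ⟨hp, hp1⟩⟩
    refine ⟨s.max' hne, ?_, ?_⟩
    · have := s.max'_mem hne
      simpa only [s, Finset.mem_filter, Finset.mem_univ, true_and] using this
    · intro p h1 h2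
      exact s.le_max' p (by simp only [s, Finset.mem_filter, Finset.mem_univ, true_and]; exact ⟨h1, h2⟩)
  have hmid : ∀ k, i1 < k → k < i0 → A k j0 = 0 := by
    intro k h1 h2
    rcases hE k j0 with h | h | h
    · exact h
    · exact absurd (hi1max k h2 h) (not_le.2 h1)
    · exact absurd h (htop k h2 j0)
  have hS1 : ∑ x ∈ Iic i1, A x j0 = 1 := by
    have h2 : ∑ x ∈ Iic i1, A x j0 = ∑ x ∈ Iio i1, A x j0 + A i1 j0 := sum_Iic_eq_s8 _ _
    have h3 : 0 ≤ ∑ x ∈ Iio i1, A x j0 :=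
      Finset.sum_nonneg fun k hk => hnn k (lt_trans (Finset.mem_Iio.1 hk) hi1lt) j0
    have h4 := hC i1 j0
    omega
  have hSone : ∀ k, i1 ≤ k → k < i0 → ∑ x ∈ Iic k, A x j0 = 1 := by
    intro k h1 h2
    have hsp : ∑ x ∈ Iic k, A x j0 = ∑ x ∈ Iic i1, A x j0 + ∑ x ∈ Ioc i1 k, A x j0 :=
      sum_Iic_split _ h1
    have hz : ∑ x ∈ Ioc i1 k, A x j0 = 0 := by
      apply Finset.sum_eq_zero
      intro x hx
      have hx' := Finset.mem_Ioc.1 hx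
      exact hmid x hx'.1 (lt_of_le_of_lt hx'.2 h2)
    omega
  -- row i0: there is a 1 to the left of j0
  have hU : (1:ℤ) ≤ ∑ c ∈ Iio j0, A i0 c := by
    have h1 := hR i0 j0
    have h2 : ∑ c ∈ Iic j0, A i0 c = ∑ c ∈ Iio j0, A i0 c + A i0 j0 := sum_Iic_eq_s8 _ _
    omega
  have hex2 : ∃ q, q < j0 ∧ A i0 q = 1 := by
    by_contra hcon
    push_neg at hcon
    have : ∑ c ∈ Iio j0, A i0 c ≤ 0 := by
      apply Finset.sum_nonpos
      intro c hc
      have hc' : c < j0 := Finset.mem_Iio.1 hc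
      rcases hE i0 c with h | h | h
      · omega
      · exact absurd h (hcon c hc')
      · omega
    omega
  obtain ⟨j1, ⟨hj1lt, hj1val⟩, hj1max⟩ :
      ∃ j1 : Fin n, (j1 < j0 ∧ A i0 j1 = 1) ∧ ∀ q, q < j0 → A i0 q = 1 → q ≤ j1 := by
    let s : Finset (Fin n) := Finset.univ.filter fun q => q < j0 ∧ A i0 q = 1
    have hne : s.Nonempty := by
      obtain ⟨q, hq, hq1⟩ := hex2
      exact ⟨q, by simp only [s, Finset.mem_filter, Finset.mem_univ, true_and]; exact ⟨hq, hq1⟩⟩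
    refine ⟨s.max' hne, ?_, ?_⟩
    · have := s.max'_mem hne
      simpa only [s, Finset.mem_filter, Finset.mem_univ, true_and] using this
    · intro q h1 h2
      exact s.le_max' q (by simp only [s, Finset.mem_filter, Finset.mem_univ, true_and]; exact ⟨h1, h2⟩)
  have hrmid : ∀ c, j1 < c → c < j0 → A i0 c ≤ 0 := by
    intro c h1 h2
    rcases hE i0 c with h | h | h
    · omega
    · exact absurd (hj1max c h2 h) (not_le.2 h1)
    · omega
  have hRow : ∀ l, j1 ≤ l → l < j0 → 1 ≤ ∑ c ∈ Iic l, A i0 c := by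
    intro l h1 h2
    have hsp : ∑ c ∈ Iio j0, A i0 c = ∑ c ∈ Iic l, A i0 c + ∑ c ∈ Ioo l j0, A i0 c :=
      sum_Iio_split _ h2
    have hz : ∑ c ∈ Ioo l j0, A i0 c ≤ 0 := by
      apply Finset.sum_nonpos
      intro c hc
      have hc' := Finset.mem_Ioo.1 hc
      exact hrmid c (lt_of_le_of_lt h1 hc'.1) hc'.2
    omega
  -- column j1: partial sums vanish above i0
  have hS'zero : ∀ k, k < i0 → ∑ x ∈ Iic k, A x j1 = 0 := by
    intro k hk
    have h1 : ∑ x ∈ Iic i0, A x j1 = ∑ x ∈ Iio i0, A x j1 + A i0 j1 := sum_Iic_eq_s8 _ _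
    have h2 := hC i0 j1
    have hsp : ∑ x ∈ Iio i0, A x j1 = ∑ x ∈ Iic k, A x j1 + ∑ x ∈ Ioo k i0, A x j1 :=
      sum_Iio_split _ hk
    have hge : 0 ≤ ∑ x ∈ Ioo k i0, A x j1 :=
      Finset.sum_nonneg fun c hc => hnn c (Finset.mem_Ioo.1 hc).2 j1
    have h4 := hC k j1
    omega
  have hA11 : A i1 j1 = 0 := by
    have h2 : ∑ x ∈ Iic i1, A x j1 = ∑ x ∈ Iio i1, A x j1 + A i1 j1 := sum_Iic_eq_s8 _ _
    have h3 : 0 ≤ ∑ x ∈ Iio i1, A x j1 :=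
      Finset.sum_nonneg fun k hk => hnn k (lt_trans (Finset.mem_Iio.1 hk) hi1lt) j1
    have h4 := hS'zero i1 hi1lt
    have h5 := hnn i1 hi1lt j1
    omega
  have hne_i : i1 ≠ i0 := ne_of_lt hi1lt
  have hne_i' : i0 ≠ i1 := Ne.symm hne_i
  have hne_j : j1 ≠ j0 := ne_of_lt hj1lt
  have hne_j' : j0 ≠ j1 := Ne.symm hne_j
  -- the interchanged matrix, kept opaque
  obtain ⟨B, hBeq⟩ :
      ∃ B : Matrix (Fin m) (Fin n) ℤ, ∀ p q, B p q = A p q +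
        (((if p = i0 ∧ q = j0 then 1 else 0) - (if p = i1 ∧ q = j0 then 1 else 0))
          + ((if p = i1 ∧ q = j1 then 1 else 0) - (if p = i0 ∧ q = j1 then 1 else 0))) :=
    ⟨_, fun p q => rfl⟩
  have hB10 : B i1 j0 = 0 := by rw [hBeq]; simp [hne_i, hne_j', hi1val]
  have hB11 : B i1 j1 = 1 := by rw [hBeq]; simp [hne_i, hne_j, hA11]
  have hB00 : B i0 j0 = 0 := by rw [hBeq]; simp [hne_i', hne_j', hj0]
  have hB01 : B i0 j1 = 0 := by rw [hBeq]; simp [hne_i', hne_j, hj1val]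
  have hBoth : ∀ p q, (p ≠ i1 ∨ (q ≠ j0 ∧ q ≠ j1)) → (p ≠ i0 ∨ (q ≠ j0 ∧ q ≠ j1)) →
      B p q = A p q := by
    intro p q h1 h2
    rw [hBeq]
    rcases eq_or_ne p i1 with rfl | hp1
    · rcases h1 with h | ⟨h, h'⟩
      · exact absurd rfl h
      · simp [h, h', hne_i]
    · rcases eq_or_ne p i0 with rfl | hp0
      · rcases h2 with h | ⟨h, h'⟩
        · exact absurd rfl h
        · simp [h, h', hp1]
      · simp [hp1, hp0]
  refine ⟨B, ⟨i1, i0, j0, j1, -1, hne_i, hne_j', Or.inr rfl, ?_⟩, ⟨?_, ?_, ?_⟩, ?_⟩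
  · funext p q
    rw [hBeq]
    ring
  -- entries in {0,1,-1}
  · intro p q
    rcases eq_or_ne p i1 with rfl | hp1
    · rcases eq_or_ne q j0 with rfl | hq0
      · rw [hB10]; tauto
      · rcases eq_or_ne q j1 with rfl | hq1
        · rw [hB11]; tauto
        · rw [hBoth _ _ (Or.inr ⟨hq0, hq1⟩) (Or.inl hne_i)]; exact hE _ _
    · rcases eq_or_ne p i0 with rfl | hp0
      · rcases eq_or_ne q j0 with rfl | hq0
        · rw [hB00]; tauto
        · rcases eq_or_ne q j1 with rfl | hq1
          · rw [hB01]; tauto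
          · rw [hBoth _ _ (Or.inl hp1) (Or.inr ⟨hq0, hq1⟩)]; exact hE _ _
      · rw [hBoth _ _ (Or.inl hp1) (Or.inl hp0)]; exact hE _ _
  -- column partial sums
  · intro i j
    rcases eq_or_ne j j0 with h | hjj0
    · rw [h]
      have hsum : ∑ k ∈ Iic i, B k j0 = ∑ k ∈ Iic i, A k j0
          + ((if i0 ∈ Iic i then (1:ℤ) else 0) - (if i1 ∈ Iic i then 1 else 0)) := by
        have e : ∀ k ∈ Iic i, B k j0 =
            A k j0 + ((if k = i0 then (1:ℤ) else 0) - (if k = i1 then 1 else 0)) := by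
          intro k _
          rw [hBeq]
          simp [hne_j']
        rw [Finset.sum_congr rfl e, Finset.sum_add_distrib, Finset.sum_sub_distrib,
          Finset.sum_ite_eq', Finset.sum_ite_eq']
      rw [hsum]
      simp only [Finset.mem_Iic]
      rcases le_or_gt i0 i with h0 | h0
      · rw [if_pos h0, if_pos (le_of_lt (lt_of_lt_of_le hi1lt h0))]
        have := hC i j0
        omega
      · rcases le_or_gt i1 i with h1 | h1
        · rw [if_neg (not_le.2 h0), if_pos h1]
          have := hSone i h1 h0
          omega
        · rw [if_neg (not_le.2 h0), if_neg (not_le.2 h1)]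
          have := hC i j0
          omega
    · rcases eq_or_ne j j1 with h | hjj1
      · rw [h]
        have hsum : ∑ k ∈ Iic i, B k j1 = ∑ k ∈ Iic i, A k j1
            + ((if i1 ∈ Iic i then (1:ℤ) else 0) - (if i0 ∈ Iic i then 1 else 0)) := by
          have e : ∀ k ∈ Iic i, B k j1 =
              A k j1 + ((if k = i1 then (1:ℤ) else 0) - (if k = i0 then 1 else 0)) := by
            intro k _
            rw [hBeq]
            simp [hne_j]
          rw [Finset.sum_congr rfl e, Finset.sum_add_distrib, Finset.sum_sub_distrib,
            Finset.sum_ite_eq', Finset.sum_ite_eq']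
        rw [hsum]
        simp only [Finset.mem_Iic]
        rcases le_or_gt i0 i with h0 | h0
        · rw [if_pos h0, if_pos (le_of_lt (lt_of_lt_of_le hi1lt h0))]
          have := hC i j1
          omega
        · rcases le_or_gt i1 i with h1 | h1
          · rw [if_neg (not_le.2 h0), if_pos h1]
            have := hS'zero i h0
            omega
          · rw [if_neg (not_le.2 h0), if_neg (not_le.2 h1)]
            have := hC i j1
            omega
      · have e : ∀ k ∈ Iic i, B k j = A k j := by
          intro k _
          rw [hBeq]
          simp [hjj0, hjj1]
        rw [Finset.sum_congr rfl e]
        exact hC i j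
  -- row partial sums
  · intro i j
    rcases eq_or_ne i i1 with h | hii1
    · rw [h]
      have hsum : ∑ l ∈ Iic j, B i1 l = ∑ l ∈ Iic j, A i1 l
          + ((if j1 ∈ Iic j then (1:ℤ) else 0) - (if j0 ∈ Iic j then 1 else 0)) := by
        have e : ∀ l ∈ Iic j, B i1 l =
            A i1 l + ((if l = j1 then (1:ℤ) else 0) - (if l = j0 then 1 else 0)) := by
          intro l _
          rw [hBeq]
          simp [hne_i]
          ring
        rw [Finset.sum_congr rfl e, Finset.sum_add_distrib, Finset.sum_sub_distrib,
          Finset.sum_ite_eq', Finset.sum_ite_eq']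
      rw [hsum]
      simp only [Finset.mem_Iic]
      rcases le_or_gt j0 j with h0 | h0
      · rw [if_pos h0, if_pos (le_of_lt (lt_of_lt_of_le hj1lt h0))]
        have := hR i1 j
        omega
      · rcases le_or_gt j1 j with h1 | h1
        · rw [if_neg (not_le.2 h0), if_pos h1]
          have := hR i1 j
          omega
        · rw [if_neg (not_le.2 h0), if_neg (not_le.2 h1)]
          have := hR i1 j
          omega
    · rcases eq_or_ne i i0 with h | hii0
      · rw [h]
        have hsum : ∑ l ∈ Iic j, B i0 l = ∑ l ∈ Iic j, A i0 l
            + ((if j0 ∈ Iic j then (1:ℤ) else 0) - (if j1 ∈ Iic j then 1 else 0)) := by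
          have e : ∀ l ∈ Iic j, B i0 l =
              A i0 l + ((if l = j0 then (1:ℤ) else 0) - (if l = j1 then 1 else 0)) := by
            intro l _
            rw [hBeq]
            simp [hne_i']
            ring
          rw [Finset.sum_congr rfl e, Finset.sum_add_distrib, Finset.sum_sub_distrib,
            Finset.sum_ite_eq', Finset.sum_ite_eq']
        rw [hsum]
        simp only [Finset.mem_Iic]
        rcases le_or_gt j0 j with h0 | h0
        · rw [if_pos h0, if_pos (le_of_lt (lt_of_lt_of_le hj1lt h0))]
          have := hR i0 j
          omega
        · rcases le_or_gt j1 j with h1 | h1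
          · rw [if_neg (not_le.2 h0), if_pos h1]
            have := hRow j h1 h0
            omega
          · rw [if_neg (not_le.2 h0), if_neg (not_le.2 h1)]
            have := hR i0 j
            omega
      · have e : ∀ l ∈ Iic j, B i l = A i l := by
          intro l _
          rw [hBeq]
          simp [hii1, hii0]
        rw [Finset.sum_congr rfl e]
        exact hR i j
  -- negCount decreases
  · apply Finset.card_lt_card
    constructor
    · intro x hx
      simp only [Finset.mem_filter, Finset.mem_univ, true_and] at hx ⊢
      obtain ⟨p, q⟩ := x
      simp only at hx ⊢
      rcases eq_or_ne p i1 with rfl | hp1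
      · rcases eq_or_ne q j0 with rfl | hq0
        · rw [hB10] at hx; omega
        · rcases eq_or_ne q j1 with rfl | hq1
          · rw [hB11] at hx; omega
          · rwa [hBoth _ _ (Or.inr ⟨hq0, hq1⟩) (Or.inl hne_i)] at hx
      · rcases eq_or_ne p i0 with rfl | hp0
        · rcases eq_or_ne q j0 with rfl | hq0
          · rw [hB00] at hx; omega
          · rcases eq_or_ne q j1 with rfl | hq1
            · rw [hB01] at hx; omega
            · rwa [hBoth _ _ (Or.inl hp1) (Or.inr ⟨hq0, hq1⟩)] at hx
        · rwa [hBoth _ _ (Or.inl hp1) (Or.inl hp0)] at hx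
    · intro hall
      have h1 : (i0, j0) ∈ (Finset.univ : Finset (Fin m × Fin n)).filter
          (fun pq => A pq.1 pq.2 = -1) := by
        simp only [Finset.mem_filter, Finset.mem_univ, true_and]
        exact hj0
      have h2 := hall h1
      simp only [Finset.mem_filter, Finset.mem_univ, true_and] at h2
      rw [hB00] at h2
      omega

lemma interchange_rowSum {m n : ℕ} {A B : Matrix (Fin m) (Fin n) ℤ}
    (h : Interchange A B) (x : Fin m) : ∑ q, B x q = ∑ q, A x q := by
  obtain ⟨i, i', j, j', ε, hii, hjj, hε, rfl⟩ := h
  rw [Finset.sum_add_distrib]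
  have : ∑ q, ε * ((if x = i ∧ q = j then (1:ℤ) else 0) - (if x = i ∧ q = j' then 1 else 0)
      - (if x = i' ∧ q = j then 1 else 0) + (if x = i' ∧ q = j' then 1 else 0)) = 0 := by
    rw [← Finset.mul_sum]
    rcases eq_or_ne x i with rfl | hxi
    · simp [hii, Ne.symm hii, Finset.sum_add_distrib, Finset.sum_sub_distrib,
        Finset.sum_ite_eq']
    · rcases eq_or_ne x i' with rfl | hxi'
      · simp [hxi, Finset.sum_add_distrib, Finset.sum_sub_distrib, Finset.sum_ite_eq']
      · simp [hxi, hxi']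
  rw [this, add_zero]

lemma interchange_colSum {m n : ℕ} {A B : Matrix (Fin m) (Fin n) ℤ}
    (h : Interchange A B) (y : Fin n) : ∑ p, B p y = ∑ p, A p y := by
  obtain ⟨i, i', j, j', ε, hii, hjj, hε, rfl⟩ := h
  rw [Finset.sum_add_distrib]
  have : ∑ p, ε * ((if p = i ∧ y = j then (1:ℤ) else 0) - (if p = i ∧ y = j' then 1 else 0)
      - (if p = i' ∧ y = j then 1 else 0) + (if p = i' ∧ y = j' then 1 else 0)) = 0 := by
    rw [← Finset.mul_sum]
    rcases eq_or_ne y j with rfl | hyj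
    · simp [hjj, Ne.symm hjj, Finset.sum_add_distrib, Finset.sum_sub_distrib,
        Finset.sum_ite_eq']
    · rcases eq_or_ne y j' with rfl | hyj'
      · simp [hyj, Finset.sum_add_distrib, Finset.sum_sub_distrib, Finset.sum_ite_eq']
      · simp [hyj, hyj']
  rw [this, add_zero]

lemma key {m n : ℕ} : ∀ (N : ℕ) (A : Matrix (Fin m) (Fin n) ℤ), IsSRM A → negCount A ≤ N →
    ∃ (k : ℕ) (F : Fin (k + 1) → Matrix (Fin m) (Fin n) ℤ),
      F 0 = A ∧
      (∀ t, IsSRM (F t)) ∧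
      (∀ t : Fin k, Interchange (F t.castSucc) (F t.succ)) ∧
      (∀ i j, F (Fin.last k) i j = 0 ∨ F (Fin.last k) i j = 1) ∧
      (∀ i, ∑ j, F (Fin.last k) i j = ∑ j, A i j) ∧
      (∀ j, ∑ i, F (Fin.last k) i j = ∑ i, A i j) := by
  intro N
  induction N with
  | zero =>
    intro A hA hcount
    have hzero : negCount A = 0 := Nat.le_zero.1 hcount
    have hno : ∀ p q, A p q ≠ -1 := by
      intro p q hpq
      have : (p, q) ∈ (Finset.univ : Finset (Fin m × Fin n)).filter
          (fun pq => A pq.1 pq.2 = -1) := by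
        simp only [Finset.mem_filter, Finset.mem_univ, true_and]
        exact hpq
      have := Finset.card_pos.2 ⟨_, this⟩
      simp only [negCount] at hzero
      omega
    refine ⟨0, fun _ => A, rfl, fun _ => hA, fun t => t.elim0, ?_, fun _ => rfl, fun _ => rfl⟩
    intro i j
    rcases hA.1 i j with h | h | h
    · exact Or.inl h
    · exact Or.inr h
    · exact absurd h (hno i j)
  | succ N ih =>
    intro A hA hcount
    by_cases hneg : ∃ p q, A p q = -1
    · obtain ⟨B, hAB, hB, hlt⟩ := reduce A hA hneg
      have hBc : negCount B ≤ N := by omega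
      obtain ⟨k, F, h0, hsrm, hint, h01, hrs, hcs⟩ := ih B hB hBc
      refine ⟨k + 1, Fin.cons A F, Fin.cons_zero _ _, ?_, ?_, ?_, ?_, ?_⟩
      · intro t
        induction t using Fin.cases with
        | zero => simpa using hA
        | succ s => simpa using hsrm s
      · intro t
        induction t using Fin.cases with
        | zero =>
          have e1 : (Fin.cons A F : Fin (k + 2) → Matrix (Fin m) (Fin n) ℤ)
              ((0 : Fin (k + 1)).castSucc) = A := by
            simp
          have e2 : (Fin.cons A F : Fin (k + 2) → Matrix (Fin m) (Fin n) ℤ)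
              ((0 : Fin (k + 1)).succ) = B := by
            rw [Fin.cons_succ, h0]
          rw [e1, e2]
          exact hAB
        | succ s =>
          have e1 : (Fin.cons A F : Fin (k + 2) → Matrix (Fin m) (Fin n) ℤ)
              ((s.succ).castSucc) = F s.castSucc := by
            rw [← Fin.succ_castSucc, Fin.cons_succ]
          have e2 : (Fin.cons A F : Fin (k + 2) → Matrix (Fin m) (Fin n) ℤ)
              ((s.succ).succ) = F s.succ := by
            rw [Fin.cons_succ]
          rw [e1, e2]
          exact hint s
      · intro i j
        have e : (Fin.cons A F : Fin (k + 2) → Matrix (Fin m) (Fin n) ℤ)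
            (Fin.last (k + 1)) = F (Fin.last k) := by
          rw [← Fin.succ_last, Fin.cons_succ]
        rw [e]
        exact h01 i j
      · intro i
        have e : (Fin.cons A F : Fin (k + 2) → Matrix (Fin m) (Fin n) ℤ)
            (Fin.last (k + 1)) = F (Fin.last k) := by
          rw [← Fin.succ_last, Fin.cons_succ]
        rw [e, hrs i, interchange_rowSum hAB i]
      · intro j
        have e : (Fin.cons A F : Fin (k + 2) → Matrix (Fin m) (Fin n) ℤ)
            (Fin.last (k + 1)) = F (Fin.last k) := by
          rw [← Fin.succ_last, Fin.cons_succ]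
        rw [e, hcs j, interchange_colSum hAB j]
    · push_neg at hneg
      refine ⟨0, fun _ => A, rfl, fun _ => hA, fun t => t.elim0, ?_, fun _ => rfl, fun _ => rfl⟩
      intro i j
      rcases hA.1 i j with h | h | h
      · exact Or.inl h
      · exact Or.inr h
      · exact absurd h (hneg i j)

/-- any SRM can be transformed by a sequence of interchanges, through SRMs,
into a (0,1)-matrix with the same row and column sums. -/
theorem stmt8 (m n : ℕ) (A : Matrix (Fin m) (Fin n) ℤ) (hA : IsSRM A) :
    ∃ (k : ℕ) (F : Fin (k + 1) → Matrix (Fin m) (Fin n) ℤ),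
      F 0 = A ∧
      (∀ t, IsSRM (F t)) ∧
      (∀ t : Fin k, Interchange (F t.castSucc) (F t.succ)) ∧
      (∀ i j, F (Fin.last k) i j = 0 ∨ F (Fin.last k) i j = 1) ∧
      (∀ i, ∑ j, F (Fin.last k) i j = ∑ j, A i j) ∧
      (∀ j, ∑ i, F (Fin.last k) i j = ∑ i, A i j) := by
  exact key (negCount A) A hA le_rfl
end

section
/- Let M(S) be the generalized incidence matrix associated with a directed graph D = (V,E) having at least one edge and a subset S ⊆ V. If the rows and columns of M(S) can be ordered so that the resulting matrix is a sign-restricted matrix, then D is acyclic, d⁻(v) − d⁺(v) ≤ 1 for every vertex v, and every vertex v with d⁻(v) = d⁺(v) + 1 belongs to S. -/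
open Finset

/-- if the generalized incidence matrix M(S) of a loopless digraph D with at
least one edge can have its rows and columns reordered to form an SRM, then D is acyclic,
d⁻(v) − d⁺(v) ≤ 1 for every vertex v, and d⁻(v) = d⁺(v) + 1 implies v ∈ S. -/
theorem stmt9 (v e : ℕ) (he : 0 < e) (E : Fin e → Fin v × Fin v)
    (hloopless : ∀ a, (E a).1 ≠ (E a).2) (S : Finset (Fin v))
    (M : Matrix (Fin v) ({u // u ∈ S} ⊕ Fin e) ℤ)
    (hMS : ∀ u (w : {u // u ∈ S}), M u (Sum.inl w) = if u = w.1 then 1 else 0)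
    (hME : ∀ u a, M u (Sum.inr a) =
      (if u = (E a).1 then 1 else 0) - (if u = (E a).2 then 1 else 0))
    (N : ℕ) (g : ({u // u ∈ S} ⊕ Fin e) ≃ Fin N) (f : Fin v ≃ Fin v)
    (hSRM : IsSRM (fun i j => M (f i) (g.symm j))) :
    (¬ ∃ (k : ℕ) (c : ℕ → Fin v) (ed : ℕ → Fin e), 0 < k ∧
        (∀ i < k, E (ed i) = (c i, c (i + 1))) ∧ c k = c 0) ∧
    (∀ u : Fin v,
      ((Finset.univ.filter (fun a => (E a).2 = u)).card : ℤ) -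
        ((Finset.univ.filter (fun a => (E a).1 = u)).card : ℤ) ≤ 1 ∧
      ((Finset.univ.filter (fun a => (E a).2 = u)).card =
        (Finset.univ.filter (fun a => (E a).1 = u)).card + 1 → u ∈ S)) := by

  obtain ⟨hent, hcol, hrow⟩ := hSRM
  -- Each edge's tail precedes its head in the row ordering
  have hedge : ∀ a : Fin e, f.symm (E a).1 < f.symm (E a).2 := by
    intro a
    by_contra h
    push_neg at h
    have hne : f.symm (E a).2 ≠ f.symm (E a).1 := by
      intro hh
      exact hloopless a (by simpa using (congrArg f hh).symm)
    have hlt : f.symm (E a).2 < f.symm (E a).1 := lt_of_le_of_ne h hne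
    have hc := hcol (f.symm (E a).2) (g (Sum.inr a))
    have hsum : (∑ k ∈ Finset.Iic (f.symm (E a).2),
        M (f k) (g.symm (g (Sum.inr a)))) = -1 := by
      simp only [Equiv.symm_apply_apply, hME]
      rw [Finset.sum_sub_distrib]
      have h1 : (∑ k ∈ Finset.Iic (f.symm (E a).2),
          (if f k = (E a).1 then (1:ℤ) else 0)) = 0 := by
        have : ∀ k : Fin v, (f k = (E a).1) = (k = f.symm (E a).1) := by
          intro k
          simp [Equiv.apply_eq_iff_eq_symm_apply]
        simp only [this]
        rw [Finset.sum_ite_eq']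
        simp [Finset.mem_Iic, hlt.not_ge]
      have h2 : (∑ k ∈ Finset.Iic (f.symm (E a).2),
          (if f k = (E a).2 then (1:ℤ) else 0)) = 1 := by
        have : ∀ k : Fin v, (f k = (E a).2) = (k = f.symm (E a).2) := by
          intro k
          simp [Equiv.apply_eq_iff_eq_symm_apply]
        simp only [this]
        rw [Finset.sum_ite_eq']
        simp
      rw [h1, h2]
      ring
    simp only [hsum] at hc
    omega
  -- Row-sum inequality
  have hpos : 0 < N := by
    have : Nonempty (Fin N) := ⟨g (Sum.inr ⟨0, he⟩)⟩
    exact Fin.pos_iff_nonempty.mpr this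
  have hrowfull : ∀ u : Fin v,
      0 ≤ (if u ∈ S then (1:ℤ) else 0)
        + ((Finset.univ.filter (fun a => (E a).1 = u)).card : ℤ)
        - ((Finset.univ.filter (fun a => (E a).2 = u)).card : ℤ) := by
    intro u
    have h := hrow (f.symm u) ⟨N - 1, by omega⟩
    have huniv : Finset.Iic (⟨N - 1, by omega⟩ : Fin N) = Finset.univ := by
      apply Finset.eq_univ_iff_forall.mpr
      intro k
      simp only [Finset.mem_Iic, Fin.le_def]
      omega
    rw [huniv] at h
    have hre : (∑ l : Fin N, M (f (f.symm u)) (g.symm l)) = ∑ c, M u c := by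
      rw [Equiv.apply_symm_apply]
      exact Equiv.sum_comp g.symm (M u)
    rw [hre] at h
    rw [Fintype.sum_sum_type] at h
    have hS : (∑ w : {x // x ∈ S}, M u (Sum.inl w)) = if u ∈ S then (1:ℤ) else 0 := by
      simp only [hMS]
      rw [Finset.sum_coe_sort S (fun w => if u = w then (1:ℤ) else 0), Finset.sum_ite_eq]
    have hE1 : (∑ a : Fin e, M u (Sum.inr a)) =
        ((Finset.univ.filter (fun a => (E a).1 = u)).card : ℤ)
        - ((Finset.univ.filter (fun a => (E a).2 = u)).card : ℤ) := by
      simp only [hME]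
      rw [Finset.sum_sub_distrib]
      congr 1
      · rw [Finset.sum_boole]
        simp [eq_comm]
      · rw [Finset.sum_boole]
        simp [eq_comm]
    rw [hS, hE1] at h
    linarith
  constructor
  · rintro ⟨k, c, ed, hk, hcyc, hcl⟩
    have key : ∀ i ≤ k, (f.symm (c 0) : ℕ) + i ≤ (f.symm (c i) : ℕ) := by
      intro i hi
      induction i with
      | zero => simp
      | succ n ih =>
        have h1 := ih (Nat.le_of_succ_le hi)
        have h2 := hedge (ed n)
        rw [hcyc n (by omega)] at h2
        simp only [Fin.lt_def] at h2
        omega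
    have hk2 := key k le_rfl
    rw [hcl] at hk2
    omega
  · intro u
    have h := hrowfull u
    by_cases hu : u ∈ S
    · simp only [hu, if_true] at h
      constructor
      · omega
      · intro _; exact hu
    · simp only [hu, if_false] at h
      constructor
      · omega
      · intro heq
        exfalso
        omega
end

section
/- Let R = (r_1,...,r_m) and S = (s_1,...,s_n) be nonnegative integral vectors with equal sums and S nonincreasing. The class of m × n (0,±1)-matrices with row sum vector R and column sum vector S is nonempty if and only if for every k = 1,...,n: s_1 + ... + s_k ≤ Σ_{i=1}^m min{r_i + n, 2k} − km. -/
open Finset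

namespace SRM10

variable {m n : ℕ}

/-- Entries in `[0,2]` and prescribed row sums. -/
def Ok (ρ : Fin m → ℤ) (B : Fin m → Fin n → ℤ) : Prop :=
  (∀ i j, 0 ≤ B i j ∧ B i j ≤ 2) ∧ ∀ i, ∑ j, B i j = ρ i

/-- One unit can be shifted from column `j` to column `j'`. -/
def Step (B : Fin m → Fin n → ℤ) (j j' : Fin n) : Prop :=
  ∃ r, 0 < B r j ∧ B r j' < 2

lemma dup_split {α : Type*} {x : α} {l : List α} (h : l.Duplicate x) :
    ∃ s t u, l = s ++ x :: (t ++ x :: u) := by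
  induction h with
  | cons_mem h =>
      obtain ⟨t, u, rfl⟩ := List.append_of_mem h
      exact ⟨[], t, u, rfl⟩
  | @cons_duplicate y l h ih =>
      obtain ⟨s, t, u, rfl⟩ := ih
      exact ⟨y :: s, t, u, rfl⟩

lemma chain'_shortcut {α : Type*} {R : α → α → Prop} {s t u : List α} {x : α}
    (hc : List.Chain' R (s ++ x :: (t ++ x :: u))) : List.Chain' R (s ++ x :: u) := by
  have h1 : s ++ x :: (t ++ x :: u) = s ++ ((x :: t) ++ (x :: u)) := by simp
  unfold List.Chain' at hc ⊢
  rw [h1, List.isChain_append] at hc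
  obtain ⟨hs, hmid, hlink⟩ := hc
  rw [List.isChain_append] at hmid
  rw [show s ++ x :: u = s ++ (x :: u) from rfl, List.isChain_append]
  refine ⟨hs, hmid.2.1, ?_⟩
  intro a ha y hy
  simp only [List.head?_cons, Option.mem_def, Option.some.injEq] at hy
  subst hy
  exact hlink a ha x (by simp)

lemma chain'_dedup {α : Type*} {R : α → α → Prop} :
    ∀ (L : ℕ) (l : List α), l.length ≤ L → l.Chain' R →
      ∃ l' : List α, l'.Nodup ∧ l'.Chain' R ∧ l'.head? = l.head? ∧ l'.getLast? = l.getLast? := by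
  intro L
  induction L with
  | zero =>
      intro l hl _
      have hnil : l = [] := List.length_eq_zero_iff.mp (Nat.le_zero.mp hl)
      subst hnil
      exact ⟨[], by simp [List.Chain', List.isChain_nil]⟩
  | succ L ih =>
      intro l hl hc
      by_cases hnd : l.Nodup
      · exact ⟨l, hnd, hc, rfl, rfl⟩
      · obtain ⟨x, hx⟩ := List.exists_duplicate_iff_not_nodup.mpr hnd
        obtain ⟨s, t, u, rfl⟩ := dup_split hx
        have hlen : (s ++ x :: u).length ≤ L := by
          simp only [List.length_append, List.length_cons] at hl ⊢
          omega
        obtain ⟨l', h1, h2, h3, h4⟩ := ih (s ++ x :: u) hlen (chain'_shortcut hc)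
        refine ⟨l', h1, h2, ?_, ?_⟩
        · rw [h3]; cases s <;> simp
        · rw [h4,
            show s ++ x :: (t ++ x :: u) = (s ++ x :: t) ++ (x :: u) from by simp,
            List.getLast?_append_of_ne_nil _ (List.cons_ne_nil x u),
            List.getLast?_append_of_ne_nil _ (List.cons_ne_nil x u)]

lemma moveChain (ρ : Fin m → ℤ) :
    ∀ (L : ℕ) (B : Fin m → Fin n → ℤ), Ok ρ B →
      ∀ (l : List (Fin n)) (j j' : Fin n), l.length ≤ L → l.Nodup →
        l.Chain' (Step B) → l.head? = some j → l.getLast? = some j' →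
        ∃ B', Ok ρ B' ∧ ∀ jj, (∑ i, B' i jj) =
          (∑ i, B i jj) - (if jj = j then 1 else 0) + (if jj = j' then 1 else 0) := by
  intro L
  induction L with
  | zero =>
      intro B _ l j j' hlen _ _ hhd _
      have hnil : l = [] := List.length_eq_zero_iff.mp (Nat.le_zero.mp hlen)
      subst hnil
      simp at hhd
  | succ L ih =>
      intro B hB l j j' hlen hnd hch hhd hlast
      cases l with
      | nil => simp at hhd
      | cons a l' =>
        have ha : j = a := by simpa using hhd.symm
        subst ha
        cases l' with
        | nil =>
            have hj' : j = j' := by simpa using hlast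
            subst hj'
            exact ⟨B, hB, fun jj => by ring⟩
        | cons j1 rest =>
            obtain ⟨⟨r, hr1, hr2⟩, hch'⟩ := List.isChain_cons_cons.mp hch
            have hnotin : j ∉ j1 :: rest := (List.nodup_cons.mp hnd).1
            have hnd' : (j1 :: rest).Nodup := (List.nodup_cons.mp hnd).2
            have hne : j ≠ j1 := fun h => hnotin (h ▸ List.mem_cons_self)
            set B1 : Fin m → Fin n → ℤ := fun i l =>
              B i l + (if i = r ∧ l = j1 then 1 else 0)
                - (if i = r ∧ l = j then 1 else 0) with hB1
            have hB1r : ∀ i, i ≠ r → ∀ l, B1 i l = B i l := by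
              intro i hi l; simp [hB1, hi]
            have entry_j : B1 r j = B r j - 1 := by simp [hB1, hne]
            have entry_j1 : B1 r j1 = B r j1 + 1 := by simp [hB1, Ne.symm hne]
            have entry_other : ∀ i l, l ≠ j → l ≠ j1 → B1 i l = B i l := by
              intro i l hl1 hl2; simp [hB1, hl1, hl2]
            have hOk1 : Ok ρ B1 := by
              constructor
              · intro i l
                rcases hB.1 i l with ⟨hl0, hl2⟩
                by_cases hi : i = r
                · subst hi
                  by_cases h1 : l = j
                  · subst h1; rw [entry_j]; omega
                  · by_cases h2 : l = j1
                    · subst h2; rw [entry_j1]; omega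
                    · rw [entry_other _ _ h1 h2]; omega
                · rw [hB1r i hi]; omega
              · intro i
                by_cases hi : i = r
                · have e : ∀ l, B1 i l
                      = B i l + (if l = j1 then (1:ℤ) else 0)
                        - (if l = j then (1:ℤ) else 0) := by
                    intro l; simp [hB1, hi]
                  rw [Finset.sum_congr rfl fun l _ => e l]
                  rw [Finset.sum_sub_distrib, Finset.sum_add_distrib,
                    Finset.sum_ite_eq' Finset.univ j1 (fun _ => (1:ℤ)),
                    Finset.sum_ite_eq' Finset.univ j (fun _ => (1:ℤ))]
                  simp [hB.2 i]
                · rw [Finset.sum_congr rfl fun l _ => hB1r i hi l]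
                  exact hB.2 i
            have hcol : ∀ jj, (∑ i, B1 i jj)
                = (∑ i, B i jj) + (if jj = j1 then 1 else 0)
                  - (if jj = j then 1 else 0) := by
              intro jj
              have e : ∀ i, B1 i jj = B i jj + (if i = r ∧ jj = j1 then (1:ℤ) else 0)
                  - (if i = r ∧ jj = j then (1:ℤ) else 0) := fun i => rfl
              have key : ∀ jjx : Fin n,
                  (∑ i : Fin m, if i = r ∧ jj = jjx then (1:ℤ) else 0)
                    = if jj = jjx then 1 else 0 := by
                intro jjx
                by_cases hP : jj = jjx
                · simp [hP, Finset.sum_ite_eq' Finset.univ r (fun _ => (1:ℤ))]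
                · simp [hP]
              rw [Finset.sum_congr rfl fun i _ => e i, Finset.sum_sub_distrib,
                Finset.sum_add_distrib, key j1, key j]
            have htrans : ∀ (ll : List (Fin n)), ll.Chain' (Step B) →
                (∀ x ∈ ll, x ≠ j) → (∀ x ∈ ll.tail, x ≠ j1) →
                ll.Chain' (Step B1) := by
              intro ll
              induction ll with
              | nil => intro _ _ _; exact List.isChain_nil
              | cons a ll2 ihl =>
                  intro hc hj hj1
                  cases ll2 with
                  | nil => simp [List.Chain', List.isChain_singleton]
                  | cons b ll3 =>
                      obtain ⟨⟨r2, hb1, hb2⟩, hc2⟩ := List.isChain_cons_cons.mp hc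
                      have haj : a ≠ j := hj a (List.mem_cons_self)
                      have hbj : b ≠ j := hj b (List.mem_cons_of_mem _ (List.mem_cons_self))
                      have hbj1 : b ≠ j1 := hj1 b (List.mem_cons_self)
                      refine List.isChain_cons_cons.mpr ⟨⟨r2, ?_, ?_⟩, ihl hc2
                        (fun x hx => hj x (List.mem_cons_of_mem _ hx))
                        (fun x hx => hj1 x (List.mem_cons_of_mem _ hx))⟩
                      · have ea : B1 r2 a = B r2 a + (if r2 = r ∧ a = j1 then 1 else 0) := by
                          simp [hB1, haj]
                        rw [ea]; split_ifs <;> omega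
                      · rw [entry_other r2 b hbj hbj1]; exact hb2
            have hch1 : (j1 :: rest).Chain' (Step B1) := by
              refine htrans _ hch' ?_ ?_
              · intro x hx hxj; exact hnotin (hxj ▸ hx)
              · intro x hx hxj1
                exact (List.nodup_cons.mp hnd').1 (hxj1 ▸ hx)
            have hlen' : (j1 :: rest).length ≤ L := by
              simp only [List.length_cons] at hlen ⊢; omega
            have hlast' : (j1 :: rest).getLast? = some j' := by
              rw [← List.getLast?_cons_cons (a := j)]; exact hlast
            obtain ⟨B2, hOk2, hc2⟩ := ih B1 hOk1 (j1 :: rest) j1 j' hlen' hnd' hch1 rfl hlast'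
            refine ⟨B2, hOk2, fun jj => ?_⟩
            rw [hc2 jj, hcol jj]
            ring

lemma realize (ρ : Fin m → ℤ) (c : Fin n → ℤ)
    (hcond : ∀ T : Finset (Fin n), ∑ j ∈ T, c j ≤ ∑ i, min (ρ i) (2 * (T.card : ℤ)))
    (hsum : ∑ i, ρ i = ∑ j, c j) :
    ∀ (N : ℕ) (B : Fin m → Fin n → ℤ), Ok ρ B →
      (∑ j, ((∑ i, B i j) - c j).natAbs) ≤ N →
      ∃ B', Ok ρ B' ∧ ∀ j, (∑ i, B' i j) = c j := by
  classical
  intro N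
  induction N with
  | zero =>
      intro B hB hN
      refine ⟨B, hB, fun j => ?_⟩
      have h0 : ∑ j, ((∑ i, B i j) - c j).natAbs = 0 := Nat.le_zero.mp hN
      have h1 : ((∑ i, B i j) - c j).natAbs = 0 := by
        have := Finset.sum_eq_zero_iff.mp h0 j (Finset.mem_univ j)
        exact this
      omega
  | succ N ih =>
      intro B hB hN
      have hsumd : ∑ j, ((∑ i, B i j) - c j) = 0 := by
        have h1 : ∑ j : Fin n, ∑ i, B i j = ∑ i, ∑ j, B i j := Finset.sum_comm
        have h2 : ∑ i, ∑ j, B i j = ∑ i, ρ i := Finset.sum_congr rfl fun i _ => hB.2 i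
        rw [Finset.sum_sub_distrib, h1, h2, hsum, sub_self]
      by_cases hzero : ∀ j, (∑ i, B i j) - c j = 0
      · exact ⟨B, hB, fun j => by have := hzero j; omega⟩
      · push_neg at hzero
        obtain ⟨j0, hj0⟩ := hzero
        have hsur : ∃ js, 0 < (∑ i, B i js) - c js := by
          by_contra h
          push_neg at h
          exact hj0 ((Finset.sum_eq_zero_iff_of_nonpos (fun j _ => h j)).mp hsumd j0
            (Finset.mem_univ j0))
        obtain ⟨js, hjs⟩ := hsur
        set RSf : Finset (Fin n) := Finset.univ.filter
          (fun jj => ∃ s, 0 < (∑ i, B i s) - c s ∧ Relation.ReflTransGen (Step B) s jj)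
          with hRSf
        by_cases hdef : ∃ j' ∈ RSf, (∑ i, B i j') - c j' < 0
        · obtain ⟨j', hj'mem, hj'neg⟩ := hdef
          obtain ⟨s, hs, hrtg⟩ := (Finset.mem_filter.mp hj'mem).2
          obtain ⟨l, hchain, hlast⟩ := List.exists_isChain_cons_of_relationReflTransGen hrtg
          have hch' : (s :: l).Chain' (Step B) := hchain
          have hlast' : (s :: l).getLast? = some j' := by
            rw [List.getLast?_eq_getLast (List.cons_ne_nil _ _), hlast]
          obtain ⟨l₂, hnd₂, hch₂, hhd₂, hlast₂⟩ :=
            chain'_dedup (s :: l).length (s :: l) le_rfl hch'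
          obtain ⟨B', hOk', hcol'⟩ := moveChain ρ l₂.length B hB l₂ s j' le_rfl hnd₂ hch₂
            (by rw [hhd₂]; rfl) (by rw [hlast₂]; exact hlast')
          have hsne : s ≠ j' := fun h => by rw [h] at hs; omega
          have hsplit : ∀ (C : Fin m → Fin n → ℤ), (∑ j, ((∑ i, C i j) - c j).natAbs)
              = ((∑ i, C i s) - c s).natAbs
                + ∑ j ∈ Finset.univ.erase s, ((∑ i, C i j) - c j).natAbs :=
            fun C => (Finset.add_sum_erase _ _ (Finset.mem_univ s)).symm
          have hnew : (∑ j, ((∑ i, B' i j) - c j).natAbs) ≤ N := by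
            have h1 : ((∑ i, B' i s) - c s).natAbs + 1 ≤ ((∑ i, B i s) - c s).natAbs := by
              rw [hcol' s, if_pos rfl, if_neg hsne]
              omega
            have h2 : ∑ j ∈ Finset.univ.erase s, ((∑ i, B' i j) - c j).natAbs
                ≤ ∑ j ∈ Finset.univ.erase s, ((∑ i, B i j) - c j).natAbs := by
              refine Finset.sum_le_sum fun jj hjj => ?_
              have hne := (Finset.mem_erase.mp hjj).1
              by_cases h3 : jj = j'
              · subst h3
                rw [hcol' jj, if_neg hne, if_pos rfl]
                omega
              · rw [hcol' jj, if_neg hne, if_neg h3]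
                omega
            have h3 := hsplit B
            have h4 := hsplit B'
            rw [h3] at hN
            rw [h4]
            omega
          exact ih B' hOk' hnew
        · exfalso
          push_neg at hdef
          have hjsRS : js ∈ RSf := Finset.mem_filter.mpr
            ⟨Finset.mem_univ _, js, hjs, Relation.ReflTransGen.refl⟩
          set D : Finset (Fin n) := Finset.univ \ RSf with hD
          have hrow : ∀ i, min (ρ i) (2 * (D.card : ℤ)) ≤ ∑ j ∈ D, B i j := by
            intro i
            by_cases hcase : ∃ jj ∈ RSf, 0 < B i jj
            · obtain ⟨jj, hjjRS, hjjpos⟩ := hcase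
              have h2 : ∀ j' ∈ D, B i j' = 2 := by
                intro j' hj'
                have hj'notRS : j' ∉ RSf := (Finset.mem_sdiff.mp hj').2
                by_contra hne2
                have hlt2 : B i j' < 2 := lt_of_le_of_ne (hB.1 i j').2 hne2
                obtain ⟨s0, hs0, hrtg0⟩ := (Finset.mem_filter.mp hjjRS).2
                exact hj'notRS (Finset.mem_filter.mpr ⟨Finset.mem_univ _, s0, hs0,
                  hrtg0.tail ⟨i, hjjpos, hlt2⟩⟩)
              calc min (ρ i) (2 * (D.card : ℤ)) ≤ 2 * (D.card : ℤ) := min_le_right _ _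
                _ = ∑ _j ∈ D, (2:ℤ) := by rw [Finset.sum_const, nsmul_eq_mul]; ring
                _ = ∑ j ∈ D, B i j := Finset.sum_congr rfl fun j hj => (h2 j hj).symm
            · push_neg at hcase
              have hz : ∀ jj ∈ RSf, B i jj = 0 :=
                fun jj hjj => le_antisymm (hcase jj hjj) (hB.1 i jj).1
              have hDs : ∑ j ∈ D, B i j = ρ i := by
                have h5 := Finset.sum_sdiff (f := B i) (Finset.subset_univ RSf)
                rw [Finset.sum_eq_zero hz, add_zero] at h5
                rw [hD, h5]
                exact hB.2 i
              rw [hDs]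
              exact min_le_left _ _
          have hDc := hcond D
          have hBD : ∑ j ∈ D, (∑ i, B i j) = ∑ i, ∑ j ∈ D, B i j := Finset.sum_comm
          have h5 : ∑ i, min (ρ i) (2 * (D.card : ℤ)) ≤ ∑ j ∈ D, (∑ i, B i j) := by
            rw [hBD]
            exact Finset.sum_le_sum fun i _ => hrow i
          have h6 : 0 ≤ ∑ j ∈ D, ((∑ i, B i j) - c j) := by
            rw [Finset.sum_sub_distrib]
            linarith
          have h7 : 0 < ∑ j ∈ RSf, ((∑ i, B i j) - c j) := by
            calc (0:ℤ) < (∑ i, B i js) - c js := hjs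
              _ ≤ ∑ j ∈ RSf, ((∑ i, B i j) - c j) :=
                Finset.single_le_sum (fun j hj => hdef j hj) hjsRS
          have h8 : ∑ j ∈ D, ((∑ i, B i j) - c j) + ∑ j ∈ RSf, ((∑ i, B i j) - c j) = 0 := by
            rw [hD, Finset.sum_sdiff (Finset.subset_univ RSf)]
            exact hsumd
          linarith

lemma sum_clamp (n : ℕ) (a : ℤ) (h0 : 0 ≤ a) (h2 : a ≤ 2 * n) :
    ∑ j : Fin n, min 2 (max 0 (a - 2 * (j : ℕ))) = a := by
  induction n with
  | zero =>
      simp only [Nat.cast_zero, mul_zero] at h2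
      simp
      omega
  | succ k ih =>
      rw [Fin.sum_univ_castSucc]
      simp only [Fin.coe_castSucc, Fin.val_last]
      by_cases h : a ≤ 2 * (k : ℤ)
      · rw [max_eq_left (by omega), min_eq_right (by omega), add_zero]
        exact ih h
      · have hall : ∀ j : Fin k, min 2 (max 0 (a - 2 * ((j : ℕ) : ℤ))) = 2 := by
          intro j
          have hj := j.isLt
          rw [max_eq_right (by omega), min_eq_left (by omega)]
        rw [Finset.sum_congr rfl fun j _ => hall j, Finset.sum_const, Finset.card_univ,
          Fintype.card_fin, nsmul_eq_mul,
          max_eq_right (by omega), min_eq_right (by omega)]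
        ring

lemma exists_B0 (ρ : Fin m → ℤ) (h0 : ∀ i, 0 ≤ ρ i) (h2 : ∀ i, ρ i ≤ 2 * n) :
    ∃ B : Fin m → Fin n → ℤ, Ok ρ B := by
  refine ⟨fun i j => min 2 (max 0 (ρ i - 2 * (j : ℕ))),
    fun i j => ⟨?_, min_le_left _ _⟩, fun i => sum_clamp n (ρ i) (h0 i) (h2 i)⟩
  exact le_min (by norm_num) (le_max_left _ _)

lemma main_exists (ρ : Fin m → ℤ) (c : Fin n → ℤ) (h0 : ∀ i, 0 ≤ ρ i)
    (h2 : ∀ i, ρ i ≤ 2 * n) (hsum : ∑ i, ρ i = ∑ j, c j)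
    (hcond : ∀ T : Finset (Fin n), ∑ j ∈ T, c j ≤ ∑ i, min (ρ i) (2 * (T.card : ℤ))) :
    ∃ B, Ok ρ B ∧ ∀ j, (∑ i, B i j) = c j := by
  obtain ⟨B0, hB0⟩ := exists_B0 ρ h0 h2
  exact realize ρ c hcond hsum _ B0 hB0 le_rfl

lemma sum_le_prefix (S : Fin n → ℤ) (hmono : Antitone S) (T : Finset (Fin n)) {k : Fin n}
    (hk : (k : ℕ) + 1 = T.card) : ∑ j ∈ T, S j ≤ ∑ j ∈ Finset.Iic k, S j := by
  have hkey : ∀ v (hv : v < T.card), v ≤ ((T.orderEmbOfFin rfl) ⟨v, hv⟩ : ℕ) := by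
    intro v
    induction v with
    | zero => intro hv; exact Nat.zero_le _
    | succ w ihw =>
        intro hv
        have h1 := ihw (Nat.lt_of_succ_lt hv)
        have h2 : (T.orderEmbOfFin rfl) ⟨w, Nat.lt_of_succ_lt hv⟩
            < (T.orderEmbOfFin rfl) ⟨w + 1, hv⟩ :=
          (T.orderEmbOfFin rfl).strictMono (by simp [Fin.lt_def])
        have h3 := Fin.lt_def.mp h2
        omega
  have hT : ∑ j ∈ T, S j = ∑ i : Fin T.card, S ((T.orderEmbOfFin rfl) i) := by
    refine (Finset.sum_bij (fun i _ => (T.orderEmbOfFin rfl) i) ?_ ?_ ?_ ?_).symm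
    · intro i _; exact Finset.orderEmbOfFin_mem T rfl i
    · intro i _ i' _ h; exact (T.orderEmbOfFin rfl).injective h
    · intro j hj
      have : j ∈ Set.range (T.orderEmbOfFin rfl) := by
        rw [Finset.range_orderEmbOfFin]; exact hj
      obtain ⟨i, hi⟩ := this
      exact ⟨i, Finset.mem_univ i, hi⟩
    · intro i _; rfl
  have hIic : ∑ j ∈ Finset.Iic k, S j = ∑ i : Fin T.card, S ⟨(i : ℕ), by omega⟩ := by
    refine (Finset.sum_bij (fun (i : Fin T.card) _ => (⟨(i : ℕ), by omega⟩ : Fin n)) ?_ ?_ ?_ ?_).symm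
    · intro i _
      rw [Finset.mem_Iic]
      exact Fin.mk_le_of_le_val (by omega)
    · intro i _ i' _ h
      have := Fin.mk.injEq (i : ℕ) _ (i' : ℕ) _ ▸ h
      exact Fin.ext (by simpa using h)
    · intro j hj
      rw [Finset.mem_Iic] at hj
      have hjv : (j : ℕ) < T.card := by
        have := Fin.le_def.mp hj
        omega
      exact ⟨⟨(j : ℕ), hjv⟩, Finset.mem_univ _, Fin.ext rfl⟩
    · intro i _; rfl
  rw [hT, hIic]
  refine Finset.sum_le_sum fun i _ => ?_
  refine hmono ?_
  rw [Fin.le_def]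
  exact hkey i i.isLt

end SRM10

/-- nonemptiness of the class of (0,±1)-matrices with row sums R and
(nonincreasing) column sums S. -/
theorem stmt10 (m n : ℕ) (R : Fin m → ℤ) (S : Fin n → ℤ)
    (hR : ∀ i, 0 ≤ R i) (hS : ∀ j, 0 ≤ S j) (hsum : ∑ i, R i = ∑ j, S j)
    (hmono : Antitone S) :
    (∃ A : Matrix (Fin m) (Fin n) ℤ, (∀ i j, A i j = 0 ∨ A i j = 1 ∨ A i j = -1) ∧
        (∀ i, ∑ j, A i j = R i) ∧ (∀ j, ∑ i, A i j = S j)) ↔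
    (∀ k : Fin n, ∑ j ∈ Finset.Iic k, S j ≤
        (∑ i, min (R i + (n : ℤ)) (2 * ((k : ℕ) + 1))) - ((k : ℕ) + 1) * m) := by
  constructor
  · rintro ⟨A, hA01, hArow, hAcol⟩ k
    have hcard : (Finset.Iic k).card = (k : ℕ) + 1 := Fin.card_Iic k
    have hrow : ∀ i, ∑ j ∈ Finset.Iic k, A i j
        ≤ min (R i + (n : ℤ)) (2 * ((k : ℕ) + 1)) - ((k : ℕ) + 1) := by
      intro i
      have h1 : ∑ j ∈ Finset.Iic k, A i j ≤ ((k : ℕ) + 1 : ℤ) := by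
        calc ∑ j ∈ Finset.Iic k, A i j ≤ ∑ _j ∈ Finset.Iic k, (1 : ℤ) :=
              Finset.sum_le_sum fun j _ => by rcases hA01 i j with h | h | h <;> omega
          _ = ((k : ℕ) + 1 : ℤ) := by
              rw [Finset.sum_const, hcard, nsmul_eq_mul, mul_one]
              push_cast
              ring
      have hkn : (k : ℕ) + 1 ≤ n := k.isLt
      have hc2 : (Finset.univ \ Finset.Iic k).card = n - ((k : ℕ) + 1) := by
        rw [Finset.card_sdiff_of_subset (Finset.subset_univ _), hcard, Finset.card_univ, Fintype.card_fin]
      have h2 : -((n : ℤ) - ((k : ℕ) + 1)) ≤ ∑ j ∈ Finset.univ \ Finset.Iic k, A i j := by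
        calc -((n : ℤ) - ((k : ℕ) + 1)) = ∑ _j ∈ Finset.univ \ Finset.Iic k, (-1 : ℤ) := by
              rw [Finset.sum_const, hc2, nsmul_eq_mul]
              push_cast [hkn]
              ring
          _ ≤ _ := Finset.sum_le_sum fun j _ => by rcases hA01 i j with h | h | h <;> omega
      have h3 : ∑ j ∈ Finset.univ \ Finset.Iic k, A i j + ∑ j ∈ Finset.Iic k, A i j = R i :=
        (Finset.sum_sdiff (Finset.subset_univ _)).trans (hArow i)
      rcases le_total (R i + (n : ℤ)) (2 * ((k : ℕ) + 1)) with h | h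
      · rw [min_eq_left h]; linarith
      · rw [min_eq_right h]; linarith
    calc ∑ j ∈ Finset.Iic k, S j = ∑ j ∈ Finset.Iic k, ∑ i, A i j :=
          Finset.sum_congr rfl fun j _ => (hAcol j).symm
      _ = ∑ i, ∑ j ∈ Finset.Iic k, A i j := Finset.sum_comm
      _ ≤ ∑ i, (min (R i + (n : ℤ)) (2 * ((k : ℕ) + 1)) - ((k : ℕ) + 1)) :=
          Finset.sum_le_sum fun i _ => hrow i
      _ = (∑ i, min (R i + (n : ℤ)) (2 * ((k : ℕ) + 1))) - ((k : ℕ) + 1) * m := by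
          rw [Finset.sum_sub_distrib, Finset.sum_const, Finset.card_univ, Fintype.card_fin,
            nsmul_eq_mul]
          ring
  · intro hcond
    rcases Nat.eq_zero_or_pos n with hn | hn
    · subst hn
      refine ⟨fun _ _ => 0, fun i j => Or.inl rfl, fun i => ?_, fun j => j.elim0⟩
      have hR0 : ∑ i, R i = 0 := by rw [hsum]; simp
      have hRi : R i = 0 :=
        (Finset.sum_eq_zero_iff_of_nonneg fun i _ => hR i).mp hR0 i (Finset.mem_univ i)
      simp [hRi]
    · -- n ≥ 1
      set klast : Fin n := ⟨n - 1, by omega⟩ with hklast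
      have hIic : Finset.Iic klast = Finset.univ := by
        refine Finset.eq_univ_iff_forall.mpr fun j => ?_
        rw [Finset.mem_Iic, Fin.le_def]
        have := j.isLt
        simp [hklast]
        omega
      have hklv : ((klast : ℕ) : ℤ) + 1 = (n : ℤ) := by
        simp [hklast]
        omega
      have h2n : ∀ i, R i + (n : ℤ) ≤ 2 * n := by
        have hk := hcond klast
        rw [hIic, hklv] at hk
        have hle : ∀ i ∈ Finset.univ, min (R i + (n : ℤ)) (2 * n) ≤ R i + n :=
          fun i _ => min_le_left _ _
        have hsum2 : ∑ i, (R i + (n : ℤ)) = ∑ i, R i + m * n := by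
          rw [Finset.sum_add_distrib, Finset.sum_const, Finset.card_univ, Fintype.card_fin,
            nsmul_eq_mul]
        have hgeq : ∑ i, min (R i + (n : ℤ)) (2 * n) = ∑ i, (R i + (n : ℤ)) := by
          refine le_antisymm (Finset.sum_le_sum hle) ?_
          rw [hsum2]
          linarith [hsum]
        have hptw := (Finset.sum_eq_sum_iff_of_le hle).mp hgeq
        intro i
        have h9 := hptw i (Finset.mem_univ i)
        exact min_eq_left_iff.mp h9
      have hcond' : ∀ T : Finset (Fin n),
          ∑ j ∈ T, (S j + (m : ℤ)) ≤ ∑ i, min (R i + (n : ℤ)) (2 * (T.card : ℤ)) := by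
        intro T
        rcases T.eq_empty_or_nonempty with rfl | hTne
        · simp only [Finset.sum_empty, Finset.card_empty, Nat.cast_zero, mul_zero]
          refine Finset.sum_nonneg fun i _ => le_min ?_ le_rfl
          have := hR i
          positivity
        · have hT1 : 1 ≤ T.card := Finset.Nonempty.card_pos hTne
          have hTn : T.card ≤ n := by
            simpa using Finset.card_le_univ T
          set k : Fin n := ⟨T.card - 1, by omega⟩ with hkdef
          have hkc : ((k : ℕ) : ℤ) + 1 = (T.card : ℤ) := by
            simp [hkdef]
            omega
          have hkc' : (k : ℕ) + 1 = T.card := by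
            simp [hkdef]
            omega
          have hpre := SRM10.sum_le_prefix S hmono T hkc'
          have hck := hcond k
          rw [hkc] at hck
          have hTc : ∑ j ∈ T, (S j + (m : ℤ)) = ∑ j ∈ T, S j + (T.card : ℤ) * m := by
            rw [Finset.sum_add_distrib, Finset.sum_const, nsmul_eq_mul]
          rw [hTc]
          linarith
      have hsum' : ∑ i, (R i + (n : ℤ)) = ∑ j, (S j + (m : ℤ)) := by
        rw [Finset.sum_add_distrib, Finset.sum_add_distrib, Finset.sum_const, Finset.sum_const,
          Finset.card_univ, Finset.card_univ, Fintype.card_fin, Fintype.card_fin,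
          nsmul_eq_mul, nsmul_eq_mul, hsum]
        ring
      obtain ⟨B, hOkB, hcolB⟩ := SRM10.main_exists (fun i => R i + (n : ℤ))
        (fun j => S j + (m : ℤ)) (fun i => by have := hR i; positivity) h2n hsum' hcond'
      refine ⟨fun i j => B i j - 1, fun i j => ?_, fun i => ?_, fun j => ?_⟩
      · have h := hOkB.1 i j
        show B i j - 1 = 0 ∨ B i j - 1 = 1 ∨ B i j - 1 = -1
        omega
      · have hr := hOkB.2 i
        rw [Finset.sum_sub_distrib, hr, Finset.sum_const, Finset.card_univ, Fintype.card_fin,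
          nsmul_eq_mul, mul_one]
        ring
      · have hc := hcolB j
        rw [Finset.sum_sub_distrib, hc, Finset.sum_const, Finset.card_univ, Fintype.card_fin,
          nsmul_eq_mul, mul_one]
        ring
end

section
/- The convex hull of the set of n × n (0,±1)-matrices with row sum vector R and column sum vector S equals the polytope of all real n × n matrices A = [a_{ij}] satisfying: each row sum equals r_i, each column sum equals s_j, and −1 ≤ a_{ij} ≤ 1 for all i,j. -/
open Finset

/-! ### Auxiliary machinery -/

def IsInt (x : ℝ) : Prop := ∃ z : ℤ, (z : ℝ) = x

open scoped Classical

lemma IsInt.sum {ι : Type*} (s : Finset ι) (f : ι → ℝ) (h : ∀ a ∈ s, IsInt (f a)) :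
    IsInt (∑ a ∈ s, f a) := by
  classical
  induction s using Finset.induction with
  | empty => exact ⟨0, by simp⟩
  | @insert a s ha ih =>
    obtain ⟨z1, hz1⟩ := h a (Finset.mem_insert_self a s)
    obtain ⟨z2, hz2⟩ := ih fun b hb => h b (Finset.mem_insert_of_mem hb)
    exact ⟨z1 + z2, by rw [Finset.sum_insert ha]; push_cast; rw [hz1, hz2]⟩

lemma IsInt.sub {x y : ℝ} (hx : IsInt x) (hy : IsInt y) : IsInt (x - y) := by
  obtain ⟨a, ha⟩ := hx; obtain ⟨b, hb⟩ := hy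
  exact ⟨a - b, by push_cast [ha, hb]; ring⟩

lemma floor_lt_of_not_int {x : ℝ} (h : ¬ IsInt x) : (⌊x⌋ : ℝ) < x :=
  lt_of_le_of_ne (Int.floor_le x) fun he => h ⟨⌊x⌋, he⟩

lemma lt_ceil_of_not_int {x : ℝ} (h : ¬ IsInt x) : x < (⌈x⌉ : ℝ) :=
  lt_of_le_of_ne (Int.le_ceil x) fun he => h ⟨⌈x⌉, he.symm⟩

lemma row_core {n : ℕ} (g : Fin n → ℝ) (hsum : IsInt (∑ j, g j)) (j0 : Fin n)
    (hj0 : ¬ IsInt (g j0)) (huniq : ∀ j, ¬ IsInt (g j) → j = j0) : False := by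
  apply hj0
  have h1 : IsInt (∑ j ∈ Finset.univ.erase j0, g j) := by
    refine IsInt.sum _ _ fun j hj => ?_
    by_contra h
    exact (Finset.mem_erase.mp hj).1 (huniq j h)
  have h2 : g j0 = (∑ j, g j) - ∑ j ∈ Finset.univ.erase j0, g j := by
    rw [Finset.sum_erase_eq_sub (Finset.mem_univ j0)]; ring
  rw [h2]; exact hsum.sub h1

/-- Extend a function on F to a matrix, zero elsewhere. -/
noncomputable def extLM {n : ℕ} (F : Finset (Fin n × Fin n)) :
    (↥F → ℝ) →ₗ[ℝ] Matrix (Fin n) (Fin n) ℝ where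
  toFun x := fun i j => if h : (i, j) ∈ F then x ⟨(i, j), h⟩ else 0
  map_add' x y := by
    funext i j
    show (if h : (i, j) ∈ F then (x + y) ⟨(i, j), h⟩ else 0) = (if h : (i, j) ∈ F then x ⟨(i, j), h⟩ else 0) + (if h : (i, j) ∈ F then y ⟨(i, j), h⟩ else 0)
    by_cases h : (i, j) ∈ F <;> simp [Matrix.add_apply, Pi.add_apply, h]
  map_smul' c x := by
    funext i j
    show (if h : (i, j) ∈ F then (c • x) ⟨(i, j), h⟩ else 0) = c * (if h : (i, j) ∈ F then x ⟨(i, j), h⟩ else 0)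
    by_cases h : (i, j) ∈ F <;> simp [Matrix.smul_apply, Pi.smul_apply, smul_eq_mul, h]

noncomputable def rcSums {n : ℕ} (rows cols : Finset (Fin n)) :
    Matrix (Fin n) (Fin n) ℝ →ₗ[ℝ] ((↥rows → ℝ) × (↥cols → ℝ)) where
  toFun D := (fun i => ∑ j, D i.1 j, fun j => ∑ i, D i j.1)
  map_add' x y := by
    refine Prod.ext ?_ ?_ <;> funext p <;> simp [Matrix.add_apply, Finset.sum_add_distrib]
  map_smul' c x := by
    refine Prod.ext ?_ ?_ <;> funext p <;>
      simp only [RingHom.id_apply, smul_eq_mul, Prod.smul_fst, Prod.smul_snd, Pi.smul_apply,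
        Matrix.smul_apply, ← Finset.mul_sum]

noncomputable def psiLM {n : ℕ} (rows cols : Finset (Fin n)) :
    ((↥rows → ℝ) × (↥cols → ℝ)) →ₗ[ℝ] ℝ where
  toFun uv := (∑ i, uv.1 i) - (∑ j, uv.2 j)
  map_add' x y := by simp [Finset.sum_add_distrib]; ring
  map_smul' c x := by
    simp only [RingHom.id_apply, smul_eq_mul, Prod.smul_fst, Prod.smul_snd, Pi.smul_apply,
      ← Finset.mul_sum, mul_sub]

lemma exists_kernel {n : ℕ} (F : Finset (Fin n × Fin n)) (hF : F.Nonempty)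
    (hrow : ∀ i ∈ F.image Prod.fst, 2 ≤ (F.filter fun p => p.1 = i).card)
    (hcol : ∀ j ∈ F.image Prod.snd, 2 ≤ (F.filter fun p => p.2 = j).card) :
    ∃ D : Matrix (Fin n) (Fin n) ℝ, D ≠ 0 ∧ (∀ i j, (i, j) ∉ F → D i j = 0) ∧
      (∀ i, ∑ j, D i j = 0) ∧ (∀ j, ∑ i, D i j = 0) := by
  classical
  set rows := F.image Prod.fst with hrows
  set cols := F.image Prod.snd with hcols
  have hr2 : 2 * rows.card ≤ F.card := by
    have h1 : F.card = ∑ b ∈ rows, (F.filter fun a => a.1 = b).card :=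
      Finset.card_eq_sum_card_fiberwise (fun x hx => Finset.mem_image_of_mem _ hx)
    calc 2 * rows.card = ∑ _b ∈ rows, 2 := by simp [mul_comm]
    _ ≤ ∑ b ∈ rows, (F.filter fun a => a.1 = b).card := Finset.sum_le_sum hrow
    _ = F.card := h1.symm
  have hc2 : 2 * cols.card ≤ F.card := by
    have h1 : F.card = ∑ b ∈ cols, (F.filter fun a => a.2 = b).card :=
      Finset.card_eq_sum_card_fiberwise (fun x hx => Finset.mem_image_of_mem _ hx)
    calc 2 * cols.card = ∑ _b ∈ cols, 2 := by simp [mul_comm]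
    _ ≤ ∑ b ∈ cols, (F.filter fun a => a.2 = b).card := Finset.sum_le_sum hcol
    _ = F.card := h1.symm
  have hrc : rows.card + cols.card ≤ F.card := by omega
  set Ψ : (↥F → ℝ) →ₗ[ℝ] ((↥rows → ℝ) × (↥cols → ℝ)) := (rcSums rows cols).comp (extLM F)
  have hoff : ∀ (x : ↥F → ℝ) i j, (i, j) ∉ F → extLM F x i j = 0 := by
    intro x i j h
    show (if h' : (i, j) ∈ F then x ⟨(i, j), h'⟩ else 0) = 0
    simp [extLM, LinearMap.coe_mk, AddHom.coe_mk, h]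
  have hrow0 : ∀ (x : ↥F → ℝ) i, i ∉ rows → ∑ j, extLM F x i j = 0 := by
    intro x i hi
    refine Finset.sum_eq_zero fun j _ => hoff x i j fun hm => hi ?_
    exact hrows ▸ Finset.mem_image_of_mem _ hm
  have hcol0 : ∀ (x : ↥F → ℝ) j, j ∉ cols → ∑ i, extLM F x i j = 0 := by
    intro x j hj
    refine Finset.sum_eq_zero fun i _ => hoff x i j fun hm => hj ?_
    exact hcols ▸ Finset.mem_image_of_mem _ hm
  have hrange : LinearMap.range Ψ ≤ LinearMap.ker (psiLM rows cols) := by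
    rintro _ ⟨x, rfl⟩
    simp only [LinearMap.mem_ker, psiLM, LinearMap.coe_mk, AddHom.coe_mk, Ψ, rcSums,
      LinearMap.comp_apply, sub_eq_zero]
    have h1 : ∑ i : ↥rows, ∑ j, extLM F x i.1 j = ∑ i, ∑ j, extLM F x i j := by
      rw [Finset.sum_coe_sort rows (fun i => ∑ j, extLM F x i j)]
      exact Finset.sum_subset (Finset.subset_univ _) (fun i _ hi => hrow0 x i hi)
    have h2 : ∑ j : ↥cols, ∑ i, extLM F x i j.1 = ∑ j, ∑ i, extLM F x i j := by
      rw [Finset.sum_coe_sort cols (fun j => ∑ i, extLM F x i j)]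
      exact Finset.sum_subset (Finset.subset_univ _) (fun j _ hj => hcol0 x j hj)
    rw [h1, h2, Finset.sum_comm]
  obtain ⟨p0, hp0⟩ := hF
  have hi0 : p0.1 ∈ rows := Finset.mem_image_of_mem _ hp0
  have hpsi : psiLM (n := n) rows cols ≠ 0 := by
    intro h0
    have := LinearMap.congr_fun h0 (fun _ => (1:ℝ), fun _ => 0)
    simp [psiLM, Finset.card_eq_zero] at this
    rw [this] at hi0
    simp at hi0
  have hker : ∃ x : ↥F → ℝ, x ≠ 0 ∧ Ψ x = 0 := by
    by_contra hcon
    push_neg at hcon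
    have hinj : Function.Injective Ψ := by
      rw [← LinearMap.ker_eq_bot, Submodule.eq_bot_iff]
      intro x hx
      by_contra hne
      exact hcon x hne (by simpa using hx)
    have h1 : Module.finrank ℝ (↥F → ℝ) = Module.finrank ℝ (LinearMap.range Ψ) :=
      (LinearMap.finrank_range_of_inj hinj).symm
    have h2 : Module.finrank ℝ (LinearMap.range Ψ) ≤
        Module.finrank ℝ (LinearMap.ker (psiLM rows cols)) := Submodule.finrank_mono hrange
    have h3 : Module.finrank ℝ (LinearMap.ker (psiLM rows cols)) <
        Module.finrank ℝ ((↥rows → ℝ) × (↥cols → ℝ)) := by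
      apply Submodule.finrank_lt
      rw [Ne, LinearMap.ker_eq_top]
      exact hpsi
    have h4 : Module.finrank ℝ (↥F → ℝ) = F.card := by simp [Module.finrank_pi]
    have h5 : Module.finrank ℝ ((↥rows → ℝ) × (↥cols → ℝ)) = rows.card + cols.card := by
      simp [Module.finrank_prod, Module.finrank_pi]
    omega
  obtain ⟨x, hx, hΨ⟩ := hker
  refine ⟨extLM F x, ?_, fun i j h => hoff x i j h, ?_, ?_⟩
  · intro h0
    apply hx
    funext p
    have := congr_fun (congr_fun h0 p.1.1) p.1.2
    change (if h : (p.1.1, p.1.2) ∈ F then x ⟨(p.1.1, p.1.2), h⟩ else 0) = 0 at this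
    simpa [extLM] using this
  · intro i
    by_cases hi : i ∈ rows
    · have := congr_fun (congr_arg Prod.fst hΨ) ⟨i, hi⟩
      simpa [Ψ, rcSums] using this
    · exact hrow0 x i hi
  · intro j
    by_cases hj : j ∈ cols
    · have := congr_fun (congr_arg Prod.snd hΨ) ⟨j, hj⟩
      simpa [Ψ, rcSums] using this
    · exact hcol0 x j hj

lemma move {n : ℕ} (A D : Matrix (Fin n) (Fin n) ℝ) (hD : D ≠ 0)
    (hsupp : ∀ i j, IsInt (A i j) → D i j = 0)
    (hbd : ∀ i j, -1 ≤ A i j ∧ A i j ≤ 1) :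
    ∃ t > (0:ℝ), (∀ i j, -1 ≤ A i j + t * D i j ∧ A i j + t * D i j ≤ 1) ∧
      (∀ i j, IsInt (A i j) → IsInt (A i j + t * D i j)) ∧
      (∃ i j, ¬ IsInt (A i j) ∧ IsInt (A i j + t * D i j)) := by
  classical
  set M : Finset (Fin n × Fin n) := univ.filter (fun p => D p.1 p.2 ≠ 0) with hM
  have hMne : M.Nonempty := by
    by_contra h
    apply hD
    rw [Finset.not_nonempty_iff_eq_empty] at h
    funext i j
    simp only [Matrix.zero_apply]
    by_contra hij
    have : (i, j) ∈ M := by simp [hM, hij]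
    simp [h] at this
  have hMni : ∀ p ∈ M, ¬ IsInt (A p.1 p.2) := by
    intro p hp hint
    have : D p.1 p.2 = 0 := hsupp _ _ hint
    simp [hM] at hp
    exact hp this
  set bnd : Fin n × Fin n → ℝ := fun p =>
    if 0 < D p.1 p.2 then ((⌈A p.1 p.2⌉ : ℝ) - A p.1 p.2) / D p.1 p.2
    else ((⌊A p.1 p.2⌋ : ℝ) - A p.1 p.2) / D p.1 p.2 with hbnd
  have hbndpos : ∀ p ∈ M, 0 < bnd p := by
    intro p hp
    have hDp : D p.1 p.2 ≠ 0 := by simpa [hM] using hp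
    have hni := hMni p hp
    rw [hbnd]
    by_cases h : 0 < D p.1 p.2
    · simp only [h, if_pos]
      exact div_pos (by linarith [lt_ceil_of_not_int hni]) h
    · simp only [h, if_neg]
      have hneg : D p.1 p.2 < 0 := lt_of_le_of_ne (not_lt.mp h) hDp
      exact div_pos_of_neg_of_neg (by linarith [floor_lt_of_not_int hni]) hneg
  set t := M.inf' hMne bnd with ht
  have htpos : 0 < t := by
    obtain ⟨p, hp, hpe⟩ := Finset.exists_mem_eq_inf' hMne bnd
    rw [ht, hpe]; exact hbndpos p hp
  have key : ∀ p ∈ M, (⌊A p.1 p.2⌋ : ℝ) ≤ A p.1 p.2 + t * D p.1 p.2 ∧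
      A p.1 p.2 + t * D p.1 p.2 ≤ (⌈A p.1 p.2⌉ : ℝ) := by
    intro p hp
    have hDp : D p.1 p.2 ≠ 0 := by simpa [hM] using hp
    have hni := hMni p hp
    have hle : t ≤ bnd p := Finset.inf'_le bnd hp
    by_cases h : 0 < D p.1 p.2
    · constructor
      · nlinarith [floor_lt_of_not_int hni]
      · have hm : t * D p.1 p.2 ≤ bnd p * D p.1 p.2 := by nlinarith
        have hb : bnd p * D p.1 p.2 = (⌈A p.1 p.2⌉ : ℝ) - A p.1 p.2 := by
          rw [hbnd]; simp only [h, if_pos]; field_simp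
        linarith
    · have hneg : D p.1 p.2 < 0 := lt_of_le_of_ne (not_lt.mp h) hDp
      constructor
      · have hm : bnd p * D p.1 p.2 ≤ t * D p.1 p.2 := by nlinarith
        have hb : bnd p * D p.1 p.2 = (⌊A p.1 p.2⌋ : ℝ) - A p.1 p.2 := by
          rw [hbnd]; simp only [h, if_neg, ↓reduceIte]; field_simp
        linarith
      · nlinarith [lt_ceil_of_not_int hni]
  refine ⟨t, htpos, ?_, ?_, ?_⟩
  · intro i j
    by_cases hp : (i, j) ∈ M
    · obtain ⟨h1, h2⟩ := key (i, j) hp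
      have hb := hbd i j
      have hf : (-1 : ℝ) ≤ (⌊A i j⌋ : ℝ) := by
        have : ((-1 : ℤ) : ℝ) ≤ A i j := by push_cast; exact hb.1
        exact_mod_cast Int.cast_le.mpr (Int.le_floor.mpr this)
      have hc : ((⌈A i j⌉ : ℝ)) ≤ 1 := by
        have : A i j ≤ ((1 : ℤ) : ℝ) := by push_cast; exact hb.2
        exact_mod_cast Int.cast_le.mpr (Int.ceil_le.mpr this)
      constructor <;> linarith
    · have : D i j = 0 := by simpa [hM] using hp
      simpa [this] using hbd i j
  · intro i j hint
    simp [hsupp i j hint, hint]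
  · obtain ⟨p, hp, hpe⟩ := Finset.exists_mem_eq_inf' hMne bnd
    refine ⟨p.1, p.2, hMni p hp, ?_⟩
    have hDp : D p.1 p.2 ≠ 0 := by simpa [hM] using hp
    rw [ht, hpe, hbnd]
    by_cases h : 0 < D p.1 p.2
    · simp only [h, if_pos]
      refine ⟨⌈A p.1 p.2⌉, ?_⟩
      field_simp
      ring
    · simp only [h, if_neg, ↓reduceIte]
      refine ⟨⌊A p.1 p.2⌋, ?_⟩
      field_simp
      ring

lemma vertex_mem {n : ℕ} (A : Matrix (Fin n) (Fin n) ℝ) (hall : ∀ i j, IsInt (A i j))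
    (hbd : ∀ i j, -1 ≤ A i j ∧ A i j ≤ 1) :
    ∀ i j, A i j = 0 ∨ A i j = 1 ∨ A i j = -1 := by
  intro i j
  obtain ⟨z, hz⟩ := hall i j
  obtain ⟨h1, h2⟩ := hbd i j
  rw [← hz] at h1 h2 ⊢
  have hz1 : (-1 : ℤ) ≤ z := by exact_mod_cast h1
  have hz2 : z ≤ 1 := by exact_mod_cast h2
  interval_cases z <;> simp

lemma key_lemma (n : ℕ) (R S : Fin n → ℤ) :
    ∀ N : ℕ, ∀ A : Matrix (Fin n) (Fin n) ℝ,
      (Finset.univ.filter fun p : Fin n × Fin n => ¬ IsInt (A p.1 p.2)).card ≤ N →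
      (∀ i, ∑ j, A i j = (R i : ℝ)) → (∀ j, ∑ i, A i j = (S j : ℝ)) →
      (∀ i j, -1 ≤ A i j ∧ A i j ≤ 1) →
      A ∈ convexHull ℝ {A : Matrix (Fin n) (Fin n) ℝ |
        (∀ i j, A i j = 0 ∨ A i j = 1 ∨ A i j = -1) ∧
        (∀ i, ∑ j, A i j = (R i : ℝ)) ∧ (∀ j, ∑ i, A i j = (S j : ℝ))} := by
  classical
  intro N
  induction N with
  | zero =>
    intro A hcard hR hS hbd
    have hall : ∀ i j, IsInt (A i j) := by
      intro i j
      by_contra h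
      have : (i, j) ∈ Finset.univ.filter fun p : Fin n × Fin n => ¬ IsInt (A p.1 p.2) := by
        simp [h]
      have := Finset.card_pos.mpr ⟨_, this⟩
      omega
    exact subset_convexHull ℝ _ ⟨vertex_mem A hall hbd, hR, hS⟩
  | succ N ih =>
    intro A hcard hR hS hbd
    set F := Finset.univ.filter fun p : Fin n × Fin n => ¬ IsInt (A p.1 p.2) with hF
    by_cases hFne : F.Nonempty
    swap
    · rw [Finset.not_nonempty_iff_eq_empty] at hFne
      have hall : ∀ i j, IsInt (A i j) := by
        intro i j
        by_contra h
        have : (i, j) ∈ F := by simp [hF, h]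
        simp [hFne] at this
      exact subset_convexHull ℝ _ ⟨vertex_mem A hall hbd, hR, hS⟩
    -- degree conditions
    have hrowdeg : ∀ i ∈ F.image Prod.fst, 2 ≤ (F.filter fun p => p.1 = i).card := by
      intro i hi
      obtain ⟨p, hp, hpi⟩ := Finset.mem_image.mp hi
      have hne : (F.filter fun p => p.1 = i).Nonempty := ⟨p, Finset.mem_filter.mpr ⟨hp, hpi⟩⟩
      by_contra hlt
      push_neg at hlt
      interval_cases h : (F.filter fun p => p.1 = i).card
      · exact Finset.not_nonempty_iff_eq_empty.mpr (Finset.card_eq_zero.mp h) hne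
      · obtain ⟨a, ha⟩ := Finset.card_eq_one.mp h
        have haf : a ∈ F.filter fun p => p.1 = i := ha ▸ Finset.mem_singleton_self a
        obtain ⟨haF, hai⟩ := Finset.mem_filter.mp haf
        have hani : ¬ IsInt (A i a.2) := by
          have := (Finset.mem_filter.mp (hF ▸ haF)).2
          rwa [hai] at this
        refine row_core (fun j => A i j) (hR i ▸ ⟨R i, rfl⟩) a.2 hani fun j hj => ?_
        have : (i, j) ∈ F.filter fun p => p.1 = i := by
          refine Finset.mem_filter.mpr ⟨?_, rfl⟩
          simp [hF, hj]
        rw [ha, Finset.mem_singleton] at this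
        exact congr_arg Prod.snd this
    have hcoldeg : ∀ j ∈ F.image Prod.snd, 2 ≤ (F.filter fun p => p.2 = j).card := by
      intro j hj
      obtain ⟨p, hp, hpj⟩ := Finset.mem_image.mp hj
      have hne : (F.filter fun p => p.2 = j).Nonempty := ⟨p, Finset.mem_filter.mpr ⟨hp, hpj⟩⟩
      by_contra hlt
      push_neg at hlt
      interval_cases h : (F.filter fun p => p.2 = j).card
      · exact Finset.not_nonempty_iff_eq_empty.mpr (Finset.card_eq_zero.mp h) hne
      · obtain ⟨a, ha⟩ := Finset.card_eq_one.mp h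
        have haf : a ∈ F.filter fun p => p.2 = j := ha ▸ Finset.mem_singleton_self a
        obtain ⟨haF, haj⟩ := Finset.mem_filter.mp haf
        have hani : ¬ IsInt (A a.1 j) := by
          have := (Finset.mem_filter.mp (hF ▸ haF)).2
          rwa [haj] at this
        refine row_core (fun i => A i j) (hS j ▸ ⟨S j, rfl⟩) a.1 hani fun i hi => ?_
        have : (i, j) ∈ F.filter fun p => p.2 = j := by
          refine Finset.mem_filter.mpr ⟨?_, rfl⟩
          simp [hF, hi]
        rw [ha, Finset.mem_singleton] at this
        exact congr_arg Prod.fst this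
    obtain ⟨D, hDne, hDsupp, hDrow, hDcol⟩ := exists_kernel F hFne hrowdeg hcoldeg
    have hsupp : ∀ i j, IsInt (A i j) → D i j = 0 := by
      intro i j hint
      exact hDsupp i j (by simp [hF, hint])
    obtain ⟨t1, ht1, hbd1, hpre1, ⟨i1, j1, hnew1⟩⟩ := move A D hDne hsupp hbd
    obtain ⟨t2, ht2, hbd2, hpre2, ⟨i2, j2, hnew2⟩⟩ := move A (-D) (neg_ne_zero.mpr hDne)
      (fun i j h => by simp [hsupp i j h]) hbd
    set B : Matrix (Fin n) (Fin n) ℝ := A + t1 • D with hB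
    set C : Matrix (Fin n) (Fin n) ℝ := A + t2 • (-D) with hC
    have hBe : ∀ i j, B i j = A i j + t1 * D i j := by
      intro i j; simp [hB, Matrix.add_apply, Matrix.smul_apply, smul_eq_mul]
    have hCe : ∀ i j, C i j = A i j + t2 * (-D) i j := by
      intro i j; simp [hC, Matrix.add_apply, Matrix.smul_apply, smul_eq_mul]
    -- helper to show B and C are in the hull
    have main : ∀ (E : Matrix (Fin n) (Fin n) ℝ) (s : ℝ) (D' : Matrix (Fin n) (Fin n) ℝ),
        (∀ i, ∑ j, D' i j = 0) → (∀ j, ∑ i, D' i j = 0) →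
        (∀ i j, E i j = A i j + s * D' i j) →
        (∀ i j, -1 ≤ A i j + s * D' i j ∧ A i j + s * D' i j ≤ 1) →
        (∀ i j, IsInt (A i j) → IsInt (A i j + s * D' i j)) →
        (¬ IsInt (A i1 j1) ∧ IsInt (E i1 j1)) ∨ (¬ IsInt (A i2 j2) ∧ IsInt (E i2 j2)) →
        E ∈ convexHull ℝ {A : Matrix (Fin n) (Fin n) ℝ |
          (∀ i j, A i j = 0 ∨ A i j = 1 ∨ A i j = -1) ∧
          (∀ i, ∑ j, A i j = (R i : ℝ)) ∧ (∀ j, ∑ i, A i j = (S j : ℝ))} := by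
      intro E s D' hr0 hc0 hEe hbdE hpreE hnewE
      apply ih E _ (fun i => ?_) (fun j => ?_) (fun i j => hEe i j ▸ hbdE i j)
      · -- cardinality decreased
        have hsub : (Finset.univ.filter fun p : Fin n × Fin n => ¬ IsInt (E p.1 p.2)) ⊆ F := by
          intro p hp
          simp only [Finset.mem_filter, Finset.mem_univ, true_and] at hp
          simp only [hF, Finset.mem_filter, Finset.mem_univ, true_and]
          intro hint
          exact hp (hEe p.1 p.2 ▸ hpreE p.1 p.2 hint)
        have hss : (Finset.univ.filter fun p : Fin n × Fin n => ¬ IsInt (E p.1 p.2)) ⊂ F := by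
          refine Finset.ssubset_iff_of_subset hsub |>.mpr ?_
          rcases hnewE with ⟨hna, hia⟩ | ⟨hna, hia⟩
          · exact ⟨(i1, j1), by simp [hF, hna], by simp [hia]⟩
          · exact ⟨(i2, j2), by simp [hF, hna], by simp [hia]⟩
        have := Finset.card_lt_card hss
        omega
      · rw [Finset.sum_congr rfl fun j _ => hEe i j, Finset.sum_add_distrib, hR i,
          ← Finset.mul_sum, hr0 i, mul_zero, add_zero]
      · rw [Finset.sum_congr rfl fun i _ => hEe i j, Finset.sum_add_distrib, hS j,
          ← Finset.mul_sum, hc0 j, mul_zero, add_zero]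
    have hBmem := main B t1 D hDrow hDcol hBe hbd1 hpre1
      (Or.inl ⟨hnew1.1, hBe i1 j1 ▸ hnew1.2⟩)
    have hCmem := main C t2 (-D) (fun i => by simp [Matrix.neg_apply, hDrow i, Finset.sum_neg_distrib])
      (fun j => by simp [Matrix.neg_apply, hDcol j, Finset.sum_neg_distrib]) hCe hbd2 hpre2
      (Or.inr ⟨hnew2.1, hCe i2 j2 ▸ hnew2.2⟩)
    -- combine
    have hconv : Convex ℝ (convexHull ℝ {A : Matrix (Fin n) (Fin n) ℝ |
        (∀ i j, A i j = 0 ∨ A i j = 1 ∨ A i j = -1) ∧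
        (∀ i, ∑ j, A i j = (R i : ℝ)) ∧ (∀ j, ∑ i, A i j = (S j : ℝ))}) :=
      convex_convexHull ℝ _
    have hsum12 : (0:ℝ) < t1 + t2 := by linarith
    have hAeq : A = (t2 / (t1 + t2)) • B + (t1 / (t1 + t2)) • C := by
      funext i j
      simp only [Matrix.add_apply, Matrix.smul_apply, smul_eq_mul, hBe i j, hCe i j,
        Matrix.neg_apply]
      field_simp
      ring
    rw [hAeq]
    exact hconv hBmem hCmem (div_nonneg (le_of_lt ht2) (le_of_lt hsum12))
      (div_nonneg (le_of_lt ht1) (le_of_lt hsum12)) (by field_simp; ring)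

/-- the convex hull of the n×n (0,±1)-matrices with row sum vector R and
column sum vector S is the polytope given by the row/column sum equations and −1 ≤ a ≤ 1. -/
theorem stmt11 (n : ℕ) (R S : Fin n → ℤ) :
    convexHull ℝ {A : Matrix (Fin n) (Fin n) ℝ |
        (∀ i j, A i j = 0 ∨ A i j = 1 ∨ A i j = -1) ∧
        (∀ i, ∑ j, A i j = (R i : ℝ)) ∧ (∀ j, ∑ i, A i j = (S j : ℝ))} =
      {A : Matrix (Fin n) (Fin n) ℝ |
        (∀ i, ∑ j, A i j = (R i : ℝ)) ∧ (∀ j, ∑ i, A i j = (S j : ℝ)) ∧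
        (∀ i j, -1 ≤ A i j ∧ A i j ≤ 1)} := by
  apply Set.Subset.antisymm
  · apply convexHull_min
    · rintro A ⟨h01, hR, hS⟩
      refine ⟨hR, hS, fun i j => ?_⟩
      rcases h01 i j with h | h | h <;> rw [h] <;> norm_num
    · rintro X ⟨hXr, hXc, hXb⟩ Y ⟨hYr, hYc, hYb⟩ a b ha hb hab
      refine ⟨fun i => ?_, fun j => ?_, fun i j => ?_⟩
      · simp only [Matrix.add_apply, Matrix.smul_apply, smul_eq_mul]
        rw [Finset.sum_add_distrib, ← Finset.mul_sum, ← Finset.mul_sum, hXr i, hYr i]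
        linear_combination (R i : ℝ) * hab
      · simp only [Matrix.add_apply, Matrix.smul_apply, smul_eq_mul]
        rw [Finset.sum_add_distrib, ← Finset.mul_sum, ← Finset.mul_sum, hXc j, hYc j]
        linear_combination (S j : ℝ) * hab
      · simp only [Matrix.add_apply, Matrix.smul_apply, smul_eq_mul]
        obtain ⟨hx1, hx2⟩ := hXb i j
        obtain ⟨hy1, hy2⟩ := hYb i j
        constructor <;> nlinarith
  · rintro A ⟨hR, hS, hbd⟩
    exact key_lemma n R S _ A le_rfl hR hS hbd
end

section
/- The Bruhat order on m × n sign-restricted matrices, defined by A ≤_B B iff Σ(A) ≥ Σ(B) entrywise, is a partial order and makes S_{m,n} a distributive lattice: for A, A' ∈ S_{m,n}, the unique matrix C with Σ(C) = max{Σ(A), Σ(A')} (entrywise maximum) is again a sign-restricted matrix and is the greatest lower bound of A and A' in the Bruhat order. -/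
open Finset

/-- The sum-matrix: (i,j)-entry is the sum of entries of the leading i×j submatrix. -/
def sumMatrix {m n : ℕ} (A : Matrix (Fin m) (Fin n) ℤ) : Matrix (Fin m) (Fin n) ℤ :=
  fun i j => ∑ p ∈ Finset.Iic i, ∑ q ∈ Finset.Iic j, A p q

namespace SRM12
variable {m n : ℕ}

def ext (A : Matrix (Fin m) (Fin n) ℤ) (p q : ℕ) : ℤ :=
  if hp : p < m then if hq : q < n then A ⟨p, hp⟩ ⟨q, hq⟩ else 0 else 0

lemma ext_apply (A : Matrix (Fin m) (Fin n) ℤ) (i : Fin m) (j : Fin n) :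
    ext A i j = A i j := by simp [ext]

lemma ext_of_ge_m (A : Matrix (Fin m) (Fin n) ℤ) {p : ℕ} (hp : m ≤ p) (q : ℕ) :
    ext A p q = 0 := by simp [ext, Nat.not_lt.mpr hp]

lemma ext_of_ge_n (A : Matrix (Fin m) (Fin n) ℤ) (p : ℕ) {q : ℕ} (hq : n ≤ q) :
    ext A p q = 0 := by unfold ext; split <;> simp [Nat.not_lt.mpr hq]

lemma Iic_nat_eq_range (b : ℕ) : Finset.Iic b = Finset.range (b + 1) := by
  ext x; simp [Nat.lt_succ_iff]

lemma sum_Iic_eq (f : Fin m → ℤ) (g : ℕ → ℤ) (hfg : ∀ k : Fin m, g k = f k) (i : Fin m) :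
    ∑ k ∈ Finset.Iic i, f k = ∑ p ∈ Finset.range (i.val + 1), g p := by
  rw [← Iic_nat_eq_range, ← Fin.map_valEmbedding_Iic, Finset.sum_map]
  exact Finset.sum_congr rfl fun k _ => (hfg k).symm

def F (A : Matrix (Fin m) (Fin n) ℤ) (i j : ℕ) : ℤ :=
  ∑ p ∈ Finset.range i, ∑ q ∈ Finset.range j, ext A p q

/-- row partial sums extended -/
def R (A : Matrix (Fin m) (Fin n) ℤ) (i j : ℕ) : ℤ := ∑ q ∈ Finset.range j, ext A i q
/-- column partial sums extended -/
def Cl (A : Matrix (Fin m) (Fin n) ℤ) (i j : ℕ) : ℤ := ∑ p ∈ Finset.range i, ext A p j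

lemma F_succ_left (A : Matrix (Fin m) (Fin n) ℤ) (i j : ℕ) :
    F A (i + 1) j = F A i j + R A i j := Finset.sum_range_succ _ i

lemma F_succ_right (A : Matrix (Fin m) (Fin n) ℤ) (i j : ℕ) :
    F A i (j + 1) = F A i j + Cl A i j := by
  unfold F Cl
  rw [← Finset.sum_add_distrib]
  exact Finset.sum_congr rfl fun p _ => Finset.sum_range_succ _ j

lemma F_zero_left (A : Matrix (Fin m) (Fin n) ℤ) (j : ℕ) : F A 0 j = 0 := by simp [F]
lemma F_zero_right (A : Matrix (Fin m) (Fin n) ℤ) (i : ℕ) : F A i 0 = 0 := by simp [F]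

lemma sumMatrix_eq_F (A : Matrix (Fin m) (Fin n) ℤ) (i : Fin m) (j : Fin n) :
    sumMatrix A i j = F A (i.val + 1) (j.val + 1) := by
  unfold sumMatrix F
  refine sum_Iic_eq (fun k => ∑ q ∈ Finset.Iic j, A k q)
    (fun p => ∑ q ∈ Finset.range (j.val + 1), ext A p q) ?_ i
  intro k
  exact (sum_Iic_eq (fun q => A k q) (fun q => ext A k q) (fun q => ext_apply A k q) j).symm

/-- clamp in first coordinate -/
lemma Cl_clamp (A : Matrix (Fin m) (Fin n) ℤ) (i j : ℕ) :
    Cl A i j = Cl A (min i m) j := by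
  unfold Cl
  rcases le_total i m with h | h
  · rw [min_eq_left h]
  · rw [min_eq_right h]
    refine (Finset.sum_subset (Finset.range_subset_range.mpr h) ?_).symm
    intro x _ hx
    exact ext_of_ge_m A (Nat.not_lt.mp (fun c => hx (Finset.mem_range.mpr c))) j

lemma R_clamp (A : Matrix (Fin m) (Fin n) ℤ) (i j : ℕ) :
    R A i j = R A i (min j n) := by
  unfold R
  rcases le_total j n with h | h
  · rw [min_eq_left h]
  · rw [min_eq_right h]
    refine (Finset.sum_subset (Finset.range_subset_range.mpr h) ?_).symm
    intro x _ hx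
    exact ext_of_ge_n A i (Nat.not_lt.mp (fun c => hx (Finset.mem_range.mpr c)))

lemma Cl_mem (A : Matrix (Fin m) (Fin n) ℤ) (hA : IsSRM A) (i j : ℕ) :
    Cl A i j = 0 ∨ Cl A i j = 1 := by
  by_cases hj : j < n
  · rw [Cl_clamp]
    set i' := min i m with hi'
    have hi'm : i' ≤ m := min_le_right _ _
    rcases Nat.eq_zero_or_pos i' with h0 | hpos
    · left; simp [Cl, h0]
    · have hlt : i' - 1 < m := by omega
      have key : (∑ k ∈ Finset.Iic (⟨i' - 1, hlt⟩ : Fin m), A k ⟨j, hj⟩)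
          = ∑ p ∈ Finset.range (i' - 1 + 1), ext A p j :=
        sum_Iic_eq _ (fun p => ext A p j) (fun k => by simp [ext, hj]) _
      have hii : i' - 1 + 1 = i' := by omega
      have h2 : Cl A i' j = ∑ k ∈ Finset.Iic (⟨i' - 1, hlt⟩ : Fin m), A k ⟨j, hj⟩ := by
        rw [key]; unfold Cl; rw [hii]
      rw [h2]
      exact hA.2.1 _ _
  · left; unfold Cl
    exact Finset.sum_eq_zero fun p _ => ext_of_ge_n A p (Nat.not_lt.mp hj)

lemma R_nonneg (A : Matrix (Fin m) (Fin n) ℤ) (hA : IsSRM A) (i j : ℕ) :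
    0 ≤ R A i j := by
  by_cases hi : i < m
  · rw [R_clamp]
    set j' := min j n with hj'
    have hj'n : j' ≤ n := min_le_right _ _
    rcases Nat.eq_zero_or_pos j' with h0 | hpos
    · simp [R, h0]
    · have hlt : j' - 1 < n := by omega
      have key : (∑ l ∈ Finset.Iic (⟨j' - 1, hlt⟩ : Fin n), A ⟨i, hi⟩ l)
          = ∑ q ∈ Finset.range (j' - 1 + 1), ext A i q :=
        sum_Iic_eq _ (fun q => ext A i q) (fun l => by simp [ext, hi]) _
      have hjj : j' - 1 + 1 = j' := by omega
      have h2 : R A i j' = ∑ l ∈ Finset.Iic (⟨j' - 1, hlt⟩ : Fin n), A ⟨i, hi⟩ l := by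
        rw [key]; unfold R; rw [hjj]
      rw [h2]
      exact hA.2.2 _ _
  · unfold R
    exact le_of_eq (Finset.sum_eq_zero fun q _ => ext_of_ge_m A (Nat.not_lt.mp hi) q).symm

-- continuation (to be appended inside namespace SRM12)
variable (A A' : Matrix (Fin m) (Fin n) ℤ)

def T (i j : ℕ) : ℤ := max (F A i j) (F A' i j)

def Cmat : Matrix (Fin m) (Fin n) ℤ := fun i j =>
  (T A A' (i.val + 1) (j.val + 1) - T A A' (i.val + 1) j.val)
    - (T A A' i.val (j.val + 1) - T A A' i.val j.val)

lemma T_zero_left (j : ℕ) : T A A' 0 j = 0 := by simp [T, F_zero_left]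
lemma T_zero_right (i : ℕ) : T A A' i 0 = 0 := by simp [T, F_zero_right]

variable (hA : IsSRM A) (hA' : IsSRM A')
include hA hA'

lemma T_col (i j : ℕ) : T A A' i j ≤ T A A' i (j + 1) ∧ T A A' i (j + 1) ≤ T A A' i j + 1 := by
  have h1 := Cl_mem A hA i j
  have h2 := Cl_mem A' hA' i j
  have e1 := F_succ_right A i j
  have e2 := F_succ_right A' i j
  unfold T
  constructor
  · exact max_le_max (by omega) (by omega)
  · apply max_le
    · refine le_trans (show F A i (j+1) ≤ F A i j + 1 by omega) ?_
      have := le_max_left (F A i j) (F A' i j); omega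
    · refine le_trans (show F A' i (j+1) ≤ F A' i j + 1 by omega) ?_
      have := le_max_right (F A i j) (F A' i j); omega

lemma T_row (i j : ℕ) : T A A' i j ≤ T A A' (i + 1) j := by
  have h1 := R_nonneg A hA i j
  have h2 := R_nonneg A' hA' i j
  have e1 := F_succ_left A i j
  have e2 := F_succ_left A' i j
  exact max_le_max (by omega) (by omega)

omit hA hA'

lemma colPartial (i : Fin m) (j : Fin n) :
    ∑ k ∈ Finset.Iic i, Cmat A A' k j
      = T A A' (i.val + 1) (j.val + 1) - T A A' (i.val + 1) j.val := by
  have := sum_Iic_eq (fun k => Cmat A A' k j)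
    (fun p => (T A A' (p + 1) (j.val + 1) - T A A' (p + 1) j.val)
      - (T A A' p (j.val + 1) - T A A' p j.val)) (fun k => by unfold Cmat; ring) i
  rw [this, Finset.sum_range_sub (f := fun p => T A A' p (j.val + 1) - T A A' p j.val)]
  rw [T_zero_left, T_zero_left]
  ring

lemma rowPartial (i : Fin m) (j : Fin n) :
    ∑ l ∈ Finset.Iic j, Cmat A A' i l
      = T A A' (i.val + 1) (j.val + 1) - T A A' i.val (j.val + 1) := by
  have := sum_Iic_eq (fun l => Cmat A A' i l)
    (fun q => (T A A' (i.val + 1) (q + 1) - T A A' i.val (q + 1))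
      - (T A A' (i.val + 1) q - T A A' i.val q)) (fun l => by unfold Cmat; ring) j
  rw [this, Finset.sum_range_sub (f := fun q => T A A' (i.val + 1) q - T A A' i.val q)]
  rw [T_zero_right, T_zero_right]
  ring

lemma sumMatrix_Cmat (i : Fin m) (j : Fin n) :
    sumMatrix (Cmat A A') i j = T A A' (i.val + 1) (j.val + 1) := by
  unfold sumMatrix
  have step : ∀ k : Fin m, (∑ q ∈ Finset.Iic j, Cmat A A' k q)
      = T A A' (k.val + 1) (j.val + 1) - T A A' k.val (j.val + 1) :=
    fun k => rowPartial A A' k j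
  rw [Finset.sum_congr rfl (fun k _ => step k)]
  have := sum_Iic_eq (fun k : Fin m => T A A' (k.val + 1) (j.val + 1) - T A A' k.val (j.val + 1))
    (fun p => T A A' (p + 1) (j.val + 1) - T A A' p (j.val + 1)) (fun k => rfl) i
  rw [this, Finset.sum_range_sub (f := fun p => T A A' p (j.val + 1)), T_zero_left]
  ring

include hA hA'

lemma Cmat_isSRM : IsSRM (Cmat A A') := by
  refine ⟨?_, ?_, ?_⟩
  · intro i j
    have h1 := T_col A A' hA hA' (i.val + 1) j.val
    have h2 := T_col A A' hA hA' i.val j.val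
    have e : Cmat A A' i j = (T A A' (i.val + 1) (j.val + 1) - T A A' (i.val + 1) j.val)
      - (T A A' i.val (j.val + 1) - T A A' i.val j.val) := rfl
    omega
  · intro i j
    rw [colPartial]
    have h1 := T_col A A' hA hA' (i.val + 1) j.val
    omega
  · intro i j
    rw [rowPartial]
    have h1 := T_row A A' hA hA' i.val (j.val + 1)
    omega


omit hA hA'

lemma F_clamp (X : Matrix (Fin m) (Fin n) ℤ) (i j : ℕ) :
    F X i j = F X (min i m) (min j n) := by
  unfold F
  have h1 : (∑ p ∈ Finset.range i, ∑ q ∈ Finset.range j, ext X p q)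
      = ∑ p ∈ Finset.range (min i m), ∑ q ∈ Finset.range j, ext X p q := by
    refine (Finset.sum_subset (Finset.range_subset_range.mpr (min_le_left i m)) ?_).symm
    intro x hx hx2
    have hm : m ≤ x := by
      simp only [Finset.mem_range] at hx hx2; omega
    exact Finset.sum_eq_zero fun q _ => ext_of_ge_m X hm q
  rw [h1]
  exact Finset.sum_congr rfl fun p _ => R_clamp X p j

lemma sumMatrix_inj (X Y : Matrix (Fin m) (Fin n) ℤ)
    (h : ∀ i j, sumMatrix X i j = sumMatrix Y i j) : X = Y := by
  have hF : ∀ i j, F X i j = F Y i j := by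
    intro i j
    rw [F_clamp X, F_clamp Y]
    rcases Nat.eq_zero_or_pos (min i m) with h0 | hpos
    · rw [h0, F_zero_left, F_zero_left]
    rcases Nat.eq_zero_or_pos (min j n) with h0 | hpos'
    · rw [h0, F_zero_right, F_zero_right]
    have hi : min i m - 1 < m := by omega
    have hj : min j n - 1 < n := by omega
    have e1 := sumMatrix_eq_F X ⟨min i m - 1, hi⟩ ⟨min j n - 1, hj⟩
    have e2 := sumMatrix_eq_F Y ⟨min i m - 1, hi⟩ ⟨min j n - 1, hj⟩
    have hh := h ⟨min i m - 1, hi⟩ ⟨min j n - 1, hj⟩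
    simp only [Fin.val_mk] at e1 e2
    rw [show min i m - 1 + 1 = min i m from by omega,
      show min j n - 1 + 1 = min j n from by omega] at e1 e2
    omega
  funext i j
  have key : ∀ Z : Matrix (Fin m) (Fin n) ℤ, Z i j =
      (F Z (i.val + 1) (j.val + 1) - F Z i.val (j.val + 1))
        - (F Z (i.val + 1) j.val - F Z i.val j.val) := by
    intro Z
    have h1 := F_succ_left Z i.val (j.val + 1)
    have h2 := F_succ_left Z i.val j.val
    have h3 : R Z i.val (j.val + 1) = R Z i.val j.val + ext Z i.val j.val :=
      Finset.sum_range_succ _ _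
    have h4 : ext Z i.val j.val = Z i j := ext_apply Z i j
    omega
  rw [key X, key Y, hF, hF, hF, hF]

end SRM12

/-- for SRMs A, A', the unique matrix C whose sum-matrix is the entrywise
maximum of those of A and A' is again an SRM, and C is the greatest lower bound of A and A'
in the Bruhat order (A ≤_B B iff Σ(A) ≥ Σ(B) entrywise); hence S_{m,n} is a lattice
(indeed distributive, meets being given by entrywise max of sum-matrices). -/
theorem stmt12 (m n : ℕ) (A A' : Matrix (Fin m) (Fin n) ℤ)
    (hA : IsSRM A) (hA' : IsSRM A') :
    ∃! C : Matrix (Fin m) (Fin n) ℤ,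
      IsSRM C ∧
      (∀ i j, sumMatrix C i j = max (sumMatrix A i j) (sumMatrix A' i j)) ∧
      (∀ i j, sumMatrix A i j ≤ sumMatrix C i j) ∧
      (∀ i j, sumMatrix A' i j ≤ sumMatrix C i j) ∧
      (∀ D : Matrix (Fin m) (Fin n) ℤ, IsSRM D →
        (∀ i j, sumMatrix A i j ≤ sumMatrix D i j) →
        (∀ i j, sumMatrix A' i j ≤ sumMatrix D i j) →
        (∀ i j, sumMatrix C i j ≤ sumMatrix D i j)) := by
  have hmax : ∀ i j, sumMatrix (SRM12.Cmat A A') i j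
      = max (sumMatrix A i j) (sumMatrix A' i j) := by
    intro i j
    rw [SRM12.sumMatrix_Cmat, SRM12.sumMatrix_eq_F, SRM12.sumMatrix_eq_F]
    rfl
  refine ⟨SRM12.Cmat A A', ⟨SRM12.Cmat_isSRM A A' hA hA', hmax,
    fun i j => by rw [hmax]; exact le_max_left _ _,
    fun i j => by rw [hmax]; exact le_max_right _ _,
    fun D _ h1 h2 i j => by rw [hmax]; exact max_le (h1 i j) (h2 i j)⟩, ?_⟩
  rintro C' ⟨_, hC'max, _⟩
  exact SRM12.sumMatrix_inj C' (SRM12.Cmat A A')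
    (fun i j => by rw [hC'max i j, hmax i j])
end

section
/- Every sign-restricted matrix A ∈ S_{m,n} is the meet (greatest lower bound in the Bruhat order) of a finite set of matrices in S⁺_{m,n}, each having at most one nonzero row; consequently (S_{m,n}, ≤_B) is the Dedekind–MacNeille completion of (S⁺_{m,n}, ≤_B). -/
open Finset

/-- every SRM A is the meet (greatest lower bound in the Bruhat order,
A ≤_B B iff Σ(A) ≥ Σ(B) entrywise) of finitely many (0,1)-SRMs each having at most one
nonzero row; indeed Σ(A) is the entrywise maximum of their sum-matrices. -/
theorem stmt13 (m n : ℕ) (A : Matrix (Fin m) (Fin n) ℤ) (hA : IsSRM A) :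
    ∃ (k : ℕ) (F : Fin k → Matrix (Fin m) (Fin n) ℤ),
      (∀ t, IsSRM (F t) ∧ (∀ p q, F t p q = 0 ∨ F t p q = 1) ∧
        ∃ r : Fin m, ∀ p q, F t p q ≠ 0 → p = r) ∧
      (∀ t, ∀ p q, sumMatrix (F t) p q ≤ sumMatrix A p q) ∧
      (∀ p q, ∃ t, sumMatrix A p q = sumMatrix (F t) p q) ∧
      (∀ D : Matrix (Fin m) (Fin n) ℤ, IsSRM D →
        (∀ t, ∀ p q, sumMatrix (F t) p q ≤ sumMatrix D p q) →
        (∀ p q, sumMatrix A p q ≤ sumMatrix D p q)) := by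
  obtain ⟨hent, hcol, hrow⟩ := hA
  -- the partial column sum
  set c : Fin m → Fin n → ℤ := fun r q => ∑ k ∈ Finset.Iic r, A k q with hc
  have hc01 : ∀ r q, c r q = 0 ∨ c r q = 1 := fun r q => hcol r q
  have hc0 : ∀ r q, 0 ≤ c r q := by
    intro r q; rcases hc01 r q with h | h <;> simp [h]
  refine ⟨m, fun r => fun p q => if p = r then c r q else 0, ?_, ?_, ?_, ?_⟩
  -- sumMatrix of F r
  all_goals
    have hsF : ∀ (r : Fin m) (p : Fin m) (q : Fin n),
        sumMatrix (fun p q => if p = r then c r q else 0) p q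
          = if r ≤ p then sumMatrix A r q else 0 := by
      intro r p q
      have : sumMatrix (fun p q => if p = r then c r q else 0) p q
          = ∑ i ∈ Finset.Iic p, if i = r then (∑ j ∈ Finset.Iic q, c r j) else 0 := by
        unfold sumMatrix
        refine Finset.sum_congr rfl fun i _ => ?_
        by_cases h : i = r <;> simp [h]
      rw [this, Finset.sum_ite_eq' (Finset.Iic p) r]
      have hcomm : (∑ j ∈ Finset.Iic q, c r j) = sumMatrix A r q := by
        unfold sumMatrix
        rw [Finset.sum_comm]
      simp [Finset.mem_Iic, hcomm]
  -- monotonicity of sumMatrix A in the row index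
  all_goals
    have hmono : ∀ (i i' : Fin m) (q : Fin n), i ≤ i' →
        sumMatrix A i q ≤ sumMatrix A i' q := by
      intro i i' q h
      unfold sumMatrix
      apply Finset.sum_le_sum_of_subset_of_nonneg
      · intro x hx
        simp only [Finset.mem_Iic] at *
        exact le_trans hx h
      · intro p _ _
        exact hrow p q
  · -- each F r is an SRM with 0/1 entries, single nonzero row
    intro r
    refine ⟨⟨?_, ?_, ?_⟩, ?_, ⟨r, ?_⟩⟩
    · intro i j
      by_cases h : i = r
      · rcases hc01 r j with h1 | h1 <;> simp [h, h1]
      · simp [h]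
    · intro i j
      have : (∑ k ∈ Finset.Iic i, if k = r then c r j else 0)
          = if r ∈ Finset.Iic i then c r j else 0 := Finset.sum_ite_eq' _ _ _
      rw [this]
      by_cases h : r ∈ Finset.Iic i
      · simpa [h] using hc01 r j
      · simp [h]
    · intro i j
      by_cases h : i = r
      · simp only [h, if_pos rfl]
        exact Finset.sum_nonneg fun l _ => hc0 r l
      · simp [h]
    · intro p q
      by_cases h : p = r
      · rcases hc01 r q with h1 | h1 <;> simp [h, h1]
      · simp [h]
    · intro p q hpq
      by_contra h
      simp [h] at hpq
  · intro t p q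
    rw [hsF]
    by_cases h : t ≤ p
    · simpa [h] using hmono t p q h
    · simp only [h, if_false]
      unfold sumMatrix
      exact Finset.sum_nonneg fun i _ => hrow i q
  · intro p q
    exact ⟨p, by rw [hsF]; simp⟩
  · intro D hD hle p q
    have := hle p p q
    rw [hsF] at this
    simpa using this
end

section
/- A nonnegative integral m × n matrix S = [s_{ij}] is the sum-matrix of some matrix in S⁺_{m,n} if and only if s_{i,j−1} + s_{i−1,j} − s_{i−1,j−1} ≤ s_{ij} for all i ≤ m, j ≤ n, and s_{mj} ≤ s_{m,j−1} + 1 for all j ≤ n (with the convention s_{0j} = s_{i0} = 0). -/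
open Finset

lemma finIic_sum {n : ℕ} (g : ℕ → ℤ) (i : Fin n) :
    ∑ k ∈ Finset.Iic i, g k.val = ∑ k ∈ Finset.range (i.val + 1), g k := by
  refine Finset.sum_bij' (fun k _ => (k : ℕ))
    (fun k hk => ⟨k, by simp at hk; omega⟩) ?_ ?_ ?_ ?_ ?_
  · intro a ha; simp only [mem_Iic, Fin.le_def] at ha; simp; omega
  · intro a ha; simp only [mem_range] at ha; simp only [mem_Iic, Fin.le_def]; omega
  · intro a ha; rfl
  · intro a ha; rfl
  · intro a ha; rfl

lemma finIic_sum' {n : ℕ} (g : ℕ → ℤ) (a : ℕ) (h : a < n) :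
    ∑ k ∈ Finset.Iic (⟨a, h⟩ : Fin n), g k.val = ∑ k ∈ Finset.range (a + 1), g k :=
  finIic_sum g ⟨a, h⟩

/-- Extension of a matrix to ℕ × ℕ by zeros. -/
def Aext {m n : ℕ} (A : Matrix (Fin m) (Fin n) ℤ) : ℕ → ℕ → ℤ :=
  fun p q => if h : p < m ∧ q < n then A ⟨p, h.1⟩ ⟨q, h.2⟩ else 0

lemma Aext_eq {m n : ℕ} (A : Matrix (Fin m) (Fin n) ℤ) (p : Fin m) (q : Fin n) :
    Aext A p.val q.val = A p q := by
  simp [Aext]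

lemma sumMatrix_eq_range {m n : ℕ} (A : Matrix (Fin m) (Fin n) ℤ) (i : Fin m) (j : Fin n) :
    sumMatrix A i j = ∑ p ∈ Finset.range (i.val + 1), ∑ q ∈ Finset.range (j.val + 1), Aext A p q := by
  unfold sumMatrix
  rw [← finIic_sum (fun p => ∑ q ∈ Finset.range (j.val + 1), Aext A p q) i]
  refine Finset.sum_congr rfl fun p _ => ?_
  rw [← finIic_sum (fun q => Aext A p.val q) j]
  exact Finset.sum_congr rfl fun q _ => (Aext_eq A p q).symm

lemma srm_forward {m n : ℕ} (S : Matrix (Fin m) (Fin n) ℤ) (pd : ℕ → ℕ → ℤ)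
    (hpd0 : ∀ j, pd 0 j = 0) (hpd0' : ∀ i, pd i 0 = 0)
    (hpdS : ∀ (i : Fin m) (j : Fin n), pd (i.val + 1) (j.val + 1) = S i j)
    (A : Matrix (Fin m) (Fin n) ℤ) (hA : IsSRM A) (h01 : ∀ i j, A i j = 0 ∨ A i j = 1)
    (hsum : ∀ i j, sumMatrix A i j = S i j) :
    (∀ i j, 1 ≤ i → i ≤ m → 1 ≤ j → j ≤ n →
        pd i (j - 1) + pd (i - 1) j - pd (i - 1) (j - 1) ≤ pd i j) ∧
    (∀ j, 1 ≤ j → j ≤ n → pd m j ≤ pd m (j - 1) + 1) := by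
  have hpad : ∀ i j, i ≤ m → j ≤ n →
      pd i j = ∑ p ∈ Finset.range i, ∑ q ∈ Finset.range j, Aext A p q := by
    intro i j
    match i, j with
    | 0, j => intro _ _; rw [hpd0]; simp
    | i + 1, 0 => intro _ _; rw [hpd0']; simp
    | i + 1, j + 1 =>
      intro him hjn
      exact (hpdS ⟨i, by omega⟩ ⟨j, by omega⟩).trans
        ((hsum ⟨i, by omega⟩ ⟨j, by omega⟩).symm.trans
          (sumMatrix_eq_range A ⟨i, by omega⟩ ⟨j, by omega⟩))
  constructor
  · intro i j hi him hj hjn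
    obtain ⟨i', rfl⟩ : ∃ i', i = i' + 1 := ⟨i - 1, by omega⟩
    obtain ⟨j', rfl⟩ : ∃ j', j = j' + 1 := ⟨j - 1, by omega⟩
    simp only [Nat.add_sub_cancel]
    rw [hpad (i' + 1) j' (by omega) (by omega), hpad i' (j' + 1) (by omega) (by omega),
      hpad i' j' (by omega) (by omega), hpad (i' + 1) (j' + 1) (by omega) (by omega)]
    rw [Finset.sum_range_succ (fun p => ∑ q ∈ Finset.range j', Aext A p q) i',
      Finset.sum_range_succ (fun p => ∑ q ∈ Finset.range (j' + 1), Aext A p q) i',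
      Finset.sum_range_succ (fun q => Aext A i' q) j']
    have h0 : 0 ≤ Aext A i' j' := by
      have e : Aext A i' j' = A ⟨i', by omega⟩ ⟨j', by omega⟩ :=
        Aext_eq A ⟨i', by omega⟩ ⟨j', by omega⟩
      rcases h01 ⟨i', by omega⟩ ⟨j', by omega⟩ with h | h <;> rw [e, h] <;> norm_num
    linarith
  · intro j hj hjn
    obtain ⟨j', rfl⟩ : ∃ j', j = j' + 1 := ⟨j - 1, by omega⟩
    simp only [Nat.add_sub_cancel]
    rw [hpad m (j' + 1) le_rfl hjn, hpad m j' le_rfl (by omega)]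
    have split : ∑ p ∈ Finset.range m, ∑ q ∈ Finset.range (j' + 1), Aext A p q
        = (∑ p ∈ Finset.range m, ∑ q ∈ Finset.range j', Aext A p q)
          + ∑ p ∈ Finset.range m, Aext A p j' := by
      rw [← Finset.sum_add_distrib]
      exact Finset.sum_congr rfl fun p _ => Finset.sum_range_succ _ _
    rw [split]
    have hcol : ∑ p ∈ Finset.range m, Aext A p j' ≤ 1 := by
      by_cases hm : m = 0
      · subst hm; simp
      obtain ⟨m', rfl⟩ : ∃ m', m = m' + 1 := ⟨m - 1, by omega⟩
      have hj' : j' < n := hjn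
      have hc := hA.2.1 (⟨m', Nat.lt_succ_self m'⟩ : Fin (m' + 1)) (⟨j', hj'⟩ : Fin n)
      have e : (∑ k ∈ Finset.Iic (⟨m', Nat.lt_succ_self m'⟩ : Fin (m' + 1)), A k ⟨j', hj'⟩)
          = ∑ p ∈ Finset.range (m' + 1), Aext A p j' := by
        rw [← finIic_sum' (fun p => Aext A p j') m' (Nat.lt_succ_self m')]
        exact Finset.sum_congr rfl fun k _ => (Aext_eq A k ⟨j', hj'⟩).symm
      rw [e] at hc
      rcases hc with h | h <;> rw [h] <;> norm_num
    linarith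

lemma srm_backward {m n : ℕ} (S : Matrix (Fin m) (Fin n) ℤ) (pd : ℕ → ℕ → ℤ)
    (hpd0 : ∀ j, pd 0 j = 0) (hpd0' : ∀ i, pd i 0 = 0)
    (hpdS : ∀ (i : Fin m) (j : Fin n), pd (i.val + 1) (j.val + 1) = S i j)
    (h1 : ∀ i j, 1 ≤ i → i ≤ m → 1 ≤ j → j ≤ n →
        pd i (j - 1) + pd (i - 1) j - pd (i - 1) (j - 1) ≤ pd i j)
    (h2 : ∀ j, 1 ≤ j → j ≤ n → pd m j ≤ pd m (j - 1) + 1) :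
    ∃ A : Matrix (Fin m) (Fin n) ℤ, IsSRM A ∧ (∀ i j, A i j = 0 ∨ A i j = 1) ∧
      (∀ i j, sumMatrix A i j = S i j) := by
  have h1' : ∀ i j, i + 1 ≤ m → j + 1 ≤ n →
      pd (i + 1) j + pd i (j + 1) - pd i j ≤ pd (i + 1) (j + 1) := by
    intro i j him hjn
    have := h1 (i + 1) (j + 1) (by omega) him (by omega) hjn
    simpa using this
  have h2' : ∀ j, j + 1 ≤ n → pd m (j + 1) ≤ pd m j + 1 := by
    intro j hjn
    have := h2 (j + 1) (by omega) hjn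
    simpa using this
  have colmono : ∀ q, q + 1 ≤ n → ∀ b, b ≤ m → ∀ a, a ≤ b →
      pd a (q + 1) - pd a q ≤ pd b (q + 1) - pd b q := by
    intro q hq b
    induction b with
    | zero =>
      intro _ a ha
      obtain rfl : a = 0 := Nat.le_zero.mp ha
      exact le_rfl
    | succ b ih =>
      intro hbm a hab
      rcases Nat.lt_or_ge a (b + 1) with h | h
      · have step := h1' b q (by omega) hq
        have := ih (by omega) a (by omega)
        linarith
      · have : a = b + 1 := by omega
        subst this; exact le_rfl
  have rowmono : ∀ p, p + 1 ≤ m → ∀ b, b ≤ n → ∀ a, a ≤ b →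
      pd (p + 1) a - pd p a ≤ pd (p + 1) b - pd p b := by
    intro p hp b
    induction b with
    | zero =>
      intro _ a ha
      obtain rfl : a = 0 := Nat.le_zero.mp ha
      exact le_rfl
    | succ b ih =>
      intro hbn a hab
      rcases Nat.lt_or_ge a (b + 1) with h | h
      · have step := h1' p b hp (by omega)
        have := ih (by omega) a (by omega)
        linarith
      · have : a = b + 1 := by omega
        subst this; exact le_rfl
  have cbound : ∀ q, q + 1 ≤ n → ∀ a, a ≤ m →
      0 ≤ pd a (q + 1) - pd a q ∧ pd a (q + 1) - pd a q ≤ 1 := by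
    intro q hq a ham
    constructor
    · have := colmono q hq a ham 0 (by omega)
      have e1 := hpd0 (q + 1); have e2 := hpd0 q
      linarith
    · have hmono := colmono q hq m le_rfl a ham
      have := h2' q hq
      linarith
  have tel : ∀ (jv : ℕ) (i : Fin m),
      (∑ k ∈ Finset.Iic i, ((pd (k.val + 1) (jv + 1) - pd (k.val + 1) jv)
        - (pd k.val (jv + 1) - pd k.val jv)))
      = pd (i.val + 1) (jv + 1) - pd (i.val + 1) jv - (pd 0 (jv + 1) - pd 0 jv) := by
    intro jv i
    rw [finIic_sum (fun k => (pd (k + 1) (jv + 1) - pd (k + 1) jv) - (pd k (jv + 1) - pd k jv)) i]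
    exact Finset.sum_range_sub (fun t => pd t (jv + 1) - pd t jv) (i.val + 1)
  have telr : ∀ (iv : ℕ) (j : Fin n),
      (∑ l ∈ Finset.Iic j, ((pd (iv + 1) (l.val + 1) - pd iv (l.val + 1))
        - (pd (iv + 1) l.val - pd iv l.val)))
      = pd (iv + 1) (j.val + 1) - pd iv (j.val + 1) - (pd (iv + 1) 0 - pd iv 0) := by
    intro iv j
    rw [finIic_sum (fun l => (pd (iv + 1) (l + 1) - pd iv (l + 1)) - (pd (iv + 1) l - pd iv l)) j]
    exact Finset.sum_range_sub (fun t => pd (iv + 1) t - pd iv t) (j.val + 1)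
  refine ⟨fun i j => pd (i.val + 1) (j.val + 1) - pd (i.val + 1) j.val
      - pd i.val (j.val + 1) + pd i.val j.val, ⟨?_, ?_, ?_⟩, ?_, ?_⟩
  · -- entries in {0,1,-1}
    intro i j
    have hge : 0 ≤ pd (i.val + 1) (j.val + 1) - pd (i.val + 1) j.val
        - pd i.val (j.val + 1) + pd i.val j.val := by
      have := h1' i.val j.val i.isLt j.isLt
      linarith
    have hle : pd (i.val + 1) (j.val + 1) - pd (i.val + 1) j.val
        - pd i.val (j.val + 1) + pd i.val j.val ≤ 1 := by
      have hub := (cbound j.val j.isLt (i.val + 1) i.isLt).2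
      have hlb := (cbound j.val j.isLt i.val (by omega)).1
      linarith
    beta_reduce
    omega
  · -- column partial sums in {0,1}
    intro i j
    have colsum : (∑ k ∈ Finset.Iic i,
        (pd (k.val + 1) (j.val + 1) - pd (k.val + 1) j.val
          - pd k.val (j.val + 1) + pd k.val j.val))
        = pd (i.val + 1) (j.val + 1) - pd (i.val + 1) j.val := by
      have t := tel j.val i
      rw [hpd0, hpd0] at t
      simp only [sub_zero] at t
      rw [← t]
      exact Finset.sum_congr rfl fun k _ => by ring
    rw [show (∑ k ∈ Finset.Iic i, (fun i j => pd (i.val + 1) (j.val + 1) - pd (i.val + 1) j.val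
        - pd i.val (j.val + 1) + pd i.val j.val) k j)
        = pd (i.val + 1) (j.val + 1) - pd (i.val + 1) j.val from colsum]
    have hub := (cbound j.val j.isLt (i.val + 1) i.isLt).2
    have hlb := (cbound j.val j.isLt (i.val + 1) i.isLt).1
    omega
  · -- row partial sums nonnegative
    intro i j
    have rowsum : (∑ l ∈ Finset.Iic j,
        (pd (i.val + 1) (l.val + 1) - pd (i.val + 1) l.val
          - pd i.val (l.val + 1) + pd i.val l.val))
        = pd (i.val + 1) (j.val + 1) - pd i.val (j.val + 1) := by
      have t := telr i.val j
      rw [hpd0', hpd0'] at t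
      simp only [sub_zero] at t
      rw [← t]
      exact Finset.sum_congr rfl fun l _ => by ring
    rw [show (∑ l ∈ Finset.Iic j, (fun i j => pd (i.val + 1) (j.val + 1) - pd (i.val + 1) j.val
        - pd i.val (j.val + 1) + pd i.val j.val) i l)
        = pd (i.val + 1) (j.val + 1) - pd i.val (j.val + 1) from rowsum]
    have := rowmono i.val i.isLt (j.val + 1) j.isLt 0 (by omega)
    have e1 := hpd0' (i.val + 1); have e2 := hpd0' i.val
    linarith
  · -- entries 0 or 1
    intro i j
    have hge : 0 ≤ pd (i.val + 1) (j.val + 1) - pd (i.val + 1) j.val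
        - pd i.val (j.val + 1) + pd i.val j.val := by
      have := h1' i.val j.val i.isLt j.isLt
      linarith
    have hle : pd (i.val + 1) (j.val + 1) - pd (i.val + 1) j.val
        - pd i.val (j.val + 1) + pd i.val j.val ≤ 1 := by
      have hub := (cbound j.val j.isLt (i.val + 1) i.isLt).2
      have hlb := (cbound j.val j.isLt i.val (by omega)).1
      linarith
    beta_reduce
    omega
  · -- sum-matrix equals S
    intro i j
    have rowsum : ∀ p : Fin m, (∑ l ∈ Finset.Iic j,
        (pd (p.val + 1) (l.val + 1) - pd (p.val + 1) l.val
          - pd p.val (l.val + 1) + pd p.val l.val))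
        = pd (p.val + 1) (j.val + 1) - pd p.val (j.val + 1) := by
      intro p
      have t := telr p.val j
      rw [hpd0', hpd0'] at t
      simp only [sub_zero] at t
      rw [← t]
      exact Finset.sum_congr rfl fun l _ => by ring
    show (∑ p ∈ Finset.Iic i, ∑ q ∈ Finset.Iic j, _) = S i j
    rw [Finset.sum_congr rfl fun p (_ : p ∈ Finset.Iic i) => rowsum p]
    rw [finIic_sum (fun p => pd (p + 1) (j.val + 1) - pd p (j.val + 1)) i,
      Finset.sum_range_sub (fun t => pd t (j.val + 1)) (i.val + 1), hpd0, sub_zero]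
    exact hpdS i j

/-- characterization of the sum-matrices of matrices in S⁺_{m,n}
(the (0,1)-SRMs, i.e. (0,1)-matrices with at most one 1 per column).
Here pad gives the 1-indexed entries s_{ij} with the convention s_{0j} = s_{i0} = 0. -/
theorem stmt14 (m n : ℕ) (S : Matrix (Fin m) (Fin n) ℤ) (hS : ∀ i j, 0 ≤ S i j) :
    (∃ A : Matrix (Fin m) (Fin n) ℤ, IsSRM A ∧ (∀ i j, A i j = 0 ∨ A i j = 1) ∧
        (∀ i j, sumMatrix A i j = S i j)) ↔
    (let pad : ℕ → ℕ → ℤ := fun i j =>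
        if h : 1 ≤ i ∧ i ≤ m ∧ 1 ≤ j ∧ j ≤ n then
          S ⟨i - 1, by omega⟩ ⟨j - 1, by omega⟩ else 0
     (∀ i j, 1 ≤ i → i ≤ m → 1 ≤ j → j ≤ n →
        pad i (j - 1) + pad (i - 1) j - pad (i - 1) (j - 1) ≤ pad i j) ∧
     (∀ j, 1 ≤ j → j ≤ n → pad m j ≤ pad m (j - 1) + 1)) := by
  constructor
  · rintro ⟨A, hA, h01, hsum⟩
    exact srm_forward S
      (fun i j => if h : 1 ≤ i ∧ i ≤ m ∧ 1 ≤ j ∧ j ≤ n then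
          S ⟨i - 1, by omega⟩ ⟨j - 1, by omega⟩ else 0)
      (fun j => dif_neg (by omega)) (fun i => dif_neg (by omega))
      (fun i j => by beta_reduce; rw [dif_pos ⟨by omega, i.isLt, by omega, j.isLt⟩]; rfl)
      A hA h01 hsum
  · intro h
    exact srm_backward S
      (fun i j => if h : 1 ≤ i ∧ i ≤ m ∧ 1 ≤ j ∧ j ≤ n then
          S ⟨i - 1, by omega⟩ ⟨j - 1, by omega⟩ else 0)
      (fun j => dif_neg (by omega)) (fun i => dif_neg (by omega))
      (fun i j => by beta_reduce; rw [dif_pos ⟨by omega, i.isLt, by omega, j.isLt⟩]; rfl)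
      h.1 h.2
end
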